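/- arXiv:1703.06709 — 13 statements merged into one kernel-verified Lean document; each statement's English description precedes it below -/
import Mathlib

section
/- Let B be a bilinear form on ℂ[z] with moments μ_{i,j} := B[z^i, z^j] and moment determinants τ_0 := 1, τ_n := det(μ_{i,j})_{i,j=0}^{n-1}, and assume τ_n ≠ 0 for all n ≥ 1. Define φ_0(z) := 1 and, for n ≥ 1, φ_n(z) := (1/τ_n) · det of the (n+1)×(n+1) matrix whose entry in row i (0 ≤ i ≤ n) and column j (0 ≤ j ≤ n−1) is μ_{i,j} and whose last column is (1, z, z², …, z^n)ᵀ. Then each φ_n is a monic polynomial of degree n and B[φ_n(z), z^m] = (τ_{n+1}/τ_n)·δ_{m,n} for every n ≥ 0 and every 0 ≤ m ≤ n. -/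
open Polynomial

lemma det_if_last {R : Type*} [CommRing R] (n : ℕ) (c : ℕ → ℕ → R) (v : Fin (n+1) → R) :
    Matrix.det (Matrix.of fun i j : Fin (n+1) => if (j : ℕ) < n then c (i : ℕ) (j : ℕ) else v i)
    = ∑ i : Fin (n+1), (-1)^((i:ℕ)+n) * v i *
        Matrix.det (Matrix.of fun k j : Fin n => c ((i.succAbove k : Fin (n+1)) : ℕ) (j : ℕ)) := by
  rw [Matrix.det_succ_column _ (Fin.last n)]
  refine Finset.sum_congr rfl fun i _ => ?_
  congr 1
  · simp [Fin.val_last]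
  · congr 1
    ext k j
    simp [Fin.succAbove_last, Fin.is_lt]

lemma detA_expand (μ : ℕ → ℕ → ℂ) (n : ℕ) :
    Matrix.det (Matrix.of fun i j : Fin (n+1) =>
        if (j : ℕ) < n then C (μ (i : ℕ) (j : ℕ)) else X ^ (i : ℕ))
    = ∑ i : Fin (n+1), C ((-1)^((i:ℕ)+n) *
        Matrix.det (Matrix.of fun k j : Fin n => μ ((i.succAbove k : Fin (n+1)) : ℕ) (j : ℕ)))
        * X ^ (i : ℕ) := by
  rw [det_if_last n (fun i j => C (μ i j)) (fun i => X ^ (i : ℕ))]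
  refine Finset.sum_congr rfl fun i _ => ?_
  have hmap : C ((Matrix.of fun k j : Fin n =>
        μ ((i.succAbove k : Fin (n+1)) : ℕ) (j : ℕ)).det)
      = (Matrix.of fun k j : Fin n =>
        C (μ ((i.succAbove k : Fin (n+1)) : ℕ) (j : ℕ))).det := by
    rw [RingHom.map_det]; rfl
  rw [← hmap, map_mul, map_pow, map_neg, map_one]
  ring

/-- Determinant representation of the first family of monic biorthogonal polynomials:
each `φ n` is monic of degree `n` and satisfies the biorthogonality relation
`B[φ_n, z^m] = (τ_{n+1}/τ_n) δ_{m,n}` for `0 ≤ m ≤ n`. -/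
theorem stmt_0
    (B : Polynomial ℂ →ₗ[ℂ] Polynomial ℂ →ₗ[ℂ] ℂ)
    (μ : ℕ → ℕ → ℂ) (hμ : ∀ i j : ℕ, μ i j = B (X ^ i) (X ^ j))
    (τ : ℕ → ℂ)
    (hτ : ∀ n : ℕ, τ n = Matrix.det (Matrix.of fun i j : Fin n => μ (i : ℕ) (j : ℕ)))
    (hτne : ∀ n : ℕ, 1 ≤ n → τ n ≠ 0)
    (φ : ℕ → Polynomial ℂ)
    (hφ0 : φ 0 = 1)
    (hφ : ∀ n : ℕ, 1 ≤ n → φ n = C (τ n)⁻¹ *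
      Matrix.det (Matrix.of fun i j : Fin (n + 1) =>
        if (j : ℕ) < n then C (μ (i : ℕ) (j : ℕ)) else X ^ (i : ℕ))) :
    ∀ n : ℕ, (φ n).Monic ∧ (φ n).degree = n ∧
      ∀ m : ℕ, m ≤ n →
        B (φ n) (X ^ m) = τ (n + 1) / τ n * (if m = n then 1 else 0) := by
  intro n
  rcases Nat.eq_zero_or_pos n with hn | hn
  · subst hn
    have hτ0 : τ 0 = 1 := by simpa using hτ 0
    have hτ1 : τ 1 = μ 0 0 := by rw [hτ 1, Matrix.det_fin_one]; rfl
    refine ⟨hφ0 ▸ monic_one, by simp [hφ0], ?_⟩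
    intro m hm
    interval_cases m
    simp [hφ0, hτ0, hτ1, hμ 0 0]
  · set d : Fin (n+1) → ℂ := fun i =>
      Matrix.det (Matrix.of fun k j : Fin n => μ ((i.succAbove k : Fin (n+1)) : ℕ) (j : ℕ))
      with hd
    set s : Fin (n+1) → ℂ := fun i => (-1)^((i:ℕ)+n) * d i with hs
    have hA : φ n = C (τ n)⁻¹ * ∑ i : Fin (n+1), C (s i) * X ^ (i : ℕ) := by
      rw [hφ n hn, detA_expand]
    have hslast : s (Fin.last n) = τ n := by
      have hM : (Matrix.of fun k j : Fin n =>
          μ (((Fin.last n).succAbove k : Fin (n+1)) : ℕ) (j : ℕ))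
          = Matrix.of fun i j : Fin n => μ (i : ℕ) (j : ℕ) := by
        ext k j
        simp [Fin.succAbove_last]
      have h1 : d (Fin.last n) = τ n := by
        rw [hd]; dsimp only; rw [hM]; exact (hτ n).symm
      have h2 : ((-1 : ℂ))^((Fin.last n : ℕ) + n) = 1 := by
        rw [Fin.val_last, ← two_mul, pow_mul]
        norm_num
      rw [hs]; dsimp only; rw [h1, h2, one_mul]
    have hcoeffterm : ∀ i : Fin (n+1), (C (s i) * X ^ (i : ℕ)).coeff n
        = if i = Fin.last n then s i else 0 := by
      intro i
      rw [coeff_C_mul, coeff_X_pow]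
      have hiff : (n = (i:ℕ)) ↔ (i = Fin.last n) := by
        rw [Fin.ext_iff, Fin.val_last]; exact eq_comm
      simp only [hiff]
      split <;> simp
    have hsumcoeff : (∑ i : Fin (n+1), C (s i) * X ^ (i : ℕ)).coeff n = τ n := by
      rw [finset_sum_coeff, Finset.sum_congr rfl fun i _ => hcoeffterm i,
        Finset.sum_ite_eq' Finset.univ (Fin.last n) s]
      simp [hslast]
    have hcoeff : (φ n).coeff n = 1 := by
      rw [hA, coeff_C_mul, hsumcoeff, inv_mul_cancel₀ (hτne n hn)]
    have hdegle : (φ n).degree ≤ n := by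
      rw [hA]
      refine le_trans (degree_mul_le _ _) ?_
      have h2 : (∑ i : Fin (n+1), C (s i) * X ^ (i : ℕ)).degree ≤ (n : WithBot ℕ) := by
        refine le_trans (degree_sum_le _ _) (Finset.sup_le fun i _ => ?_)
        refine le_trans (degree_C_mul_X_pow_le _ _) ?_
        exact_mod_cast Nat.cast_le.mpr i.is_le
      calc (C (τ n)⁻¹).degree + (∑ i : Fin (n+1), C (s i) * X ^ (i : ℕ)).degree
          ≤ 0 + (n : WithBot ℕ) := add_le_add degree_C_le h2
        _ = n := zero_add _
    have hdeg : (φ n).degree = n :=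
      le_antisymm hdegle (le_degree_of_ne_zero (by rw [hcoeff]; exact one_ne_zero))
    have hnatdeg : (φ n).natDegree = n := natDegree_eq_of_degree_eq_some hdeg
    have hmonic : (φ n).Monic := by
      unfold Polynomial.Monic Polynomial.leadingCoeff
      rw [hnatdeg, hcoeff]
    refine ⟨hmonic, hdeg, ?_⟩
    intro m hm
    have hBsum : B (∑ i : Fin (n+1), C (s i) * X ^ (i : ℕ)) (X ^ m)
        = ∑ i : Fin (n+1), s i * μ (i : ℕ) m := by
      rw [map_sum, LinearMap.sum_apply]
      refine Finset.sum_congr rfl fun i _ => ?_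
      rw [← smul_eq_C_mul, map_smul, LinearMap.smul_apply, smul_eq_mul, hμ]
    have hBphi : B (φ n) (X ^ m) = (τ n)⁻¹ * ∑ i : Fin (n+1), s i * μ (i : ℕ) m := by
      rw [hA, ← smul_eq_C_mul, map_smul, LinearMap.smul_apply, smul_eq_mul, hBsum]
    have hdet' : ∑ i : Fin (n+1), s i * μ (i : ℕ) m
        = Matrix.det (Matrix.of fun i j : Fin (n+1) =>
            if (j : ℕ) < n then μ (i : ℕ) (j : ℕ) else μ (i : ℕ) m) := by
      rw [det_if_last n μ (fun i => μ (i : ℕ) m)]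
      refine Finset.sum_congr rfl fun i _ => ?_
      rw [hs]; dsimp only; ring
    rw [hBphi, hdet']
    by_cases hmn : m = n
    · rw [hmn]
      have hM : (Matrix.of fun i j : Fin (n+1) =>
          if (j : ℕ) < n then μ (i : ℕ) (j : ℕ) else μ (i : ℕ) n)
          = Matrix.of fun i j : Fin (n+1) => μ (i : ℕ) (j : ℕ) := by
        ext i j
        by_cases hj : (j : ℕ) < n
        · simp [hj]
        · have hje : (j : ℕ) = n := by omega
          simp [hj, hje]
      rw [hM, ← hτ (n+1), if_pos rfl, mul_one, div_eq_mul_inv, mul_comm]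
    · have hmlt : m < n := lt_of_le_of_ne hm hmn
      have hzero : Matrix.det (Matrix.of fun i j : Fin (n+1) =>
          if (j : ℕ) < n then μ (i : ℕ) (j : ℕ) else μ (i : ℕ) m) = 0 := by
        refine Matrix.det_zero_of_column_eq (i := (⟨m, by omega⟩ : Fin (n+1)))
          (j := Fin.last n) ?_ ?_
        · intro h
          have := congrArg Fin.val h
          simp [Fin.val_last] at this
          omega
        · intro k
          simp [Fin.val_last, hmlt]
      rw [hzero, if_neg hmn]
      simp
end

section
/- Let ({φ_n}, {ψ_n}) be a pair of monic biorthogonal polynomial sequences with respect to a bilinear form B on ℂ[z], with biorthogonality constants h_n. Let s* ∈ ℂ satisfy φ_n(s*) ≠ 0 for all n ≥ 0, and set q*_n := −φ_{n+1}(s*)/φ_n(s*). Then for every n ≥ 0 the polynomial z − s* divides φ_{n+1}(z) + q*_n φ_n(z); the quotient φ*_n(z) := (φ_{n+1}(z) + q*_n φ_n(z))/(z − s*) is a monic polynomial of degree n; and B*[φ*_n(z), z^m] = q*_n h_n δ_{m,n} for all n ≥ 0 and 0 ≤ m ≤ n, where B* is the bilinear form defined by B*[p, q] := B[(z − s*)p,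 q]. -/
open Polynomial

/-- Christoffel-type spectral transformation for the first family: `z - s*` divides
`φ_{n+1} + q*_n φ_n`, the quotient `φ*_n` is monic of degree `n`, and it is biorthogonal
with respect to `B*[p, q] = B[(z - s*) p, q]` with constants `q*_n h_n`. -/
theorem stmt_3
    (B : Polynomial ℂ →ₗ[ℂ] Polynomial ℂ →ₗ[ℂ] ℂ)
    (φ ψ : ℕ → Polynomial ℂ) (h : ℕ → ℂ)
    (hφm : ∀ n, (φ n).Monic) (hφd : ∀ n : ℕ, (φ n).degree = n)
    (hψm : ∀ n, (ψ n).Monic) (hψd : ∀ n : ℕ, (ψ n).degree = n)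
    (hne : ∀ n, h n ≠ 0)
    (hbi : ∀ m n : ℕ, B (φ m) (ψ n) = if m = n then h n else 0)
    (s : ℂ) (hs : ∀ n, (φ n).eval s ≠ 0)
    (q : ℕ → ℂ) (hq : ∀ n, q n = -((φ (n + 1)).eval s) / ((φ n).eval s)) :
    ∀ n : ℕ,
      (X - C s) ∣ (φ (n + 1) + C (q n) * φ n) ∧
      ((φ (n + 1) + C (q n) * φ n) /ₘ (X - C s)).Monic ∧
      ((φ (n + 1) + C (q n) * φ n) /ₘ (X - C s)).degree = n ∧
      ∀ m : ℕ, m ≤ n →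
        B ((X - C s) * ((φ (n + 1) + C (q n) * φ n) /ₘ (X - C s))) (X ^ m)
          = q n * h n * (if m = n then 1 else 0) := by
  intro n
  set T : Polynomial ℂ := φ (n + 1) + C (q n) * φ n with hT
  have hroot : T.IsRoot s := by
    simp only [hT, IsRoot, eval_add, eval_mul, eval_C, hq]
    rw [div_mul_cancel₀ _ (hs n)]
    ring
  have hdvd : (X - C s) ∣ T := dvd_iff_isRoot.mpr hroot
  have hlt : degree (C (q n) * φ n) < degree (φ (n + 1)) := by
    rw [← smul_eq_C_mul]
    calc degree (q n • φ n) ≤ degree (φ n) := degree_smul_le _ _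
    _ = (n : WithBot ℕ) := hφd n
    _ < ((n + 1 : ℕ) : WithBot ℕ) := by exact_mod_cast Nat.lt_succ_self n
    _ = degree (φ (n + 1)) := (hφd (n + 1)).symm
  have hTm : T.Monic := (hφm (n + 1)).add_of_left hlt
  have hTd : T.degree = ((n + 1 : ℕ) : WithBot ℕ) := by
    rw [hT, degree_add_eq_left_of_degree_lt hlt, hφd (n + 1)]
  have hTnd : T.natDegree = n + 1 := natDegree_eq_of_degree_eq_some hTd
  have hmul : (X - C s) * (T /ₘ (X - C s)) = T :=
    (mul_divByMonic_eq_iff_isRoot).mpr hroot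
  have hQm : (T /ₘ (X - C s)).Monic :=
    (monic_X_sub_C s).of_mul_monic_left (by rwa [hmul])
  have hQnd : (T /ₘ (X - C s)).natDegree = n := by
    rw [natDegree_divByMonic T (monic_X_sub_C s), hTnd, natDegree_X_sub_C]
    omega
  have hQd : (T /ₘ (X - C s)).degree = (n : WithBot ℕ) := by
    rw [degree_eq_natDegree hQm.ne_zero, hQnd]
  refine ⟨hdvd, hQm, hQd, ?_⟩
  have hψT : ∀ k : ℕ, k ≤ n → B T (ψ k) = if k = n then q n * h n else 0 := by
    intro k hk
    have hsm : C (q n) * φ n = q n • φ n := by rw [smul_eq_C_mul]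
    have hstep : B T (ψ k) = B (φ (n + 1)) (ψ k) + q n * B (φ n) (ψ k) := by
      rw [hT, hsm, map_add, map_smul]
      simp
    rw [hstep, hbi, hbi]
    have h1 : ¬ (n + 1 = k) := by omega
    rw [if_neg h1, zero_add]
    by_cases hkn : k = n
    · simp [hkn]
    · rw [if_neg (fun hh => hkn hh.symm), if_neg hkn, mul_zero]
  have key : ∀ d : ℕ, ∀ p : Polynomial ℂ, p.natDegree < d → p.degree < (n : WithBot ℕ) →
      B T p = 0 := by
    intro d
    induction d with
    | zero => intro p hp; omega
    | succ d ih =>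
      intro p hpd hpn
      by_cases hp0 : p = 0
      · simp [hp0]
      · set k := p.natDegree with hk
        set r := p - C p.leadingCoeff * ψ k with hr
        have hdeg : (C p.leadingCoeff * ψ k).degree = p.degree := by
          rw [degree_mul, degree_C (leadingCoeff_ne_zero.mpr hp0), hψd k, zero_add,
            degree_eq_natDegree hp0]
        have hlc : (C p.leadingCoeff * ψ k).leadingCoeff = p.leadingCoeff := by
          rw [leadingCoeff_mul, leadingCoeff_C, (hψm k).leadingCoeff, mul_one]
        have hrd : r.degree < p.degree := degree_sub_lt hdeg.symm hp0 hlc.symm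
        have hkn : k < n := by
          have h2 := hpn
          rw [degree_eq_natDegree hp0] at h2
          exact_mod_cast h2
        have hBψ : B T (ψ k) = 0 := by
          rw [hψT k (le_of_lt hkn)]
          simp [Nat.ne_of_lt hkn]
        have hBr : B T r = 0 := by
          by_cases hr0 : r = 0
          · simp [hr0]
          · refine ih r ?_ (lt_trans hrd hpn)
            have h3 : r.degree < (k : WithBot ℕ) := by
              rw [degree_eq_natDegree hp0] at hrd; exact hrd
            have := (natDegree_lt_iff_degree_lt hr0).mpr h3
            omega
        have hpr : p = p.leadingCoeff • ψ k + r := by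
          rw [smul_eq_C_mul, hr]; ring
        rw [hpr, map_add, map_smul]
        simp [hBψ, hBr]
  intro m hm
  rw [hmul]
  have hsplit : (X : Polynomial ℂ) ^ m = ψ m + (X ^ m - ψ m) := by ring
  have hBsub : B T (X ^ m - ψ m) = 0 := by
    by_cases h0 : (X : Polynomial ℂ) ^ m - ψ m = 0
    · simp [h0]
    · have hd1 : degree ((X : Polynomial ℂ) ^ m) = degree (ψ m) := by
        rw [degree_X_pow, hψd m]
      have hl1 : leadingCoeff ((X : Polynomial ℂ) ^ m) = leadingCoeff (ψ m) := by
        rw [leadingCoeff_X_pow, (hψm m).leadingCoeff]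
      have hdeg : degree ((X : Polynomial ℂ) ^ m - ψ m) < (m : WithBot ℕ) := by
        have := degree_sub_lt hd1 (pow_ne_zero m X_ne_zero) hl1
        rwa [degree_X_pow] at this
      refine key (n + 1) _ ?_ (lt_of_lt_of_le hdeg (by exact_mod_cast hm))
      have := (natDegree_lt_iff_degree_lt h0).mpr hdeg
      omega
  rw [hsplit, map_add, hBsub, add_zero, hψT m hm]
  by_cases hmn : m = n <;> simp [hmn]
end

section
/- Let ({φ_n}, {ψ_n}) be a pair of monic biorthogonal polynomial sequences with respect to a bilinear form B on ℂ[z], with biorthogonality constants h_n. Let s† ∈ ℂ satisfy ψ_n(s†) ≠ 0 for all n ≥ 0, and set q†_n := −ψ_{n+1}(s†)/ψ_n(s†). Then for every n ≥ 0 the polynomial z − s† divides ψ_{n+1}(z) + q†_n ψ_n(z); the quotient ψ†_n(z) := (ψ_{n+1}(z) + q†_n ψ_n(z))/(z − s†) is a monic polynomial of degree n; and B†[z^m, ψ†_n(z)] = q†_n h_n δ_{m,n} for all n ≥ 0 and 0 ≤ m ≤ n, where B† is the bilinear form defined by B†[p, q] := B[p, (z − s†)q]. -/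
open Polynomial

theorem auxzero
    (B : Polynomial ℂ →ₗ[ℂ] Polynomial ℂ →ₗ[ℂ] ℂ)
    (φ ψ : ℕ → Polynomial ℂ) (h : ℕ → ℂ)
    (hφm : ∀ n, (φ n).Monic) (hφd : ∀ n : ℕ, (φ n).degree = n)
    (hbi : ∀ m n : ℕ, B (φ m) (ψ n) = if m = n then h n else 0) :
    ∀ N : ℕ, ∀ p : Polynomial ℂ, p.natDegree ≤ N → ∀ k : ℕ, p.degree < (k : ℕ) →
      B p (ψ k) = 0 := by
  intro N
  induction N using Nat.strong_induction_on with
  | _ N ih =>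
    intro p hpN k hk
    by_cases hp0 : p = 0
    · simp [hp0]
    set d := p.natDegree with hd
    have hdeg : p.degree = (d : ℕ) := degree_eq_natDegree hp0
    set r := p - C p.leadingCoeff * φ d with hr
    have hlt : r.degree < p.degree := by
      apply degree_sub_lt _ hp0 _
      · rw [degree_C_mul (leadingCoeff_ne_zero.mpr hp0), hφd d, hdeg]
      · rw [leadingCoeff_mul, leadingCoeff_C, (hφm d).leadingCoeff, mul_one]
    have hdk : d ≠ k := by
      intro hdk
      rw [hdk] at hdeg
      exact absurd (hdeg ▸ hk) (lt_irrefl _)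
    have hrB : B r (ψ k) = 0 := by
      by_cases hr0 : r = 0
      · simp [hr0]
      · have h1 : r.natDegree < d := natDegree_lt_natDegree hr0 hlt
        exact ih r.natDegree (lt_of_lt_of_le h1 hpN) r le_rfl k (hlt.trans hk)
    have hpr : p = C p.leadingCoeff * φ d + r := by rw [hr]; ring
    rw [hpr, map_add, LinearMap.add_apply, ← smul_eq_C_mul, map_smul,
      LinearMap.smul_apply, smul_eq_mul, hbi, if_neg hdk, hrB, mul_zero, add_zero]

/-- Christoffel-type spectral transformation for the second family: `z - s†` divides
`ψ_{n+1} + q†_n ψ_n`, the quotient `ψ†_n` is monic of degree `n`, and it is biorthogonal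
with respect to `B†[p, q] = B[p, (z - s†) q]` with constants `q†_n h_n`. -/
theorem stmt_4
    (B : Polynomial ℂ →ₗ[ℂ] Polynomial ℂ →ₗ[ℂ] ℂ)
    (φ ψ : ℕ → Polynomial ℂ) (h : ℕ → ℂ)
    (hφm : ∀ n, (φ n).Monic) (hφd : ∀ n : ℕ, (φ n).degree = n)
    (hψm : ∀ n, (ψ n).Monic) (hψd : ∀ n : ℕ, (ψ n).degree = n)
    (hne : ∀ n, h n ≠ 0)
    (hbi : ∀ m n : ℕ, B (φ m) (ψ n) = if m = n then h n else 0)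
    (s : ℂ) (hs : ∀ n, (ψ n).eval s ≠ 0)
    (q : ℕ → ℂ) (hq : ∀ n, q n = -((ψ (n + 1)).eval s) / ((ψ n).eval s)) :
    ∀ n : ℕ,
      (X - C s) ∣ (ψ (n + 1) + C (q n) * ψ n) ∧
      ((ψ (n + 1) + C (q n) * ψ n) /ₘ (X - C s)).Monic ∧
      ((ψ (n + 1) + C (q n) * ψ n) /ₘ (X - C s)).degree = n ∧
      ∀ m : ℕ, m ≤ n →
        B (X ^ m) ((X - C s) * ((ψ (n + 1) + C (q n) * ψ n) /ₘ (X - C s)))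
          = q n * h n * (if m = n then 1 else 0) := by
  intro n
  set p := ψ (n + 1) + C (q n) * ψ n with hp
  have heval : p.eval s = 0 := by
    rw [hp]
    simp only [eval_add, eval_mul, eval_C, hq n]
    rw [div_mul_cancel₀ _ (hs n)]
    ring
  have hdvd : (X - C s) ∣ p := dvd_iff_isRoot.mpr heval
  have hlow : (C (q n) * ψ n).degree < (ψ (n + 1)).degree := by
    calc (C (q n) * ψ n).degree ≤ (C (q n)).degree + (ψ n).degree := degree_mul_le _ _
      _ ≤ 0 + (ψ n).degree := add_le_add degree_C_le le_rfl
      _ = (ψ n).degree := zero_add _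
      _ < _ := by rw [hψd, hψd (n+1)]; exact_mod_cast Nat.lt_succ_self n
  have hdegp : p.degree = ((n + 1 : ℕ) : WithBot ℕ) := by
    rw [hp, degree_add_eq_left_of_degree_lt hlow, hψd]
  have hpm : p.Monic := (hψm (n + 1)).add_of_left hlow
  have hp0 : p ≠ 0 := hpm.ne_zero
  have hmul : (X - C s) * (p /ₘ (X - C s)) = p := by
    have := modByMonic_add_div p (X - C s)
    rw [(modByMonic_eq_zero_iff_dvd (monic_X_sub_C s)).mpr hdvd, zero_add] at this
    exact this
  have hqm : (p /ₘ (X - C s)).Monic := by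
    have : ((X - C s) * (p /ₘ (X - C s))).Monic := by rw [hmul]; exact hpm
    exact (monic_X_sub_C s).of_mul_monic_left this
  have hqd : (p /ₘ (X - C s)).degree = (n : ℕ) := by
    have h1 : (p /ₘ (X - C s)).natDegree = n := by
      rw [natDegree_divByMonic p (monic_X_sub_C s), natDegree_X_sub_C,
        natDegree_eq_of_degree_eq_some hdegp]
      omega
    rw [degree_eq_natDegree hqm.ne_zero, h1]
  refine ⟨hdvd, hqm, hqd, ?_⟩
  intro m hm
  rw [hmul, hp, map_add, ← smul_eq_C_mul, map_smul, smul_eq_mul]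
  have hXm : (X ^ m : Polynomial ℂ).degree = (m : ℕ) := degree_X_pow m
  have hz1 : B (X ^ m) (ψ (n + 1)) = 0 := by
    apply auxzero B φ ψ h hφm hφd hbi m _ (by simp) (n + 1)
    rw [hXm]; exact_mod_cast Nat.lt_succ_of_le hm
  rw [hz1, zero_add]
  rcases eq_or_lt_of_le hm with rfl | hmn
  · have hXφ : B (X ^ m) (ψ m) = h m := by
      have hsplit : (X ^ m : Polynomial ℂ) = φ m + (X ^ m - φ m) := by ring
      have hdd : (X ^ m : Polynomial ℂ).degree = (φ m).degree := by rw [hXm, hφd]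
      have hlc : (X ^ m : Polynomial ℂ).leadingCoeff = (φ m).leadingCoeff := by
        rw [(monic_X_pow m).leadingCoeff, (hφm m).leadingCoeff]
      have hsub : ((X ^ m : Polynomial ℂ) - φ m).degree < ((m : ℕ) : WithBot ℕ) := by
        have := degree_sub_lt hdd (pow_ne_zero m X_ne_zero) hlc
        rwa [hXm] at this
      have hz2 : B (X ^ m - φ m) (ψ m) = 0 :=
        auxzero B φ ψ h hφm hφd hbi m _
          (natDegree_le_iff_degree_le.mpr (le_of_lt hsub)) m hsub
      rw [hsplit, map_add, LinearMap.add_apply, hbi, if_pos rfl, hz2, add_zero]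
    rw [hXφ, if_pos rfl, mul_one]
  · have hz3 : B (X ^ m) (ψ n) = 0 := by
      apply auxzero B φ ψ h hφm hφd hbi m _ (by simp) n
      rw [hXm]; exact_mod_cast hmn
    rw [hz3, mul_zero, if_neg (Nat.ne_of_lt hmn), mul_zero]
end

section
/- Let B be a bilinear form on ℂ[z] with moment determinants τ_n, assume τ_n ≠ 0 for all n ≥ 1, and let ({φ_n}, {ψ_n}) be a pair of monic biorthogonal polynomial sequences with respect to B (so h_n = τ_{n+1}/τ_n). Let s† ∈ ℂ satisfy ψ_n(s†) ≠ 0 for all n, set q†_n := −ψ_{n+1}(s†)/ψ_n(s†), define B†[p, q] := B[p, (z − s†)q], and suppose ({φ†_n}, {ψ†_n}) is a pair of monic biorthogonal polynomial sequences with respect to B†. Then for every n ≥ 0: φ_{n+1}(z) = φ†_{n+1}(z) + e†_n φ†_n(z), where e†_n = τ_n τ_{n+2} / (q†_n (τ_{n+1})²). -/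
open Polynomial Finset

lemma expand_monic (p : ℕ → Polynomial ℂ) (hm : ∀ n, (p n).Monic)
    (hdeg : ∀ n : ℕ, (p n).degree = n) :
    ∀ N : ℕ, ∀ r : Polynomial ℂ, r.degree < N →
      ∃ c : ℕ → ℂ, r = ∑ k ∈ Finset.range N, c k • p k := by
  intro N
  induction N with
  | zero =>
    intro r hr
    refine ⟨0, ?_⟩
    have : r = 0 := by
      ext m
      exact (Polynomial.degree_lt_iff_coeff_zero r 0).mp hr m (Nat.zero_le m)
    simp [this]
  | succ N ih =>
    intro r hr
    have hN : (p N).natDegree = N := natDegree_eq_of_degree_eq_some (hdeg N)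
    have hcoeff : ∀ m : ℕ, (N : ℕ) ≤ m → (r - Polynomial.C (r.coeff N) * p N).coeff m = 0 := by
      intro m hmN
      rcases eq_or_lt_of_le hmN with hEq | hlt
      · subst hEq
        have : (p N).coeff N = 1 := by
          have := (hm N).coeff_natDegree
          rwa [hN] at this
        simp [coeff_sub, coeff_C_mul, this]
      · have h1 : r.coeff m = 0 := by
          apply coeff_eq_zero_of_degree_lt
          exact lt_of_lt_of_le hr (by exact_mod_cast hlt)
        have h2 : (p N).coeff m = 0 := by
          apply coeff_eq_zero_of_degree_lt
          rw [hdeg N]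
          exact_mod_cast hlt
        simp [coeff_sub, coeff_C_mul, h1, h2]
    have hlt : (r - C (r.coeff N) * p N).degree < (N : ℕ) :=
      (Polynomial.degree_lt_iff_coeff_zero _ N).mpr hcoeff
    obtain ⟨c, hc⟩ := ih _ hlt
    refine ⟨Function.update c N (r.coeff N), ?_⟩
    rw [Finset.sum_range_succ, Function.update_self]
    have : ∑ k ∈ Finset.range N, Function.update c N (r.coeff N) k • p k
        = ∑ k ∈ Finset.range N, c k • p k := by
      apply Finset.sum_congr rfl
      intro k hk
      rw [Function.update_of_ne (Finset.mem_range.mp hk).ne]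
    rw [this, ← hc, smul_eq_C_mul]
    ring

/-- Geronimus-type relation: `φ_{n+1} = φ†_{n+1} + e†_n φ†_n` with
`e†_n = τ_n τ_{n+2} / (q†_n τ_{n+1}²)`, where `(φ†, ψ†)` is the pair of monic
biorthogonal polynomial sequences for `B†[p, q] = B[p, (z - s†) q]`. -/
theorem stmt_5
    (B Bd : Polynomial ℂ →ₗ[ℂ] Polynomial ℂ →ₗ[ℂ] ℂ)
    (μ : ℕ → ℕ → ℂ) (hμ : ∀ i j : ℕ, μ i j = B (X ^ i) (X ^ j))
    (τ : ℕ → ℂ)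
    (hτ : ∀ n : ℕ, τ n = Matrix.det (Matrix.of fun i j : Fin n => μ (i : ℕ) (j : ℕ)))
    (hτne : ∀ n : ℕ, 1 ≤ n → τ n ≠ 0)
    (φ ψ : ℕ → Polynomial ℂ)
    (hφm : ∀ n, (φ n).Monic) (hφd : ∀ n : ℕ, (φ n).degree = n)
    (hψm : ∀ n, (ψ n).Monic) (hψd : ∀ n : ℕ, (ψ n).degree = n)
    (hbi : ∀ m n : ℕ, B (φ m) (ψ n) = if m = n then τ (n + 1) / τ n else 0)
    (s : ℂ) (hs : ∀ n, (ψ n).eval s ≠ 0)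
    (q : ℕ → ℂ) (hq : ∀ n, q n = -((ψ (n + 1)).eval s) / ((ψ n).eval s))
    (hBd : ∀ p r : Polynomial ℂ, Bd p r = B p ((X - C s) * r))
    (φd ψd : ℕ → Polynomial ℂ) (hd : ℕ → ℂ)
    (hφdm : ∀ n, (φd n).Monic) (hφdd : ∀ n : ℕ, (φd n).degree = n)
    (hψdm : ∀ n, (ψd n).Monic) (hψdd : ∀ n : ℕ, (ψd n).degree = n)
    (hdne : ∀ n, hd n ≠ 0)
    (hbid : ∀ m n : ℕ, Bd (φd m) (ψd n) = if m = n then hd n else 0) :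
    ∀ n : ℕ, φ (n + 1) = φd (n + 1) + C (τ n * τ (n + 2) / (q n * (τ (n + 1)) ^ 2)) * φd n := by
  -- basic nonvanishing facts
  have hτ0 : τ 0 = 1 := by rw [hτ]; exact Matrix.det_fin_zero
  have hτne' : ∀ m, τ m ≠ 0 := by
    intro m
    match m with
    | 0 => rw [hτ0]; exact one_ne_zero
    | (k+1) => exact hτne _ (Nat.succ_le_succ (Nat.zero_le _))
  set h : ℕ → ℂ := fun m => τ (m + 1) / τ m with hh
  have hne : ∀ m, h m ≠ 0 := fun m => div_ne_zero (hτne' _) (hτne' _)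
  have hqne : ∀ m, q m ≠ 0 := by
    intro m; rw [hq]; exact div_ne_zero (neg_ne_zero.mpr (hs _)) (hs _)
  have hbi' : ∀ m k : ℕ, B (φ m) (ψ k) = if m = k then h k else 0 := by
    intro m k; rw [hbi]
  -- Claim A : B (φ m) r = 0 for degree r < m
  have claimA : ∀ m : ℕ, ∀ r : Polynomial ℂ, r.degree < m → B (φ m) r = 0 := by
    intro m r hr
    obtain ⟨c, rfl⟩ := expand_monic ψ hψm hψd m r hr
    rw [map_sum]
    apply Finset.sum_eq_zero
    intro k hk
    have hk' : m ≠ k := fun hmk => absurd (Finset.mem_range.mp hk) (by omega)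
    rw [map_smul, hbi', if_neg hk', smul_zero]
  -- Claim A' : Bd r (ψd m) = 0 for degree r < m
  have claimA' : ∀ m : ℕ, ∀ r : Polynomial ℂ, r.degree < m → Bd r (ψd m) = 0 := by
    intro m r hr
    obtain ⟨c, rfl⟩ := expand_monic φd hφdm hφdd m r hr
    rw [map_sum, LinearMap.sum_apply]
    apply Finset.sum_eq_zero
    intro k hk
    have hk' : k ≠ m := fun hmk => absurd (Finset.mem_range.mp hk) (by omega)
    rw [map_smul, LinearMap.smul_apply, hbid, if_neg hk', smul_zero]
  -- degree of φ m - φd m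
  have hsubφ : ∀ m : ℕ, (φ m - φd m).degree < m := by
    intro m
    have hdd : (φ m).degree = (φd m).degree := by rw [hφd, hφdd]
    have hlc : (φ m).leadingCoeff = (φd m).leadingCoeff := by
      rw [(hφm m).leadingCoeff, (hφdm m).leadingCoeff]
    have := Polynomial.degree_sub_lt hdd (hφm m).ne_zero hlc
    rwa [hφd] at this
  -- diagonal value Bd (φ m) (ψd m) = hd m
  have hdiag : ∀ m, Bd (φ m) (ψd m) = hd m := by
    intro m
    have hsplit : φ m = φd m + (φ m - φd m) := by ring
    rw [hsplit, map_add, LinearMap.add_apply, hbid, if_pos rfl,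
      claimA' m _ (hsubφ m), add_zero]
  -- (X - C s) * ψd m facts
  have hXmon : ∀ m, ((X - C s) * ψd m).Monic := fun m => (monic_X_sub_C s).mul (hψdm m)
  have hXdeg : ∀ m : ℕ, ((X - C s) * ψd m).degree = ((m + 1 : ℕ) : WithBot ℕ) := by
    intro m
    rw [degree_mul, degree_X_sub_C, hψdd]
    norm_cast
    omega
  -- Claim B
  have claimB : ∀ m : ℕ, (X - C s) * ψd m = ψ (m + 1) + (hd m / h m) • ψ m := by
    intro m
    have hu : ((X - C s) * ψd m - ψ (m + 1)).degree < ((m + 1 : ℕ) : WithBot ℕ) := by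
      have hdd : ((X - C s) * ψd m).degree = (ψ (m + 1)).degree := by rw [hXdeg, hψd]
      have hlc : ((X - C s) * ψd m).leadingCoeff = (ψ (m + 1)).leadingCoeff := by
        rw [(hXmon m).leadingCoeff, (hψm (m + 1)).leadingCoeff]
      have := Polynomial.degree_sub_lt hdd (hXmon m).ne_zero hlc
      rwa [hXdeg] at this
    obtain ⟨c, hc⟩ := expand_monic ψ hψm hψd (m + 1) _ hu
    -- pairing values
    have hpair : ∀ k, k < m + 1 → c k * h k = Bd (φ k) (ψd m) := by
      intro k hk
      have e1 : B (φ k) ((X - C s) * ψd m - ψ (m + 1)) = ∑ j ∈ Finset.range (m + 1),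
          c j • (if k = j then h j else 0) := by
        rw [hc, map_sum]
        exact Finset.sum_congr rfl fun j _ => by rw [map_smul, hbi']
      have e2 : ∑ j ∈ Finset.range (m + 1), c j • (if k = j then h j else 0) = c k * h k := by
        rw [Finset.sum_congr rfl (fun j _ => by rw [smul_ite, smul_zero, smul_eq_mul]),
          Finset.sum_ite_eq, if_pos (Finset.mem_range.mpr hk)]
      have e3 : B (φ k) ((X - C s) * ψd m - ψ (m + 1)) = Bd (φ k) (ψd m) := by
        rw [map_sub, hBd, hbi', if_neg (by omega), sub_zero]
      rw [← e2, ← e1, e3]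
    have hcm : c m = hd m / h m := by
      have h1 := hpair m (by omega)
      rw [hdiag] at h1
      exact (eq_div_iff (hne m)).mpr h1
    have hc0 : ∀ k, k < m → c k = 0 := by
      intro k hk
      have h1 := hpair k (by omega)
      rw [claimA' m _ (by rw [hφd]; exact_mod_cast hk)] at h1
      exact (mul_eq_zero.mp h1).resolve_right (hne k) |>.symm ▸ rfl
    have hsum : ∑ k ∈ Finset.range (m + 1), c k • ψ k = c m • ψ m := by
      rw [Finset.sum_range_succ]
      have : ∑ k ∈ Finset.range m, c k • ψ k = 0 := by
        apply Finset.sum_eq_zero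
        intro k hk
        rw [hc0 k (Finset.mem_range.mp hk), zero_smul]
      rw [this, zero_add]
    have := hc
    rw [hsum, hcm] at this
    linear_combination this
  -- Claim C : hd m = q m * h m
  have claimC : ∀ m : ℕ, hd m = q m * h m := by
    intro m
    have he := congrArg (Polynomial.eval s) (claimB m)
    simp only [eval_mul, eval_sub, eval_X, eval_C, eval_add, eval_smul, smul_eq_mul,
      sub_self, zero_mul] at he
    have h1 : hd m / h m = q m := by
      rw [hq, eq_div_iff (hs m)]
      linear_combination -he
    rw [← h1, div_mul_cancel₀ _ (hne m)]
  -- final argument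
  intro n
  obtain ⟨c, hc⟩ := expand_monic φd hφdm hφdd (n + 1) _ (hsubφ (n + 1))
  have hpair : ∀ j, j < n + 1 → c j * hd j = Bd (φ (n + 1)) (ψd j) := by
    intro j hj
    have e1 : Bd (φ (n + 1) - φd (n + 1)) (ψd j)
        = ∑ k ∈ Finset.range (n + 1), c k • (if k = j then hd j else 0) := by
      rw [hc, map_sum, LinearMap.sum_apply]
      exact Finset.sum_congr rfl fun k _ => by
        rw [map_smul, LinearMap.smul_apply, hbid]
    have e2 : ∑ k ∈ Finset.range (n + 1), c k • (if k = j then hd j else 0) = c j * hd j := by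
      rw [Finset.sum_congr rfl (fun k _ => by rw [smul_ite, smul_zero, smul_eq_mul]),
        Finset.sum_ite_eq', if_pos (Finset.mem_range.mpr hj)]
    have e3 : Bd (φ (n + 1) - φd (n + 1)) (ψd j) = Bd (φ (n + 1)) (ψd j) := by
      rw [map_sub, LinearMap.sub_apply, hbid, if_neg (by omega), sub_zero]
    rw [← e2, ← e1, e3]
  have hcn : c n = h (n + 1) / hd n := by
    have h1 := hpair n (by omega)
    have h2 : Bd (φ (n + 1)) (ψd n) = h (n + 1) := by
      rw [hBd, claimB n, map_add, map_smul, hbi', hbi', if_pos rfl, if_neg (by omega),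
        smul_zero, add_zero]
    rw [h2] at h1
    exact (eq_div_iff (hdne n)).mpr h1
  have hc0 : ∀ j, j < n → c j = 0 := by
    intro j hj
    have h1 := hpair j (by omega)
    have h2 : Bd (φ (n + 1)) (ψd j) = 0 := by
      rw [hBd]
      apply claimA (n + 1)
      rw [hXdeg]
      exact_mod_cast (by omega : j + 1 < n + 1)
    rw [h2] at h1
    exact (mul_eq_zero.mp h1).resolve_right (hdne j)
  have hsum : ∑ k ∈ Finset.range (n + 1), c k • φd k = c n • φd n := by
    rw [Finset.sum_range_succ]
    have : ∑ k ∈ Finset.range n, c k • φd k = 0 := by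
      apply Finset.sum_eq_zero
      intro k hk
      rw [hc0 k (Finset.mem_range.mp hk), zero_smul]
    rw [this, zero_add]
  have harith : h (n + 1) / hd n = τ n * τ (n + 2) / (q n * (τ (n + 1)) ^ 2) := by
    rw [claimC n]
    show (τ (n + 2) / τ (n + 1)) / (q n * (τ (n + 1) / τ n)) = _
    have h1 := hτne' n
    have h2 := hτne' (n + 1)
    have h3 := hτne' (n + 2)
    have h4 := hqne n
    field_simp
  rw [hsum, hcn, harith, smul_eq_C_mul] at hc
  linear_combination hc
end

section
/- Let B be a bilinear form on ℂ[z] with moment determinants τ_n, assume τ_n ≠ 0 for all n ≥ 1, and let ({φ_n}, {ψ_n}) be a pair of monic biorthogonal polynomial sequences with respect to B (so h_n = τ_{n+1}/τ_n). Let s* ∈ ℂ satisfy φ_n(s*) ≠ 0 for all n, set q*_n := −φ_{n+1}(s*)/φ_n(s*), define B*[p, q] := B[(z − s*)p, q], and suppose ({φ*_n}, {ψ*_n}) is a pair of monic biorthogonal polynomial sequences with respect to B*. Then for every n ≥ 0: ψ_{n+1}(z) = ψ*_{n+1}(z) + e*_n ψ*_n(z), where e*_n = τ_n τ_{n+2}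 / (q*_n (τ_{n+1})²). -/
open Polynomial


lemma aux_span (f : ℕ → Polynomial ℂ) (hm : ∀ k, (f k).Monic)
    (hd : ∀ k, (f k).natDegree = k) (n : ℕ) :
    ∀ (N : ℕ) (p : Polynomial ℂ), p.natDegree = N → p.natDegree ≤ n →
      p ∈ Submodule.span ℂ (f '' Set.Iic n) := by
  intro N
  induction N using Nat.strong_induction_on with
  | _ N IH =>
    intro p hN hpn
    by_cases h0 : p = 0
    · simp [h0]
    · have hfm : f p.natDegree ∈ f '' Set.Iic n := ⟨p.natDegree, hpn, rfl⟩
      have hc0 : p.leadingCoeff ≠ 0 := leadingCoeff_ne_zero.2 h0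
      have hfZ : f p.natDegree ≠ 0 := (hm _).ne_zero
      have hdeg : (C p.leadingCoeff * f p.natDegree).degree = p.degree := by
        rw [degree_C_mul hc0, degree_eq_natDegree hfZ, degree_eq_natDegree h0, hd]
      have hlc : p.leadingCoeff = (C p.leadingCoeff * f p.natDegree).leadingCoeff := by
        rw [leadingCoeff_mul, leadingCoeff_C, (hm _).leadingCoeff, mul_one]
      have hqd : (p - C p.leadingCoeff * f p.natDegree).degree < p.degree :=
        degree_sub_lt hdeg.symm h0 hlc
      have hmem : p - C p.leadingCoeff * f p.natDegree ∈ Submodule.span ℂ (f '' Set.Iic n) := by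
        by_cases hq0 : p - C p.leadingCoeff * f p.natDegree = 0
        · simp [hq0]
        · have hlt : (p - C p.leadingCoeff * f p.natDegree).natDegree < N :=
            hN ▸ natDegree_lt_natDegree hq0 hqd
          exact IH _ hlt _ rfl (by omega)
      have hpe : p = (p - C p.leadingCoeff * f p.natDegree) + C p.leadingCoeff * f p.natDegree := by
        ring
      rw [hpe]
      exact Submodule.add_mem _ hmem (by
        rw [← smul_eq_C_mul]
        exact Submodule.smul_mem _ _ (Submodule.subset_span hfm))

lemma aux_zero (f : ℕ → Polynomial ℂ) (hm : ∀ k, (f k).Monic)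
    (hd : ∀ k, (f k).natDegree = k)
    (T : ℕ → Polynomial ℂ →ₗ[ℂ] ℂ) (h : ℕ → ℂ) (hne : ∀ k, h k ≠ 0)
    (hT : ∀ k j, T k (f j) = if k = j then h k else 0) :
    ∀ (N : ℕ) (p : Polynomial ℂ), p.natDegree = N →
      (∀ k ≤ p.natDegree, T k p = 0) → p = 0 := by
  intro N
  induction N using Nat.strong_induction_on with
  | _ N IH =>
    intro p hN hortho
    by_contra h0
    have hc0 : p.leadingCoeff ≠ 0 := leadingCoeff_ne_zero.2 h0
    have hfZ : f p.natDegree ≠ 0 := (hm _).ne_zero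
    have hdeg : (C p.leadingCoeff * f p.natDegree).degree = p.degree := by
      rw [degree_C_mul hc0, degree_eq_natDegree hfZ, degree_eq_natDegree h0, hd]
    have hlc : p.leadingCoeff = (C p.leadingCoeff * f p.natDegree).leadingCoeff := by
      rw [leadingCoeff_mul, leadingCoeff_C, (hm _).leadingCoeff, mul_one]
    have hqd : (p - C p.leadingCoeff * f p.natDegree).degree < p.degree :=
      degree_sub_lt hdeg.symm h0 hlc
    have hq0 : p - C p.leadingCoeff * f p.natDegree = 0 := by
      by_contra hq
      have hlt : (p - C p.leadingCoeff * f p.natDegree).natDegree < N :=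
        hN ▸ natDegree_lt_natDegree hq hqd
      refine hq (IH _ hlt _ rfl ?_)
      intro k hk
      have hkm : k < p.natDegree := by omega
      have h1 : T k p = 0 := hortho k hkm.le
      have h2 : T k (f p.natDegree) = 0 := by rw [hT]; exact if_neg (Nat.ne_of_lt hkm)
      rw [map_sub, h1, ← smul_eq_C_mul, map_smul, h2, smul_zero, sub_zero]
    have hp : p = C p.leadingCoeff * f p.natDegree := by
      rw [← sub_eq_zero]; exact hq0
    have hval : T p.natDegree (C p.leadingCoeff * f p.natDegree)
        = p.leadingCoeff * h p.natDegree := by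
      rw [← smul_eq_C_mul, map_smul, hT, if_pos rfl, smul_eq_mul]
    have hm0 := hortho p.natDegree le_rfl
    nth_rewrite 2 [hp] at hm0
    rw [hval] at hm0
    exact (mul_ne_zero hc0 (hne _)) hm0


/-- Geronimus-type relation: `ψ_{n+1} = ψ*_{n+1} + e*_n ψ*_n` with
`e*_n = τ_n τ_{n+2} / (q*_n τ_{n+1}²)`, where `(φ*, ψ*)` is the pair of monic
biorthogonal polynomial sequences for `B*[p, q] = B[(z - s*) p, q]`. -/
theorem stmt_6
    (B Bs : Polynomial ℂ →ₗ[ℂ] Polynomial ℂ →ₗ[ℂ] ℂ)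
    (μ : ℕ → ℕ → ℂ) (hμ : ∀ i j : ℕ, μ i j = B (X ^ i) (X ^ j))
    (τ : ℕ → ℂ)
    (hτ : ∀ n : ℕ, τ n = Matrix.det (Matrix.of fun i j : Fin n => μ (i : ℕ) (j : ℕ)))
    (hτne : ∀ n : ℕ, 1 ≤ n → τ n ≠ 0)
    (φ ψ : ℕ → Polynomial ℂ)
    (hφm : ∀ n, (φ n).Monic) (hφd : ∀ n : ℕ, (φ n).degree = n)
    (hψm : ∀ n, (ψ n).Monic) (hψd : ∀ n : ℕ, (ψ n).degree = n)
    (hbi : ∀ m n : ℕ, B (φ m) (ψ n) = if m = n then τ (n + 1) / τ n else 0)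
    (s : ℂ) (hs : ∀ n, (φ n).eval s ≠ 0)
    (q : ℕ → ℂ) (hq : ∀ n, q n = -((φ (n + 1)).eval s) / ((φ n).eval s))
    (hBs : ∀ p r : Polynomial ℂ, Bs p r = B ((X - C s) * p) r)
    (φs ψs : ℕ → Polynomial ℂ) (hst : ℕ → ℂ)
    (hφsm : ∀ n, (φs n).Monic) (hφsd : ∀ n : ℕ, (φs n).degree = n)
    (hψsm : ∀ n, (ψs n).Monic) (hψsd : ∀ n : ℕ, (ψs n).degree = n)
    (hstne : ∀ n, hst n ≠ 0)
    (hbis : ∀ m n : ℕ, Bs (φs m) (ψs n) = if m = n then hst n else 0) :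
    ∀ n : ℕ, ψ (n + 1) = ψs (n + 1) + C (τ n * τ (n + 2) / (q n * (τ (n + 1)) ^ 2)) * ψs n := by
  have hφnd : ∀ n : ℕ, (φ n).natDegree = n := fun n => natDegree_eq_of_degree_eq_some (hφd n)
  have hψnd : ∀ n : ℕ, (ψ n).natDegree = n := fun n => natDegree_eq_of_degree_eq_some (hψd n)
  have hφsnd : ∀ n : ℕ, (φs n).natDegree = n := fun n => natDegree_eq_of_degree_eq_some (hφsd n)
  have hψsnd : ∀ n : ℕ, (ψs n).natDegree = n := fun n => natDegree_eq_of_degree_eq_some (hψsd n)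
  have hτ0 : τ 0 = 1 := by rw [hτ]; exact Matrix.det_fin_zero
  have hτall : ∀ k, τ k ≠ 0 := by
    intro k
    cases k with
    | zero => rw [hτ0]; exact one_ne_zero
    | succ k => exact hτne _ k.succ_pos
  have hqne : ∀ k, q k ≠ 0 := fun k => by
    rw [hq]; exact div_ne_zero (neg_ne_zero.2 (hs _)) (hs _)
  -- B of low degree against ψ m is zero
  have hBlow : ∀ (m : ℕ) (p : Polynomial ℂ), p.natDegree < m → B p (ψ m) = 0 := by
    intro m p hp
    have hmem := aux_span φ hφm hφnd (m - 1) p.natDegree p rfl (by omega)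
    have hker : Submodule.span ℂ (φ '' Set.Iic (m - 1)) ≤ LinearMap.ker (B.flip (ψ m)) := by
      rw [Submodule.span_le]
      rintro x ⟨k, hk, rfl⟩
      simp only [Set.mem_Iic] at hk
      have hkm : k ≠ m := by omega
      simp [LinearMap.mem_ker, LinearMap.flip_apply, hbi, hkm]
    simpa [LinearMap.mem_ker, LinearMap.flip_apply] using hker hmem
  have hBhigh : ∀ (j : ℕ) (p : Polynomial ℂ), p.natDegree < j → B (φ j) p = 0 := by
    intro j p hp
    have hmem := aux_span ψ hψm hψnd (j - 1) p.natDegree p rfl (by omega)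
    have hker : Submodule.span ℂ (ψ '' Set.Iic (j - 1)) ≤ LinearMap.ker (B (φ j)) := by
      rw [Submodule.span_le]
      rintro x ⟨k, hk, rfl⟩
      simp only [Set.mem_Iic] at hk
      have hkm : j ≠ k := by omega
      simp [LinearMap.mem_ker, hbi, hkm]
    simpa [LinearMap.mem_ker] using hker hmem
  intro n
  -- the Christoffel quotient
  set pn := (φ (n + 1) + C (q n) * φ n) /ₘ (X - C s) with hpndef
  have hroot : (φ (n + 1) + C (q n) * φ n).IsRoot s := by
    show (φ (n + 1) + C (q n) * φ n).eval s = 0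
    rw [eval_add, eval_mul, eval_C, hq n, div_mul_cancel₀ _ (hs n)]
    ring
  have hmul : (X - C s) * pn = φ (n + 1) + C (q n) * φ n := by
    rw [hpndef]
    exact mul_divByMonic_eq_iff_isRoot.2 hroot
  have hCqd : (C (q n) * φ n).degree < (φ (n + 1)).degree := by
    rw [degree_C_mul (hqne n), hφd, hφd]
    exact_mod_cast Nat.lt_succ_self n
  have hrm : (φ (n + 1) + C (q n) * φ n).Monic := (hφm (n + 1)).add_of_left hCqd
  have hpnm : pn.Monic := by
    have h1 : ((X - C s) * pn).Monic := by rw [hmul]; exact hrm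
    exact (monic_X_sub_C s).of_mul_monic_left h1
  have hpn0 : pn ≠ 0 := hpnm.ne_zero
  have hrd : (φ (n + 1) + C (q n) * φ n).degree = ((n + 1 : ℕ) : WithBot ℕ) := by
    rw [degree_add_eq_left_of_degree_lt hCqd, hφd]
  have hpnd : pn.natDegree = n := by
    have h2 : (X - C s).natDegree + pn.natDegree = n + 1 := by
      rw [← natDegree_mul (X_sub_C_ne_zero s) hpn0, hmul,
        natDegree_eq_of_degree_eq_some hrd]
    rw [natDegree_X_sub_C] at h2
    omega
  -- Christoffel: φs n = pn
  have hTflip : ∀ k j : ℕ, (Bs.flip (ψs k)) (φs j) = if k = j then hst k else 0 := by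
    intro k j
    rw [LinearMap.flip_apply, hbis]
    by_cases hkj : k = j
    · subst hkj; simp
    · rw [if_neg (fun hh => hkj hh.symm), if_neg hkj]
  have hOrth : ∀ k, k < n → Bs (φs n - pn) (ψs k) = 0 := by
    intro k hk
    have h1 : Bs (φs n) (ψs k) = 0 := by rw [hbis]; exact if_neg (by omega)
    have ha : B (φ (n + 1)) (ψs k) = 0 := hBhigh (n + 1) (ψs k) (by rw [hψsnd]; omega)
    have hb : B (φ n) (ψs k) = 0 := hBhigh n (ψs k) (by rw [hψsnd]; omega)
    have h2 : Bs pn (ψs k) = 0 := by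
      rw [hBs, hmul, ← smul_eq_C_mul, map_add, map_smul, LinearMap.add_apply,
        LinearMap.smul_apply, ha, hb, smul_zero, add_zero]
    rw [map_sub, LinearMap.sub_apply, h1, h2, sub_zero]
  have hchris : φs n = pn := by
    rw [← sub_eq_zero]
    refine aux_zero φs hφsm hφsnd (fun k => Bs.flip (ψs k)) hst hstne hTflip
      (φs n - pn).natDegree (φs n - pn) rfl ?_
    intro k hk
    by_cases hz : φs n - pn = 0
    · rw [hz]; exact map_zero _
    · have hdd : (φs n - pn).degree < (φs n).degree := by
        refine degree_sub_lt ?_ (hφsm n).ne_zero ?_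
        · rw [hφsd, degree_eq_natDegree hpn0, hpnd]
        · rw [(hφsm n).leadingCoeff, hpnm.leadingCoeff]
      have hlt := natDegree_lt_natDegree hz hdd
      rw [hφsnd] at hlt
      exact hOrth k (by omega)
  -- value of hst n
  have hstval : hst n = q n * (τ (n + 1) / τ n) := by
    have h0 : Bs (φs n) (ψs n) = hst n := by rw [hbis]; simp
    have ha : B (φ (n + 1)) (ψs n) = 0 := hBhigh (n + 1) (ψs n) (by rw [hψsnd]; omega)
    have hb : B (φ n) (ψs n) = τ (n + 1) / τ n := by
      have hr : B (φ n) (ψs n - ψ n) = 0 := by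
        by_cases hz : ψs n - ψ n = 0
        · rw [hz]; exact map_zero _
        · refine hBhigh n _ ?_
          have hdd : (ψs n - ψ n).degree < (ψs n).degree := by
            refine degree_sub_lt ?_ (hψsm n).ne_zero ?_
            · rw [hψsd, hψd]
            · rw [(hψsm n).leadingCoeff, (hψm n).leadingCoeff]
          have hlt := natDegree_lt_natDegree hz hdd
          rwa [hψsnd] at hlt
      rw [map_sub, sub_eq_zero] at hr
      rw [hr, hbi, if_pos rfl]
    rw [← h0, hchris, hBs, hmul, ← smul_eq_C_mul, map_add, map_smul, LinearMap.add_apply,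
      LinearMap.smul_apply, ha, hb, zero_add, smul_eq_mul]
  -- the difference d
  set e := τ n * τ (n + 2) / (q n * τ (n + 1) ^ 2) with he
  have hkey : ∀ k ≤ n, Bs (φs k) (ψ (n + 1) - ψs (n + 1) - C e * ψs n) = 0 := by
    intro k hk
    have h1 : Bs (φs k) (ψs (n + 1)) = 0 := by rw [hbis]; exact if_neg (by omega)
    have h2 : Bs (φs k) (ψ (n + 1)) = if k = n then τ (n + 2) / τ (n + 1) else 0 := by
      by_cases hkn : k = n
      · subst hkn
        rw [hBs, hchris, hmul, ← smul_eq_C_mul, map_add, map_smul, LinearMap.add_apply,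
          LinearMap.smul_apply, hbi, hbi, if_pos rfl, if_neg (by omega), smul_zero,
          add_zero, if_pos rfl]
      · rw [hBs, if_neg hkn]
        apply hBlow
        rw [natDegree_mul (X_sub_C_ne_zero s) (hφsm k).ne_zero, natDegree_X_sub_C, hφsnd]
        omega
    rw [← smul_eq_C_mul, map_sub, map_sub, map_smul, h1, h2, hbis, smul_eq_mul, sub_zero]
    have h3 := hτall n
    have h4 := hτall (n + 1)
    have h5 := hqne n
    by_cases hkn : k = n
    · subst hkn
      rw [if_pos rfl, if_pos rfl, hstval, he]
      field_simp
      ring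
    · rw [if_neg hkn, if_neg hkn]; simp
  have hdnd : (ψ (n + 1) - ψs (n + 1) - C e * ψs n).natDegree ≤ n := by
    refine le_trans (natDegree_sub_le _ _) (max_le ?_ ?_)
    · by_cases hz : ψ (n + 1) - ψs (n + 1) = 0
      · simp [hz]
      · have hdd : (ψ (n + 1) - ψs (n + 1)).degree < (ψ (n + 1)).degree := by
          refine degree_sub_lt ?_ (hψm _).ne_zero ?_
          · rw [hψd, hψsd]
          · rw [(hψm _).leadingCoeff, (hψsm _).leadingCoeff]
        have hlt := natDegree_lt_natDegree hz hdd
        rw [hψnd] at hlt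
        omega
    · refine le_trans (natDegree_mul_le) ?_
      simp [hψsnd]
  have hdzero : ψ (n + 1) - ψs (n + 1) - C e * ψs n = 0 := by
    refine aux_zero ψs hψsm hψsnd (fun k => Bs (φs k)) hst hstne
      (fun k j => by rw [hbis]; by_cases hkj : k = j <;> simp [hkj]) _ _ rfl ?_
    intro k hk
    exact hkey k (le_trans hk hdnd)
  rw [sub_sub, sub_eq_zero] at hdzero
  rw [hdzero, he]
end

section
/- Let μ_{i,j} (i, j ≥ 0) be complex numbers with determinants τ_0 := 1, τ_n := det(μ_{i,j})_{i,j=0}^{n-1}, and assume τ_n ≠ 0 for all n ≥ 1. For s ∈ ℂ set μ*_{i,j} := μ_{i+1,j} − s·μ_{i,j} and τ*_0 := 1, τ*_n := det(μ*_{i,j})_{i,j=0}^{n-1}. Let φ_n(z) be the monic polynomial defined as (1/τ_n) times the determinant of the (n+1)×(n+1) matrix whose entry in row i (0 ≤ i ≤ n) and column j (0 ≤ j ≤ n−1) is μ_{i,j} and whose last column is (1, z, …, z^n)ᵀ. Then φ_n(s) = (−1)^n τ*_n / τ_n for all n ≥ 0. -/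
open Polynomial

/-- Evaluation of the determinant-represented polynomials at the shift parameter:
`φ_n(s) = (-1)^n τ*_n / τ_n`, where `μ*_{i,j} = μ_{i+1,j} - s μ_{i,j}`. -/
theorem stmt_7
    (μ : ℕ → ℕ → ℂ) (s : ℂ)
    (μs : ℕ → ℕ → ℂ) (hμs : ∀ i j : ℕ, μs i j = μ (i + 1) j - s * μ i j)
    (τ τs : ℕ → ℂ)
    (hτ : ∀ n : ℕ, τ n = Matrix.det (Matrix.of fun i j : Fin n => μ (i : ℕ) (j : ℕ)))
    (hτs : ∀ n : ℕ, τs n = Matrix.det (Matrix.of fun i j : Fin n => μs (i : ℕ) (j : ℕ)))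
    (hτne : ∀ n : ℕ, 1 ≤ n → τ n ≠ 0)
    (φ : ℕ → Polynomial ℂ)
    (hφ : ∀ n : ℕ, φ n = C (τ n)⁻¹ *
      Matrix.det (Matrix.of fun i j : Fin (n + 1) =>
        if (j : ℕ) < n then C (μ (i : ℕ) (j : ℕ)) else X ^ (i : ℕ))) :
    ∀ n : ℕ, (φ n).eval s = (-1) ^ n * τs n / τ n := by
  intro n
  have hτ0 : τ n ≠ 0 := by
    rcases Nat.eq_zero_or_pos n with h | h
    · subst h; rw [hτ]; simp
    · exact hτne n h
  set A : Matrix (Fin (n+1)) (Fin (n+1)) ℂ :=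
    Matrix.of fun i j => if (j:ℕ) < n then μ i j else s ^ (i:ℕ) with hA
  have heval : Polynomial.eval s (Matrix.det (Matrix.of fun i j : Fin (n + 1) =>
        if (j : ℕ) < n then C (μ (i : ℕ) (j : ℕ)) else X ^ (i : ℕ))) = A.det := by
    have : A = (Polynomial.evalRingHom s).mapMatrix (Matrix.of fun i j : Fin (n+1) =>
        if (j:ℕ) < n then C (μ (i:ℕ) (j:ℕ)) else X ^ (i:ℕ)) := by
      ext i j
      simp only [hA, RingHom.mapMatrix_apply, Matrix.map_apply, Matrix.of_apply]
      split <;> simp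
    rw [this, ← RingHom.map_det]; rfl
  -- lower triangular row-operation matrix
  set L : Matrix (Fin (n+1)) (Fin (n+1)) ℂ :=
    Matrix.of (fun i j => if i = j then 1 else if (j:ℕ)+1 = (i:ℕ) then -s else 0) with hL
  set B : Matrix (Fin (n+1)) (Fin (n+1)) ℂ :=
    Matrix.of (fun i j =>
      if (i:ℕ) = 0 then (if (j:ℕ) < n then μ 0 j else 1)
      else (if (j:ℕ) < n then μs ((i:ℕ)-1) j else 0)) with hB
  have hLA : L * A = B := by
    ext i j
    rw [Matrix.mul_apply]
    induction i using Fin.cases with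
    | zero =>
      have : ∀ k : Fin (n+1), L 0 k * A k j = if k = 0 then A 0 j else 0 := by
        intro k
        simp only [hL, Matrix.of_apply]
        rcases eq_or_ne k 0 with hk | hk
        · subst hk; simp
        · have h1 : ¬((0:Fin (n+1)) = k) := fun h => hk h.symm
          have h2 : ¬((k:ℕ)+1 = ((0:Fin (n+1)):ℕ)) := by simp
          rw [if_neg h1, if_neg h2, zero_mul, if_neg hk]
      rw [Finset.sum_congr rfl fun k _ => this k, Finset.sum_ite_eq' _ (0 : Fin (n+1))]
      simp only [Finset.mem_univ, if_pos, hB, hA, Matrix.of_apply, Fin.val_zero]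
      split <;> simp
    | succ i' =>
      have : ∀ k : Fin (n+1), L i'.succ k * A k j =
          (if k = i'.succ then A i'.succ j else 0) +
          (if k = i'.castSucc then -s * A i'.castSucc j else 0) := by
        intro k
        simp only [hL, Matrix.of_apply]
        rcases eq_or_ne k i'.succ with hk | hk
        · subst hk
          rw [if_pos rfl, if_pos rfl, if_neg, one_mul, add_zero]
          intro h
          have := congrArg Fin.val h
          simp [Fin.val_succ] at this
        · rw [if_neg (fun h => hk h.symm), if_neg hk]
          rcases eq_or_ne k i'.castSucc with hk2 | hk2
          · subst hk2
            rw [if_pos, if_pos rfl, zero_add]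
            simp [Fin.val_succ]
          · rw [if_neg, if_neg hk2, zero_mul, add_zero]
            intro h
            apply hk2
            apply Fin.ext
            have : (i'.castSucc : ℕ) = (k:ℕ) := by simp [Fin.val_succ] at h ⊢; omega
            omega
      rw [Finset.sum_congr rfl fun k _ => this k, Finset.sum_add_distrib,
        Finset.sum_ite_eq' _ (i'.succ), Finset.sum_ite_eq' _ (i'.castSucc)]
      simp only [Finset.mem_univ, if_pos, hB, hA, Matrix.of_apply]
      have hne : ((i'.succ : Fin (n+1)) : ℕ) ≠ 0 := by simp
      rw [if_neg hne]
      have h1 : ((i'.succ : Fin (n+1)) : ℕ) - 1 = (i' : ℕ) := by simp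
      rw [h1]
      simp only [Fin.coe_castSucc, Fin.val_succ]
      split
      · rw [hμs]; ring
      · have : s ^ ((i':ℕ)+1) + -s * s ^ (i':ℕ) = 0 := by ring
        exact this
  have hdetL : L.det = 1 := by
    rw [Matrix.det_of_lowerTriangular L]
    · apply Finset.prod_eq_one
      intro i _
      simp [hL]
    · intro i j hij
      simp only [hL, Matrix.of_apply]
      rw [if_neg, if_neg]
      · have : (i:ℕ) < (j:ℕ) := hij
        omega
      · exact fun h => absurd (h ▸ rfl) (ne_of_lt (show i < j from hij))
  have hdetA : A.det = (-1)^n * τs n := by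
    have : A.det = B.det := by rw [← hLA, Matrix.det_mul, hdetL, one_mul]
    rw [this, Matrix.det_succ_column B (Fin.last n)]
    rw [Finset.sum_eq_single (0 : Fin (n+1))]
    · have hB0 : B 0 (Fin.last n) = 1 := by simp [hB]
      rw [hB0]
      have hsub : (B.submatrix (Fin.succAbove 0) (Fin.succAbove (Fin.last n))) =
          Matrix.of (fun i j : Fin n => μs (i:ℕ) (j:ℕ)) := by
        ext i j
        simp only [Matrix.submatrix_apply, hB, Matrix.of_apply, Fin.succAbove_zero,
          Fin.succAbove_last, Fin.val_succ, Fin.coe_castSucc]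
        rw [if_neg (by omega), if_pos (j.isLt)]
        simp
      rw [hsub, ← hτs]
      simp [Fin.val_last]
    · intro i _ hi
      have : B i (Fin.last n) = 0 := by
        simp only [hB, Matrix.of_apply, Fin.val_last]
        rw [if_neg, if_neg (lt_irrefl n)]
        exact fun h => hi (Fin.ext h)
      rw [this]; ring
    · intro h; exact absurd (Finset.mem_univ _) h
  rw [hφ]
  simp only [eval_mul, eval_C, heval, hdetA]
  field_simp
end

section
/- Let μ_{i,j} (i, j ≥ 0) be complex numbers and s ∈ ℂ, and set μ'_{i,j} := μ_{i+1,j} − s·μ_{i,j}. For k, l ≥ 0 and n ≥ 0 define τ^{(k,l)}_0 := 1, τ^{(k,l)}_n := det(μ_{k+i, l+j})_{i,j=0}^{n-1}, and τ'^{(k,l)}_0 := 1, τ'^{(k,l)}_n := det(μ'_{k+i, l+j})_{i,j=0}^{n-1}. Then for all k, l ≥ 0 and n ≥ 0 the bilinear identity τ'^{(k,l)}_{n+1} · τ^{(k+1,l)}_n = τ'^{(k,l)}_n · τ^{(k+1,l)}_{n+1} − s · τ^{(k,l)}_{n+1} · τ'^{(k+1,l)}_n holds. -/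
open Matrix Polynomial

noncomputable def cm {n : ℕ} (W : Matrix (Fin n) (Fin n) ℂ) (B : Matrix (Fin n) (Fin 2) ℂ)
    (C : Matrix (Fin 2) (Fin n) ℂ) (D : Matrix (Fin 2) (Fin 2) ℂ) (a b : Fin 2) : ℂ :=
  (Matrix.fromBlocks W (Matrix.replicateCol (Fin 1) (fun i => B i b))
    (Matrix.replicateRow (Fin 1) (fun j => C a j)) (Matrix.of fun _ _ : Fin 1 => D a b)).det

lemma key_inv {n : ℕ} (W : Matrix (Fin n) (Fin n) ℂ) (B : Matrix (Fin n) (Fin 2) ℂ)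
    (C : Matrix (Fin 2) (Fin n) ℂ) (D : Matrix (Fin 2) (Fin 2) ℂ) [Invertible W] :
    (Matrix.fromBlocks W B C D).det * W.det
      = cm W B C D 0 0 * cm W B C D 1 1 - cm W B C D 0 1 * cm W B C D 1 0 := by
  have hm : ∀ a b : Fin 2, cm W B C D a b = W.det * (D - C * ⅟W * B) a b := by
    intro a b
    rw [cm, Matrix.det_fromBlocks₁₁]
    congr 1
    rw [Matrix.det_fin_one]
    simp [Matrix.mul_apply, Matrix.sub_apply, Finset.sum_mul, Finset.mul_sum]
  rw [Matrix.det_fromBlocks₁₁, hm, hm, hm, hm, Matrix.det_fin_two]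
  ring

lemma det_eval {m : Type*} [Fintype m] [DecidableEq m] (M : Matrix m m ℂ[X]) (t : ℂ) :
    Polynomial.eval t M.det = (M.map (Polynomial.eval t)).det := by
  rw [← Polynomial.coe_evalRingHom, RingHom.map_det, RingHom.mapMatrix_apply]

lemma key {n : ℕ} (W : Matrix (Fin n) (Fin n) ℂ) (B : Matrix (Fin n) (Fin 2) ℂ)
    (C : Matrix (Fin 2) (Fin n) ℂ) (D : Matrix (Fin 2) (Fin 2) ℂ) :
    (Matrix.fromBlocks W B C D).det * W.det
      = cm W B C D 0 0 * cm W B C D 1 1 - cm W B C D 0 1 * cm W B C D 1 0 := by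
  classical
  set Wp : Matrix (Fin n) (Fin n) ℂ[X] :=
    W.map Polynomial.C + (Polynomial.X : ℂ[X]) • 1 with hWpdef
  have hevW : ∀ t : ℂ, Wp.map (Polynomial.eval t) = W + t • 1 := by
    intro t
    ext i j
    simp [Wp, Matrix.map_apply, Matrix.add_apply, Matrix.smul_apply, Matrix.one_apply,
      apply_ite (Polynomial.eval t), smul_eq_mul, mul_ite]
  have hWpne : Wp.det ≠ 0 := by
    have h1 : Wp = Matrix.charmatrix (-W) := by
      ext i j
      rw [Matrix.charmatrix_apply]
      simp only [Wp, Matrix.add_apply, Matrix.map_apply, Matrix.smul_apply, Matrix.one_apply,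
        Matrix.diagonal_apply, Matrix.neg_apply, map_neg, smul_eq_mul, mul_ite, mul_one, mul_zero]
      split <;> ring
    rw [h1]
    exact (Matrix.charpoly_monic (-W)).ne_zero
  set Lp : ℂ[X] := (Matrix.fromBlocks Wp (B.map Polynomial.C) (C.map Polynomial.C)
    (D.map Polynomial.C)).det * Wp.det with hLp
  set cmp : Fin 2 → Fin 2 → ℂ[X] := fun a b =>
    (Matrix.fromBlocks Wp (Matrix.replicateCol (Fin 1) (fun i => Polynomial.C (B i b)))
      (Matrix.replicateRow (Fin 1) (fun j => Polynomial.C (C a j)))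
      (Matrix.of fun _ _ : Fin 1 => Polynomial.C (D a b))).det with hcmp
  set Rp : ℂ[X] := cmp 0 0 * cmp 1 1 - cmp 0 1 * cmp 1 0 with hRp
  have hevL : ∀ t : ℂ,
      Polynomial.eval t Lp = (Matrix.fromBlocks (W + t • 1) B C D).det * (W + t • 1).det := by
    intro t
    rw [hLp, Polynomial.eval_mul, det_eval, det_eval, Matrix.fromBlocks_map, hevW]
    congr 2
    ext i j
    cases i <;> cases j <;> simp [Matrix.map_apply]
  have hevcm : ∀ (t : ℂ) (a b : Fin 2),
      Polynomial.eval t (cmp a b) = cm (W + t • 1) B C D a b := by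
    intro t a b
    simp only [hcmp]
    rw [det_eval, Matrix.fromBlocks_map, hevW, cm]
    congr 1
    ext i j
    cases i <;> cases j <;> simp [Matrix.map_apply, Matrix.replicateCol_apply, Matrix.replicateRow_apply]
  have hevR : ∀ t : ℂ, Polynomial.eval t Rp
      = cm (W + t • 1) B C D 0 0 * cm (W + t • 1) B C D 1 1
        - cm (W + t • 1) B C D 0 1 * cm (W + t • 1) B C D 1 0 := by
    intro t
    rw [hRp]
    simp only [Polynomial.eval_sub, Polynomial.eval_mul, hevcm]
  have hagree : {t : ℂ | Polynomial.eval t Lp = Polynomial.eval t Rp}.Infinite := by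
    have hsub : {t : ℂ | IsRoot Wp.det t}ᶜ ⊆
        {t : ℂ | Polynomial.eval t Lp = Polynomial.eval t Rp} := by
      intro t ht
      have hdet : (W + t • 1).det ≠ 0 := by
        have h2 : Polynomial.eval t Wp.det = (W + t • 1).det := by
          rw [det_eval, hevW]
        rw [← h2]
        exact ht
      have : Invertible (W + t • 1) :=
        Matrix.invertibleOfIsUnitDet _ (isUnit_iff_ne_zero.mpr hdet)
      rw [Set.mem_setOf_eq, hevL, hevR]
      exact key_inv (W + t • 1) B C D
    exact Set.Infinite.mono hsub ((Polynomial.finite_setOf_isRoot hWpne).infinite_compl)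
  have hLR : Lp = Rp := Polynomial.eq_of_infinite_eval_eq _ _ hagree
  have h0 : W + (0 : ℂ) • 1 = W := by simp
  have hfin := congrArg (Polynomial.eval (0 : ℂ)) hLR
  rw [hevL, hevR, h0] at hfin
  exact hfin

lemma det_submatrix_equiv {α β : Type*} [Fintype α] [DecidableEq α] [Fintype β] [DecidableEq β]
    (e₁ e₂ : α ≃ β) (A : Matrix β β ℂ) :
    (A.submatrix e₁ e₂).det = (Equiv.Perm.sign (e₁.trans e₂.symm) : ℂ) * A.det := by
  have h : A.submatrix e₁ e₂
      = (A.submatrix e₂ e₂).submatrix (e₁.trans e₂.symm : Equiv.Perm α) id := by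
    ext i j; simp
  rw [h, Matrix.det_permute, Matrix.det_submatrix_equiv_self]

lemma DJ {n : ℕ} (M : Matrix (Fin (n+2)) (Fin (n+2)) ℂ) :
    M.det * (M.submatrix (fun i : Fin n => i.succ.castSucc) (fun j : Fin n => j.succ.castSucc)).det
    = (M.submatrix Fin.castSucc Fin.castSucc).det * (M.submatrix Fin.succ Fin.succ).det
      - (M.submatrix Fin.castSucc Fin.succ).det * (M.submatrix Fin.succ Fin.castSucc).det := by
  classical
  set inner : Fin n → Fin (n+2) := fun i => i.succ.castSucc with hinner
  set corner : Fin 2 → Fin (n+2) := fun a => if a = 0 then 0 else Fin.last (n+1) with hcorner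
  set f : Fin 2 → Fin (n+1) → Fin (n+2) :=
    fun a => if a = 0 then Fin.castSucc else Fin.succ with hf
  -- the big equivalence
  have ebij : Function.Bijective (Sum.elim inner corner) := by
    rw [Fintype.bijective_iff_injective_and_card]
    refine ⟨?_, by simp⟩
    rintro (i | a) (j | b) h
    · simp only [Sum.elim_inl, hinner] at h
      exact congrArg _ (Fin.succ_injective _ (Fin.castSucc_injective _ h))
    · exfalso
      have hv := congrArg Fin.val h
      fin_cases b <;>
        simp [hinner, hcorner, Fin.val_succ, Fin.coe_castSucc, Fin.val_last] at hv <;> omega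
    · exfalso
      have hv := congrArg Fin.val h
      fin_cases a <;>
        simp [hinner, hcorner, Fin.val_succ, Fin.coe_castSucc, Fin.val_last] at hv <;> omega
    · fin_cases a <;> fin_cases b
      · rfl
      · exfalso
        have hv := congrArg Fin.val h
        simp only [Sum.elim_inr, hcorner] at hv
        simp at hv
      · exfalso
        have hv := congrArg Fin.val h
        simp only [Sum.elim_inr, hcorner] at hv
        simp at hv
      · rfl
  set e : (Fin n ⊕ Fin 2) ≃ Fin (n+2) := Equiv.ofBijective _ ebij with he
  -- the small equivalences
  have σbij : ∀ a : Fin 2, Function.Bijective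
      (Sum.elim (fun i : Fin n => if a = 0 then i.succ else i.castSucc)
        (fun _ : Fin 1 => if a = 0 then 0 else Fin.last n)) := by
    intro a
    rw [Fintype.bijective_iff_injective_and_card]
    refine ⟨?_, by simp⟩
    rintro (i | u) (j | v) h
    · simp only [Sum.elim_inl] at h
      refine congrArg _ ?_
      by_cases ha : a = 0
      · simp only [ha, if_pos rfl] at h
        exact Fin.succ_injective _ h
      · simp only [ha, if_neg ha] at h
        exact Fin.castSucc_injective _ h
    · exfalso
      have hv := congrArg Fin.val h
      fin_cases a <;> simp [Fin.val_succ, Fin.coe_castSucc, Fin.val_last] at hv <;> omega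
    · exfalso
      have hv := congrArg Fin.val h
      fin_cases a <;> simp [Fin.val_succ, Fin.coe_castSucc, Fin.val_last] at hv <;> omega
    · simp [Subsingleton.elim u v]
  set σ : Fin 2 → (Fin n ⊕ Fin 1) ≃ Fin (n+1) := fun a => Equiv.ofBijective _ (σbij a) with hσ
  -- compatibility
  have hfσ : ∀ (a : Fin 2) (x : Fin n ⊕ Fin 1),
      f a (σ a x) = Sum.elim inner (fun _ => corner a) x := by
    rintro a (i | u) <;> fin_cases a <;>
      simp only [hσ, hf, hinner, hcorner, Equiv.ofBijective_apply, Sum.elim_inl, Sum.elim_inr] <;>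
      simp [Fin.ext_iff]
  -- blocks
  set W : Matrix (Fin n) (Fin n) ℂ := Matrix.of fun i j => M (inner i) (inner j) with hW
  set B : Matrix (Fin n) (Fin 2) ℂ := Matrix.of fun i b => M (inner i) (corner b) with hB
  set C : Matrix (Fin 2) (Fin n) ℂ := Matrix.of fun a j => M (corner a) (inner j) with hC
  set D : Matrix (Fin 2) (Fin 2) ℂ := Matrix.of fun a b => M (corner a) (corner b) with hD
  have hbig : (Matrix.fromBlocks W B C D).det = M.det := by
    have : Matrix.fromBlocks W B C D = M.submatrix e e := by
      ext (i | a) (j | b) <;> rfl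
    rw [this, Matrix.det_submatrix_equiv_self]
  have hcm : ∀ a b : Fin 2, cm W B C D a b
      = (Equiv.Perm.sign ((σ a).trans (σ b).symm) : ℂ)
        * (M.submatrix (f a) (f b)).det := by
    intro a b
    have h1 : (Matrix.fromBlocks W (Matrix.replicateCol (Fin 1) (fun i => B i b))
        (Matrix.replicateRow (Fin 1) (fun j => C a j)) (Matrix.of fun _ _ : Fin 1 => D a b))
        = (M.submatrix (f a) (f b)).submatrix (σ a) (σ b) := by
      ext (i | u) (j | v) <;>
        simp only [Matrix.fromBlocks_apply₁₁, Matrix.fromBlocks_apply₁₂,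
          Matrix.fromBlocks_apply₂₁, Matrix.fromBlocks_apply₂₂, Matrix.submatrix_apply,
          Matrix.replicateCol_apply, Matrix.replicateRow_apply, Matrix.of_apply, hfσ, hW, hB, hC, hD,
          Sum.elim_inl, Sum.elim_inr]
    rw [cm, h1, det_submatrix_equiv]
  have hWdet : W.det = (M.submatrix (fun i : Fin n => i.succ.castSucc)
      (fun j : Fin n => j.succ.castSucc)).det := rfl
  have hkey := key W B C D
  rw [hbig, hcm, hcm, hcm, hcm] at hkey
  have hs00 : ((σ 0).trans (σ 0).symm) = Equiv.refl _ := Equiv.self_trans_symm _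
  have hs11 : ((σ 1).trans (σ 1).symm) = Equiv.refl _ := Equiv.self_trans_symm _
  have hs10 : ((σ 1).trans (σ 0).symm) = ((σ 0).trans (σ 1).symm)⁻¹ := by
    ext x
    simp [Equiv.Perm.inv_def]
  have hsign : (Equiv.Perm.sign ((σ 0).trans (σ 1).symm) : ℂ)
      * (Equiv.Perm.sign ((σ 1).trans (σ 0).symm) : ℂ) = 1 := by
    rw [hs10, Equiv.Perm.sign_inv]
    have h2 := congrArg Units.val (Int.units_mul_self (Equiv.Perm.sign ((σ 0).trans (σ 1).symm)))
    push_cast at h2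
    exact_mod_cast h2
  rw [hs00, hs11] at hkey
  simp only [Equiv.Perm.sign_refl, Units.val_one, Int.cast_one, one_mul] at hkey
  have hf0 : f 0 = Fin.castSucc := by simp [hf]
  have hf1 : f 1 = Fin.succ := by simp [hf]
  rw [hf0, hf1] at hkey
  have hgoal : M.det * W.det
      = (M.submatrix Fin.castSucc Fin.castSucc).det * (M.submatrix Fin.succ Fin.succ).det
        - (M.submatrix Fin.castSucc Fin.succ).det * (M.submatrix Fin.succ Fin.castSucc).det := by
    rw [hkey]
    linear_combination
      (-((M.submatrix Fin.castSucc Fin.succ).det * (M.submatrix Fin.succ Fin.castSucc).det))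
        * hsign
  exact hgoal

lemma redH (μ : ℕ → ℕ → ℂ) (s c : ℂ) (k l m : ℕ) :
    (Matrix.of fun i j : Fin (m+1) =>
        Fin.cases (c * s ^ (i : ℕ)) (fun j' : Fin m => μ (k + i) (l + j')) j).det
      = c * (Matrix.of fun i j : Fin m =>
          (μ (k + i + 1) (l + j) - s * μ (k + i) (l + j))).det := by
  classical
  set H : Matrix (Fin (m+1)) (Fin (m+1)) ℂ := Matrix.of fun i j =>
    Fin.cases (c * s ^ (i : ℕ)) (fun j' : Fin m => μ (k + i) (l + j')) j with hH
  set N : Matrix (Fin (m+1)) (Fin (m+1)) ℂ :=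
    Matrix.of fun i t => if (t : ℕ) + 1 = (i : ℕ) then (1:ℂ) else 0 with hN
  set L : Matrix (Fin (m+1)) (Fin (m+1)) ℂ := 1 - s • N with hL
  have hLdet : L.det = 1 := by
    have htri : L.BlockTriangular OrderDual.toDual := by
      intro i j hij
      have hij' : (i : ℕ) < (j : ℕ) := hij
      simp only [hL, Matrix.sub_apply, Matrix.smul_apply, Matrix.one_apply, hN,
        Matrix.of_apply, smul_eq_mul]
      rw [if_neg (by omega : ¬(j : ℕ) + 1 = (i : ℕ)), if_neg (by
        intro h; exact absurd (congrArg Fin.val h) (by omega))]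
      ring
    rw [Matrix.det_of_lowerTriangular L htri]
    have : ∀ i : Fin (m+1), L i i = 1 := by
      intro i
      simp only [hL, Matrix.sub_apply, Matrix.smul_apply, Matrix.one_apply_eq, hN,
        Matrix.of_apply, smul_eq_mul]
      rw [if_neg (by omega)]
      ring
    simp [this]
  set H2 : Matrix (Fin (m+1)) (Fin (m+1)) ℂ := Matrix.of fun i j =>
    Fin.cases (H 0 j) (fun i' : Fin m => H i'.succ j - s * H i'.castSucc j) i with hH2
  have hNH : ∀ (i : Fin (m+1)) (j : Fin (m+1)),
      (N * H) i j = Fin.cases (0 : ℂ) (fun i' : Fin m => H i'.castSucc j) i := by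
    intro i j
    rw [Matrix.mul_apply]
    cases i using Fin.cases with
    | zero =>
      rw [Fin.cases_zero]
      apply Finset.sum_eq_zero
      intro t _
      simp [hN]
    | succ i' =>
      rw [Fin.cases_succ]
      rw [Finset.sum_eq_single i'.castSucc]
      · simp [hN]
      · intro t _ ht
        have h0 : N i'.succ t = (0:ℂ) := by
          simp only [hN, Matrix.of_apply]
          rw [if_neg]
          intro hc
          apply ht
          apply Fin.ext
          simp only [Fin.coe_castSucc]
          simp only [Fin.val_succ] at hc
          omega
        rw [h0, zero_mul]
      · intro h
        exact absurd (Finset.mem_univ _) h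
  have hLH : L * H = H2 := by
    ext i j
    have h1 : (L * H) i j = H i j - s * (N * H) i j := by
      rw [hL, Matrix.sub_mul, Matrix.smul_mul, Matrix.one_mul, Matrix.sub_apply,
        Matrix.smul_apply, smul_eq_mul]
    rw [h1, hNH]
    cases i using Fin.cases with
    | zero => simp [hH2]
    | succ i' => simp [hH2]
  have hdet : H.det = H2.det := by
    rw [← hLH, Matrix.det_mul, hLdet, one_mul]
  rw [hdet, Matrix.det_succ_column_zero]
  rw [Finset.sum_eq_single 0]
  · rw [Fin.succAbove_zero]
    have hH200 : H2 0 0 = c := by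
      simp [hH2, hH]
    have hsub : (H2.submatrix Fin.succ Fin.succ)
        = Matrix.of fun i j : Fin m => (μ (k + i + 1) (l + j) - s * μ (k + i) (l + j)) := by
      ext i j
      simp only [Matrix.submatrix_apply, hH2, Matrix.of_apply, Fin.cases_succ, hH]
      simp only [Fin.cases_succ, Fin.val_succ, Fin.coe_castSucc]
      rw [show k + ((i : ℕ) + 1) = k + i + 1 by omega]
    rw [hH200, hsub]
    simp
  · intro i _ hi
    cases i using Fin.cases with
    | zero => exact absurd rfl hi
    | succ i' =>
      have : H2 i'.succ 0 = 0 := by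
        simp only [hH2, Matrix.of_apply, Fin.cases_succ, hH, Fin.cases_zero]
        simp [Fin.val_succ, Fin.coe_castSucc, pow_succ]
        ring
      rw [this]
      ring
  · intro h
    exact absurd (Finset.mem_univ _) h


/-- The bilinear identity (nd2d-toda-1-bilinear):
`τ'^{(k,l)}_{n+1} τ^{(k+1,l)}_n = τ'^{(k,l)}_n τ^{(k+1,l)}_{n+1} - s τ^{(k,l)}_{n+1} τ'^{(k+1,l)}_n`
for the shifted moment determinants, where `μ'_{i,j} = μ_{i+1,j} - s μ_{i,j}`. -/
theorem stmt_8
    (μ : ℕ → ℕ → ℂ) (s : ℂ)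
    (μ' : ℕ → ℕ → ℂ) (hμ' : ∀ i j : ℕ, μ' i j = μ (i + 1) j - s * μ i j)
    (τ τ' : ℕ → ℕ → ℕ → ℂ)
    (hτ : ∀ k l n : ℕ, τ k l n = Matrix.det (Matrix.of fun i j : Fin n => μ (k + i) (l + j)))
    (hτ' : ∀ k l n : ℕ, τ' k l n = Matrix.det (Matrix.of fun i j : Fin n => μ' (k + i) (l + j))) :
    ∀ k l n : ℕ,
      τ' k l (n + 1) * τ (k + 1) l n
        = τ' k l n * τ (k + 1) l (n + 1) - s * (τ k l (n + 1) * τ' (k + 1) l n) := by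
  intro k l n
  classical
  set Htop : Matrix (Fin (n+2)) (Fin (n+2)) ℂ := Matrix.of fun i j =>
    Fin.cases ((1:ℂ) * s ^ (i : ℕ)) (fun j' : Fin (n+1) => μ (k + i) (l + j')) j with hHt
  have hDJ := DJ Htop
  have h1 : Htop.det = τ' k l (n+1) := by
    rw [hHt, redH, one_mul, hτ']
    congr 1
    ext i j
    rw [Matrix.of_apply, Matrix.of_apply, hμ']
  have h2 : (Htop.submatrix (fun i : Fin n => i.succ.castSucc)
      (fun j : Fin n => j.succ.castSucc)).det = τ (k+1) l n := by
    rw [hτ]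
    congr 1
    ext i j
    rw [Matrix.submatrix_apply, hHt, Matrix.of_apply,
      (Fin.succ_castSucc j).symm,
      Fin.cases_succ]
    simp only [Fin.coe_castSucc, Fin.val_succ, Matrix.of_apply]
    rw [show k + ((i : ℕ) + 1) = k + 1 + (i : ℕ) by omega]
  have h3 : (Htop.submatrix Fin.castSucc Fin.castSucc).det = τ' k l n := by
    have hm : Htop.submatrix Fin.castSucc Fin.castSucc
        = Matrix.of (fun i j : Fin (n+1) =>
            Fin.cases ((1:ℂ) * s ^ (i : ℕ)) (fun j' : Fin n => μ (k + i) (l + j')) j) := by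
      ext i j
      cases j using Fin.cases with
      | zero =>
        rw [Matrix.submatrix_apply, Fin.castSucc_zero, hHt, Matrix.of_apply,
          Fin.cases_zero, Matrix.of_apply, Fin.cases_zero, Fin.coe_castSucc]
      | succ j' =>
        rw [Matrix.submatrix_apply, ← Fin.succ_castSucc, hHt, Matrix.of_apply,
          Fin.cases_succ, Matrix.of_apply, Fin.cases_succ, Fin.coe_castSucc, Fin.coe_castSucc]
    rw [hm, redH, one_mul, hτ']
    congr 1
    ext i j
    rw [Matrix.of_apply, Matrix.of_apply, hμ']
  have h4 : (Htop.submatrix Fin.succ Fin.succ).det = τ (k+1) l (n+1) := by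
    rw [hτ]
    congr 1
    ext i j
    rw [Matrix.submatrix_apply, hHt, Matrix.of_apply, Fin.cases_succ, Fin.val_succ]
    rw [show k + ((i : ℕ) + 1) = k + 1 + (i : ℕ) by omega]
    rfl
  have h5 : (Htop.submatrix Fin.castSucc Fin.succ).det = τ k l (n+1) := by
    rw [hτ]
    congr 1
  have h6 : (Htop.submatrix Fin.succ Fin.castSucc).det = s * τ' (k+1) l n := by
    have hm : Htop.submatrix Fin.succ Fin.castSucc
        = Matrix.of (fun i j : Fin (n+1) =>
            Fin.cases (s * s ^ (i : ℕ)) (fun j' : Fin n => μ (k + 1 + i) (l + j')) j) := by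
      ext i j
      cases j using Fin.cases with
      | zero =>
        rw [Matrix.submatrix_apply, Fin.castSucc_zero, hHt, Matrix.of_apply,
          Fin.cases_zero, Matrix.of_apply, Fin.cases_zero, Fin.val_succ, one_mul, pow_succ]
        ring
      | succ j' =>
        rw [Matrix.submatrix_apply, ← Fin.succ_castSucc, hHt, Matrix.of_apply,
          Fin.cases_succ, Matrix.of_apply, Fin.cases_succ, Fin.coe_castSucc, Fin.val_succ]
        rw [show k + ((i : ℕ) + 1) = k + 1 + (i : ℕ) by omega]
    rw [hm, redH, hτ']
    congr 2
    ext i j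
    rw [Matrix.of_apply, Matrix.of_apply, hμ']
  rw [h1, h2, h3, h4, h5, h6] at hDJ
  linear_combination hDJ
end

section
/- Let μ_{i,j} (i, j ≥ 0) be complex numbers and s ∈ ℂ, and set μ'_{i,j} := μ_{i+1,j} − s·μ_{i,j}. For k, l ≥ 0 and n ≥ 0 define τ^{(k,l)}_0 := 1, τ^{(k,l)}_n := det(μ_{k+i, l+j})_{i,j=0}^{n-1}, and τ'^{(k,l)}_0 := 1, τ'^{(k,l)}_n := det(μ'_{k+i, l+j})_{i,j=0}^{n-1}. Then for all k, l ≥ 0 and n ≥ 0 the bilinear identity τ^{(k,l)}_{n+1} · τ'^{(k,l+1)}_{n+1} = τ'^{(k,l)}_{n+1} · τ^{(k,l+1)}_{n+1} + τ^{(k,l)}_{n+2} · τ'^{(k,l+1)}_n holds. -/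
open Matrix Equiv

-- pointwise rotation fact
lemma toda_cons_rot {α : Type*} {N : ℕ} (g : Fin N → α) (y : α) (a : Fin (N + 1)) :
    (Fin.cons y g : Fin (N + 1) → α) (finRotate (N + 1) a)
      = (Fin.snoc g y : Fin (N + 1) → α) a := by
  induction a using Fin.lastCases with
  | last => rw [finRotate_last]; simp
  | cast i =>
      rw [finRotate_succ_apply, Fin.coeSucc_eq_succ]
      simp

lemma toda_cons_rot' {α : Type*} {N : ℕ} (g : Fin N → α) (y : α) (a : Fin (N + 1)) :
    (Fin.snoc g y : Fin (N + 1) → α) ((finRotate (N + 1))⁻¹ a)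
      = (Fin.cons y g : Fin (N + 1) → α) a := by
  have := toda_cons_rot g y ((finRotate (N + 1))⁻¹ a)
  rw [← Equiv.Perm.mul_apply, mul_inv_cancel, Equiv.Perm.one_apply] at this
  exact this.symm

lemma toda_neg_pow_sq (N : ℕ) : ((-1 : ℂ) ^ N) * ((-1 : ℂ) ^ N) = 1 := by
  rw [← pow_add, ← two_mul, pow_mul]; norm_num

-- aux1
lemma toda_det_snoc {N : ℕ} (g : Fin N → Fin (N + 1) → ℂ) (y : Fin (N + 1) → ℂ) :
    Matrix.det (Matrix.of fun a b => (Fin.snoc g y : Fin (N + 1) → Fin (N + 1) → ℂ) a b)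
      = (-1) ^ N
        * Matrix.det (Matrix.of fun a b => (Fin.cons y g : Fin (N + 1) → Fin (N + 1) → ℂ) a b) := by
  have hmat : (Matrix.of fun a b => (Fin.snoc g y : Fin (N + 1) → Fin (N + 1) → ℂ) a b).submatrix
      (⇑((finRotate (N + 1))⁻¹ : Equiv.Perm (Fin (N + 1)))) id
      = Matrix.of fun a b => (Fin.cons y g : Fin (N + 1) → Fin (N + 1) → ℂ) a b := by
    ext a b
    simp only [Matrix.submatrix_apply, Matrix.of_apply, id]
    rw [toda_cons_rot']
  have h := Matrix.det_permute ((finRotate (N + 1))⁻¹)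
    (Matrix.of fun a b => (Fin.snoc g y : Fin (N + 1) → Fin (N + 1) → ℂ) a b)
  rw [hmat] at h
  have hs : ((Equiv.Perm.sign ((finRotate (N + 1))⁻¹) : ℤ) : ℂ) = (-1) ^ N := by
    rw [map_inv, sign_finRotate]
    simp
  rw [hs] at h
  rw [h, ← mul_assoc, toda_neg_pow_sq, one_mul]

-- aux2
lemma toda_det_cons_snoc {N : ℕ} (x y : Fin (N + 2) → ℂ) (w : Fin N → Fin (N + 2) → ℂ) :
    Matrix.det (Matrix.of fun a b =>
        (Fin.cons x (Fin.snoc w y) : Fin (N + 2) → Fin (N + 2) → ℂ) a b)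
      = (-1) ^ N * Matrix.det (Matrix.of fun a b =>
        (Fin.cons x (Fin.cons y w) : Fin (N + 2) → Fin (N + 2) → ℂ) a b) := by
  set σ' : Equiv.Perm (Fin (N + 2)) :=
    Equiv.Perm.decomposeFin.symm (0, (finRotate (N + 1))⁻¹) with hσ'
  have hmat : (Matrix.of fun a b =>
      (Fin.cons x (Fin.snoc w y) : Fin (N + 2) → Fin (N + 2) → ℂ) a b).submatrix (⇑σ') id
      = Matrix.of fun a b =>
        (Fin.cons x (Fin.cons y w) : Fin (N + 2) → Fin (N + 2) → ℂ) a b := by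
    ext a b
    simp only [Matrix.submatrix_apply, Matrix.of_apply, id]
    induction a using Fin.cases with
    | zero => rw [hσ', Equiv.Perm.decomposeFin_symm_apply_zero]; simp
    | succ i =>
        rw [hσ', Equiv.Perm.decomposeFin_symm_apply_succ]
        simp only [Equiv.swap_self, Equiv.refl_apply, Fin.succAbove_zero,
          Fin.cons_succ]
        rw [toda_cons_rot']
  have h := Matrix.det_permute σ'
    (Matrix.of fun a b => (Fin.cons x (Fin.snoc w y) : Fin (N + 2) → Fin (N + 2) → ℂ) a b)
  rw [hmat] at h
  have hs : ((Equiv.Perm.sign σ' : ℤ) : ℂ) = (-1) ^ N := by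
    rw [hσ', Equiv.Perm.decomposeFin.symm_sign, if_pos rfl, one_mul, map_inv, sign_finRotate]
    simp
  rw [hs] at h
  rw [h, ← mul_assoc, toda_neg_pow_sq, one_mul]

-- aux3 : swap
lemma toda_det_swap {N : ℕ} (x y : Fin (N + 2) → ℂ) (w : Fin N → Fin (N + 2) → ℂ) :
    Matrix.det (Matrix.of fun a b =>
        (Fin.cons y (Fin.cons x w) : Fin (N + 2) → Fin (N + 2) → ℂ) a b)
      = - Matrix.det (Matrix.of fun a b =>
        (Fin.cons x (Fin.cons y w) : Fin (N + 2) → Fin (N + 2) → ℂ) a b) := by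
  have h01 : (0 : Fin (N + 2)) ≠ 1 := by
    intro h
    exact absurd (congrArg Fin.val h) (by norm_num)
  set σ : Equiv.Perm (Fin (N + 2)) := Equiv.swap 0 1 with hσ
  have hmat : (Matrix.of fun a b =>
      (Fin.cons x (Fin.cons y w) : Fin (N + 2) → Fin (N + 2) → ℂ) a b).submatrix (⇑σ) id
      = Matrix.of fun a b =>
        (Fin.cons y (Fin.cons x w) : Fin (N + 2) → Fin (N + 2) → ℂ) a b := by
    ext a b
    simp only [Matrix.submatrix_apply, Matrix.of_apply, id]
    induction a using Fin.cases with
    | zero =>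
        rw [hσ, Equiv.swap_apply_left, ← Fin.succ_zero_eq_one, Fin.cons_succ,
          Fin.cons_zero, Fin.cons_zero]
    | succ i =>
        induction i using Fin.cases with
        | zero =>
            rw [hσ, Fin.succ_zero_eq_one, Equiv.swap_apply_right]
            simp
        | succ j =>
            rw [hσ, Equiv.swap_apply_of_ne_of_ne (Fin.succ_ne_zero _)
              (by
                intro h
                exact absurd (congrArg Fin.val h) (by simp))]
            simp
  have h := Matrix.det_permute σ
    (Matrix.of fun a b => (Fin.cons x (Fin.cons y w) : Fin (N + 2) → Fin (N + 2) → ℂ) a b)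
  rw [hmat] at h
  have hs : ((Equiv.Perm.sign σ : ℤ) : ℂ) = -1 := by
    rw [hσ, Equiv.Perm.sign_swap h01]
    simp
  rw [hs] at h
  rw [h]; ring

-- aux4 : e-row reduction
lemma toda_det_last_row {N : ℕ} (M : Matrix (Fin (N + 1)) (Fin (N + 1)) ℂ)
    (h : ∀ b, M (Fin.last N) b = if b = Fin.last N then 1 else 0) :
    Matrix.det M = Matrix.det (M.submatrix Fin.castSucc Fin.castSucc) := by
  rw [Matrix.det_succ_row M (Fin.last N)]
  rw [Finset.sum_eq_single (Fin.last N)]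
  · rw [h, if_pos rfl, Fin.succAbove_last, Fin.val_last]
    have : ((-1 : ℂ)) ^ (N + N) = 1 := Even.neg_one_pow ⟨N, rfl⟩
    rw [this]
    simp
  · intro b _ hb
    rw [h, if_neg hb]
    ring
  · intro hn
    exact absurd (Finset.mem_univ _) hn

-- aux5 : syzygy
lemma toda_syzygy {N : ℕ} (v : Fin (N + 1) → Fin N → ℂ) (b : Fin N) :
    ∑ c : Fin (N + 1),
      ((-1) ^ (c : ℕ) * Matrix.det (Matrix.of fun a b' => v (c.succAbove a) b')) * v c b
      = 0 := by
  set A : Matrix (Fin (N + 1)) (Fin (N + 1)) ℂ :=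
    Matrix.of fun a c =>
      (Fin.cons (fun c' => v c' b) (fun a' c' => v c' a') : Fin (N + 1) → Fin (N + 1) → ℂ) a c
    with hA
  have hA0 : Matrix.det A = 0 := by
    refine Matrix.det_zero_of_row_eq (i := 0) (j := b.succ) (Fin.succ_ne_zero b).symm ?_
    funext c
    rw [hA]
    simp
  have h2 : Matrix.det A = ∑ c : Fin (N + 1),
      ((-1) ^ (c : ℕ) * Matrix.det (Matrix.of fun a b' => v (c.succAbove a) b')) * v c b := by
    rw [Matrix.det_succ_row_zero A]
    refine Finset.sum_congr rfl fun c _ => ?_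
    have e1 : A 0 c = v c b := by rw [hA]; simp
    have e2 : A.submatrix Fin.succ c.succAbove
        = (Matrix.of fun a b' => v (c.succAbove a) b')ᵀ := by
      ext a' c'
      rw [hA]
      simp
    rw [e1, e2, Matrix.det_transpose]
    ring
  rw [← h2, hA0]

-- aux6 : Plücker relation
lemma toda_plucker {N : ℕ} (w : Fin N → Fin (N + 2) → ℂ) (va vb vc vd : Fin (N + 2) → ℂ) :
    Matrix.det (Matrix.of fun a b =>
        (Fin.cons va (Fin.cons vc w) : Fin (N + 2) → Fin (N + 2) → ℂ) a b)
      * Matrix.det (Matrix.of fun a b =>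
        (Fin.cons vb (Fin.cons vd w) : Fin (N + 2) → Fin (N + 2) → ℂ) a b)
      = Matrix.det (Matrix.of fun a b =>
          (Fin.cons va (Fin.cons vb w) : Fin (N + 2) → Fin (N + 2) → ℂ) a b)
        * Matrix.det (Matrix.of fun a b =>
          (Fin.cons vc (Fin.cons vd w) : Fin (N + 2) → Fin (N + 2) → ℂ) a b)
      + Matrix.det (Matrix.of fun a b =>
          (Fin.cons va (Fin.cons vd w) : Fin (N + 2) → Fin (N + 2) → ℂ) a b)
        * Matrix.det (Matrix.of fun a b =>
          (Fin.cons vb (Fin.cons vc w) : Fin (N + 2) → Fin (N + 2) → ℂ) a b) := by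
  classical
  set v : Fin (N + 3) → Fin (N + 2) → ℂ :=
    Fin.cons vb (Fin.cons vc (Fin.cons vd w)) with hv
  set coeff : Fin (N + 3) → ℂ := fun c =>
    (-1) ^ (c : ℕ) * Matrix.det (Matrix.of fun a b' => v (c.succAbove a) b') with hcoeff
  -- E as abbreviation
  set E : (Fin (N + 2) → ℂ) → (Fin (N + 2) → ℂ) → ℂ := fun x y =>
    Matrix.det (Matrix.of fun a b =>
      (Fin.cons x (Fin.cons y w) : Fin (N + 2) → Fin (N + 2) → ℂ) a b) with hE
  -- update form
  have hupd : ∀ u : Fin (N + 2) → ℂ,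
      Function.update (Fin.cons va (Fin.cons (0 : Fin (N + 2) → ℂ) w) :
        Fin (N + 2) → Fin (N + 2) → ℂ) 1 u
      = (Fin.cons va (Fin.cons u w) : Fin (N + 2) → Fin (N + 2) → ℂ) := by
    intro u
    funext a
    induction a using Fin.cases with
    | zero =>
        rw [Function.update_of_ne (by
          intro h
          exact absurd (congrArg Fin.val h) (by norm_num))]
        simp
    | succ i =>
        induction i using Fin.cases with
        | zero =>
            rw [Fin.succ_zero_eq_one, Function.update_self]
            rw [← Fin.succ_zero_eq_one, Fin.cons_succ, Fin.cons_zero]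
        | succ j =>
            rw [Function.update_of_ne (by
              intro h
              exact absurd (congrArg Fin.val h) (by simp))]
            rw [Fin.cons_succ, Fin.cons_succ, Fin.cons_succ, Fin.cons_succ]
  -- E va u = detRowAlternating applied to update form
  have hEdet : ∀ u : Fin (N + 2) → ℂ,
      E va u = Matrix.detRowAlternating
        (Function.update (Fin.cons va (Fin.cons (0 : Fin (N + 2) → ℂ) w) :
          Fin (N + 2) → Fin (N + 2) → ℂ) 1 u) := by
    intro u
    rw [hupd u, hE]
    rfl
  -- key summation
  have key : ∑ c : Fin (N + 3), coeff c * E va (v c) = 0 := by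
    have h1 : ∀ c : Fin (N + 3), coeff c * E va (v c)
        = Matrix.detRowAlternating (Function.update
            (Fin.cons va (Fin.cons (0 : Fin (N + 2) → ℂ) w) :
              Fin (N + 2) → Fin (N + 2) → ℂ) 1 (coeff c • v c)) := by
      intro c
      rw [AlternatingMap.map_update_smul, ← hEdet (v c), smul_eq_mul]
    rw [Finset.sum_congr rfl fun c _ => h1 c]
    rw [← AlternatingMap.map_update_sum]
    have h0 : (∑ c : Fin (N + 3), coeff c • v c) = 0 := by
      funext b'
      rw [Finset.sum_apply]
      simpa using toda_syzygy v b'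
    rw [h0, AlternatingMap.map_update_zero]
  -- values of v at small indices
  have hv0 : v 0 = vb := by rw [hv]; simp
  have hv1 : v (Fin.succ (0 : Fin (N + 2))) = vc := by rw [hv]; simp
  have hv2 : v (Fin.succ (Fin.succ (0 : Fin (N + 1)))) = vd := by
    rw [hv, Fin.cons_succ, Fin.cons_succ, Fin.cons_zero]
  have hvw : ∀ i : Fin N, v (Fin.succ (Fin.succ (Fin.succ i))) = w i := by
    intro i; rw [hv]; simp
  have hs0 : ∀ a : Fin (N + 2), v ((0 : Fin (N + 3)).succAbove a)
      = (Fin.cons vc (Fin.cons vd w) : Fin (N + 2) → Fin (N + 2) → ℂ) a := by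
    intro a
    rw [Fin.zero_succAbove, hv, Fin.cons_succ]
  have hd0 : Matrix.det (Matrix.of fun a b' => v ((0 : Fin (N + 3)).succAbove a) b')
      = E vc vd := by
    have hm : (Matrix.of fun (a b' : Fin (N + 2)) => v ((0 : Fin (N + 3)).succAbove a) b')
        = Matrix.of fun a b =>
          (Fin.cons vc (Fin.cons vd w) : Fin (N + 2) → Fin (N + 2) → ℂ) a b := by
      ext a b
      simp only [Matrix.of_apply]
      rw [hs0]
    rw [hm, hE]
  have hs1 : ∀ a : Fin (N + 2), v ((Fin.succ (0 : Fin (N + 2))).succAbove a)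
      = (Fin.cons vb (Fin.cons vd w) : Fin (N + 2) → Fin (N + 2) → ℂ) a := by
    intro a
    induction a using Fin.cases with
    | zero => rw [Fin.succ_succAbove_zero, hv0]; simp
    | succ i =>
        rw [Fin.succ_succAbove_succ, Fin.zero_succAbove, hv]
        simp
  have hd1 : Matrix.det (Matrix.of fun a b' => v ((Fin.succ (0 : Fin (N + 2))).succAbove a) b')
      = E vb vd := by
    have hm : (Matrix.of fun (a b' : Fin (N + 2)) => v ((Fin.succ (0 : Fin (N + 2))).succAbove a) b')
        = Matrix.of fun a b =>
          (Fin.cons vb (Fin.cons vd w) : Fin (N + 2) → Fin (N + 2) → ℂ) a b := by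
      ext a b
      simp only [Matrix.of_apply]
      rw [hs1]
    rw [hm, hE]
  have hs2 : ∀ a : Fin (N + 2), v ((Fin.succ (Fin.succ (0 : Fin (N + 1)))).succAbove a)
      = (Fin.cons vb (Fin.cons vc w) : Fin (N + 2) → Fin (N + 2) → ℂ) a := by
    intro a
    induction a using Fin.cases with
    | zero => rw [Fin.succ_succAbove_zero, hv0]; simp
    | succ i =>
        rw [Fin.succ_succAbove_succ]
        induction i using Fin.cases with
        | zero => rw [Fin.succ_succAbove_zero, hv1]; simp
        | succ j =>
            rw [Fin.succ_succAbove_succ, Fin.zero_succAbove, hv]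
            simp
  have hd2 : Matrix.det (Matrix.of fun a b' => v ((Fin.succ (Fin.succ (0 : Fin (N + 1)))).succAbove a) b')
      = E vb vc := by
    have hm : (Matrix.of fun (a b' : Fin (N + 2)) => v ((Fin.succ (Fin.succ (0 : Fin (N + 1)))).succAbove a) b')
        = Matrix.of fun a b =>
          (Fin.cons vb (Fin.cons vc w) : Fin (N + 2) → Fin (N + 2) → ℂ) a b := by
      ext a b
      simp only [Matrix.of_apply]
      rw [hs2]
    rw [hm, hE]
  have hEw : ∀ i : Fin N, E va (w i) = 0 := by
    intro i
    rw [hE]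
    refine Matrix.det_zero_of_row_eq (i := Fin.succ (0 : Fin (N + 1)))
      (j := Fin.succ (Fin.succ i)) ?_ ?_
    · intro h
      have := congrArg Fin.val h
      simp [Fin.val_succ] at this
    · funext b'
      simp
  rw [Fin.sum_univ_succ, Fin.sum_univ_succ, Fin.sum_univ_succ, hcoeff] at key
  simp only [hv0, hv1, hv2, hvw, hd0, hd1, hd2] at key
  simp only [hEw, mul_zero, Finset.sum_const_zero, add_zero] at key
  simp only [Fin.val_zero, Fin.val_succ, pow_zero, pow_succ, pow_one, one_mul] at key
  simp only [hE] at key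
  linear_combination -key

-- aux7 : s-powers row trick (row orientation)
lemma toda_strick (μ μ' : ℕ → ℕ → ℂ) (s : ℂ)
    (hμ' : ∀ i j : ℕ, μ' i j = μ (i + 1) j - s * μ i j) (k l m : ℕ) :
    Matrix.det (Matrix.of fun a b : Fin (m + 1) =>
        (Fin.cons (fun b' : Fin (m + 1) => s ^ (b' : ℕ))
          (fun a' (b' : Fin (m + 1)) => μ (k + b') (l + a')) :
            Fin (m + 1) → Fin (m + 1) → ℂ) a b)
      = Matrix.det (Matrix.of fun a b : Fin m => μ' (k + b) (l + a)) := by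
  classical
  set A : Matrix (Fin (m + 1)) (Fin (m + 1)) ℂ :=
    Matrix.of fun a b =>
      (Fin.cons (fun b' : Fin (m + 1) => s ^ (b' : ℕ))
        (fun a' (b' : Fin (m + 1)) => μ (k + b') (l + a')) :
          Fin (m + 1) → Fin (m + 1) → ℂ) a b with hA
  set T : Matrix (Fin (m + 1)) (Fin (m + 1)) ℂ :=
    Matrix.of fun c b => if c = b then 1 else if (c : ℕ) + 1 = (b : ℕ) then -s else 0 with hT
  have hTdet : Matrix.det T = 1 := by
    rw [Matrix.det_of_upperTriangular (h := ?_)]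
    · rw [hT]; simp
    · intro c b hlt
      have hcb : (b : ℕ) < (c : ℕ) := hlt
      rw [hT]
      simp only [Matrix.of_apply]
      rw [if_neg (by intro h; subst h; exact lt_irrefl _ hcb), if_neg (by omega)]
  -- entries of A * T
  have hAT0 : ∀ a, (A * T) a 0 = A a 0 := by
    intro a
    rw [Matrix.mul_apply]
    rw [Finset.sum_eq_single 0]
    · rw [hT]; simp
    · intro c _ hc
      rw [hT]
      simp only [Matrix.of_apply]
      rw [if_neg hc, if_neg (by simp), mul_zero]
    · intro h; exact absurd (Finset.mem_univ _) h
  have hATs : ∀ a (b : Fin m), (A * T) a b.succ = A a b.succ - s * A a b.castSucc := by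
    intro a b
    rw [Matrix.mul_apply]
    have hvs : ((b.succ : Fin (m + 1)) : ℕ) = (b : ℕ) + 1 := by simp
    have hvc : ((b.castSucc : Fin (m + 1)) : ℕ) = (b : ℕ) := by simp
    have he1 : (c : Fin (m + 1)) → (c = b.succ ↔ ((c : ℕ) = (b : ℕ) + 1)) := by
      intro c; rw [Fin.ext_iff, hvs]
    have he2 : (c : Fin (m + 1)) → (c = b.castSucc ↔ ((c : ℕ) = (b : ℕ))) := by
      intro c; rw [Fin.ext_iff, hvc]
    have hsplit : ∀ c : Fin (m + 1), A a c * T c b.succ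
        = (if c = b.succ then A a c else 0) + (if c = b.castSucc then -s * A a c else 0) := by
      intro c
      rw [hT]
      simp only [Matrix.of_apply]
      by_cases hc1 : (c : ℕ) = (b : ℕ) + 1
      · rw [if_pos ((he1 c).mpr hc1), if_pos ((he1 c).mpr hc1),
          if_neg (by rw [he2 c]; omega)]
        ring
      · by_cases hc2 : (c : ℕ) = (b : ℕ)
        · rw [if_neg (by rw [he1 c]; omega), if_pos (by rw [hvs]; omega),
            if_neg (by rw [he1 c]; omega), if_pos ((he2 c).mpr hc2)]
          ring
        · rw [if_neg (by rw [he1 c]; omega), if_neg (by rw [hvs]; omega),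
            if_neg (by rw [he1 c]; omega), if_neg (by rw [he2 c]; omega)]
          ring
    rw [Finset.sum_congr rfl fun c _ => hsplit c, Finset.sum_add_distrib,
      Finset.sum_ite_eq' Finset.univ b.succ (fun c => A a c),
      Finset.sum_ite_eq' Finset.univ b.castSucc (fun c => -s * A a c)]
    simp only [Finset.mem_univ, if_pos]
    ring
  have hdet : Matrix.det A = Matrix.det (A * T) := by
    rw [Matrix.det_mul, hTdet, mul_one]
  rw [hdet, Matrix.det_succ_row_zero]
  rw [Finset.sum_eq_single 0]
  · have h00 : (A * T) 0 0 = 1 := by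
      rw [hAT0, hA]; simp
    rw [h00]
    simp only [Fin.val_zero, pow_zero, one_mul, mul_one]
    congr 1
    ext a b
    simp only [Matrix.submatrix_apply, Fin.succAbove_zero, Matrix.of_apply]
    rw [hATs, hA]
    simp only [Matrix.of_apply, Fin.cons_succ]
    rw [hμ' (k + (b : ℕ)) (l + (a : ℕ))]
    have e1 : ((b.succ : Fin (m + 1)) : ℕ) = (b : ℕ) + 1 := by simp [Fin.val_succ]
    have e2 : ((b.castSucc : Fin (m + 1)) : ℕ) = (b : ℕ) := by simp
    rw [e1, e2, ← Nat.add_assoc]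
  · intro b _ hb
    have h0b : (A * T) 0 b = 0 := by
      rcases Fin.eq_zero_or_eq_succ b with h | ⟨b', rfl⟩
      · exact absurd h hb
      · rw [hATs, hA]
        simp only [Matrix.of_apply, Fin.cons_zero]
        rw [show ((b'.succ : Fin (m + 1)) : ℕ) = (b' : ℕ) + 1 by simp [Fin.val_succ],
          show ((b'.castSucc : Fin (m + 1)) : ℕ) = (b' : ℕ) by simp]
        rw [pow_succ]
        ring
    rw [h0b]
    ring
  · intro h; exact absurd (Finset.mem_univ _) h

lemma toda_det_t {m : ℕ} (f : Fin m → Fin m → ℂ) :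
    Matrix.det (Matrix.of fun i j => f i j) = Matrix.det (Matrix.of fun i j => f j i) := by
  have h2 : (Matrix.of fun i j => f j i) = (Matrix.of fun i j => f i j)ᵀ := rfl
  rw [h2, Matrix.det_transpose]

/-- The bilinear identity underlying equations (nd2d-toda-2):
`τ^{(k,l)}_{n+1} τ'^{(k,l+1)}_{n+1} = τ'^{(k,l)}_{n+1} τ^{(k,l+1)}_{n+1} + τ^{(k,l)}_{n+2} τ'^{(k,l+1)}_n`
for the shifted moment determinants, where `μ'_{i,j} = μ_{i+1,j} - s μ_{i,j}`. -/
theorem stmt_9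
    (μ : ℕ → ℕ → ℂ) (s : ℂ)
    (μ' : ℕ → ℕ → ℂ) (hμ' : ∀ i j : ℕ, μ' i j = μ (i + 1) j - s * μ i j)
    (τ τ' : ℕ → ℕ → ℕ → ℂ)
    (hτ : ∀ k l n : ℕ, τ k l n = Matrix.det (Matrix.of fun i j : Fin n => μ (k + i) (l + j)))
    (hτ' : ∀ k l n : ℕ, τ' k l n = Matrix.det (Matrix.of fun i j : Fin n => μ' (k + i) (l + j))) :
    ∀ k l n : ℕ,
      τ k l (n + 1) * τ' k (l + 1) (n + 1)
        = τ' k l (n + 1) * τ k (l + 1) (n + 1) + τ k l (n + 2) * τ' k (l + 1) n := by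
  intro k l n
  -- row forms of τ and τ'
  have htau : ∀ (l' m : ℕ), τ k l' m
      = Matrix.det (Matrix.of fun a b : Fin m => μ (k + b) (l' + a)) := by
    intro l' m
    rw [hτ]
    exact toda_det_t (fun i j => μ (k + i) (l' + j))
  have htau' : ∀ (l' m : ℕ), τ' k l' m
      = Matrix.det (Matrix.of fun a b : Fin m => μ' (k + b) (l' + a)) := by
    intro l' m
    rw [hτ']
    exact toda_det_t (fun i j => μ' (k + i) (l' + j))
  -- the vectors
  set w : Fin n → Fin (n + 2) → ℂ := fun j b => μ (k + b) (l + 1 + j) with hw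
  set c0 : Fin (n + 2) → ℂ := fun b => μ (k + b) l with hc0
  set cl : Fin (n + 2) → ℂ := fun b => μ (k + b) (l + (n + 1)) with hcl
  set pp : Fin (n + 2) → ℂ := fun b => s ^ (b : ℕ) with hpp
  set ee : Fin (n + 2) → ℂ := fun b => if b = Fin.last (n + 1) then 1 else 0 with hee
  -- T1 : τ k l (n+1)
  have T1 : τ k l (n + 1) = (-1) ^ n * Matrix.det (Matrix.of fun a b =>
      (Fin.cons c0 (Fin.cons ee w) : Fin (n + 2) → Fin (n + 2) → ℂ) a b) := by
    have hlast : ∀ b, (Matrix.of fun a b =>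
        (Fin.cons c0 (Fin.snoc w ee) : Fin (n + 2) → Fin (n + 2) → ℂ) a b) (Fin.last (n + 1)) b
        = if b = Fin.last (n + 1) then 1 else 0 := by
      intro b
      simp only [Matrix.of_apply]
      rw [← Fin.succ_last, Fin.cons_succ, Fin.snoc_last, hee, Fin.succ_last]
    have hsub : (Matrix.of fun a b =>
        (Fin.cons c0 (Fin.snoc w ee) : Fin (n + 2) → Fin (n + 2) → ℂ) a b).submatrix
          Fin.castSucc Fin.castSucc
        = Matrix.of fun a b : Fin (n + 1) => μ (k + b) (l + a) := by
      ext a b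
      simp only [Matrix.submatrix_apply, Matrix.of_apply]
      induction a using Fin.cases with
      | zero => rw [Fin.castSucc_zero, Fin.cons_zero, hc0]; simp
      | succ a' =>
          rw [← Fin.succ_castSucc, Fin.cons_succ, Fin.snoc_castSucc, hw]
          simp only [Fin.coe_castSucc, Fin.val_succ]
          rw [show l + 1 + (a' : ℕ) = l + ((a' : ℕ) + 1) by omega]
    rw [htau l (n + 1), ← hsub, ← toda_det_last_row _ hlast, toda_det_cons_snoc]
  -- T5 : τ k l (n+2)
  have T5 : τ k l (n + 2) = (-1) ^ n * Matrix.det (Matrix.of fun a b =>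
      (Fin.cons c0 (Fin.cons cl w) : Fin (n + 2) → Fin (n + 2) → ℂ) a b) := by
    have hm : (Matrix.of fun a b : Fin (n + 2) => μ (k + b) (l + a))
        = Matrix.of fun a b =>
          (Fin.cons c0 (Fin.snoc w cl) : Fin (n + 2) → Fin (n + 2) → ℂ) a b := by
      ext a b
      simp only [Matrix.of_apply]
      induction a using Fin.cases with
      | zero => rw [Fin.cons_zero, hc0]; simp
      | succ a' =>
          rw [Fin.cons_succ]
          induction a' using Fin.lastCases with
          | last => rw [Fin.snoc_last, hcl]; simp
          | cast a'' =>
              rw [Fin.snoc_castSucc, hw]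
              simp only [Fin.val_succ, Fin.coe_castSucc]
              rw [show l + ((a'' : ℕ) + 1) = l + 1 + (a'' : ℕ) by omega]
    rw [htau l (n + 2), hm, toda_det_cons_snoc]
  -- T4 : τ k (l+1) (n+1)
  have T4 : τ k (l + 1) (n + 1) = - Matrix.det (Matrix.of fun a b =>
      (Fin.cons ee (Fin.cons cl w) : Fin (n + 2) → Fin (n + 2) → ℂ) a b) := by
    have hlast : ∀ b, (Matrix.of fun a b =>
        (Fin.snoc (Fin.snoc w cl) ee : Fin (n + 2) → Fin (n + 2) → ℂ) a b) (Fin.last (n + 1)) b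
        = if b = Fin.last (n + 1) then 1 else 0 := by
      intro b
      simp only [Matrix.of_apply]
      rw [Fin.snoc_last, hee]
    have hsub : (Matrix.of fun a b =>
        (Fin.snoc (Fin.snoc w cl) ee : Fin (n + 2) → Fin (n + 2) → ℂ) a b).submatrix
          Fin.castSucc Fin.castSucc
        = Matrix.of fun a b : Fin (n + 1) => μ (k + b) ((l + 1) + a) := by
      ext a b
      simp only [Matrix.submatrix_apply, Matrix.of_apply]
      rw [Fin.snoc_castSucc]
      induction a using Fin.lastCases with
      | last =>
          rw [Fin.snoc_last, hcl]
          simp only [Fin.val_last, Fin.coe_castSucc]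
          rw [show l + ((n : ℕ) + 1) = l + 1 + n by omega]
      | cast a'' =>
          rw [Fin.snoc_castSucc, hw]
          simp only [Fin.coe_castSucc]
    have hrot : Matrix.det (Matrix.of fun a b =>
        (Fin.snoc (Fin.snoc w cl) ee : Fin (n + 2) → Fin (n + 2) → ℂ) a b)
        = (-1) ^ (n + 1) * Matrix.det (Matrix.of fun a b =>
          (Fin.cons ee (Fin.snoc w cl) : Fin (n + 2) → Fin (n + 2) → ℂ) a b) :=
      toda_det_snoc (Fin.snoc w cl) ee
    have hcoef : ((-1 : ℂ)) ^ (n + 1) * (-1) ^ n = -1 := by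
      have := toda_neg_pow_sq n
      ring_nf
      ring_nf at this
      linear_combination -this
    rw [htau (l + 1) (n + 1), ← hsub, ← toda_det_last_row _ hlast, hrot,
      toda_det_cons_snoc, ← mul_assoc, hcoef]
    ring
  -- T3 : τ' k l (n+1)
  have T3 : τ' k l (n + 1) = Matrix.det (Matrix.of fun a b =>
      (Fin.cons pp (Fin.cons c0 w) : Fin (n + 2) → Fin (n + 2) → ℂ) a b) := by
    have hm : (Matrix.of fun a b : Fin (n + 2) =>
        (Fin.cons (fun b' : Fin (n + 2) => s ^ (b' : ℕ))
          (fun a' (b' : Fin (n + 2)) => μ (k + b') (l + a')) :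
            Fin (n + 2) → Fin (n + 2) → ℂ) a b)
        = Matrix.of fun a b =>
          (Fin.cons pp (Fin.cons c0 w) : Fin (n + 2) → Fin (n + 2) → ℂ) a b := by
      ext a b
      simp only [Matrix.of_apply]
      induction a using Fin.cases with
      | zero => rw [Fin.cons_zero, Fin.cons_zero, hpp]
      | succ a' =>
          rw [Fin.cons_succ, Fin.cons_succ]
          induction a' using Fin.cases with
          | zero => rw [Fin.cons_zero, hc0]; simp
          | succ a'' =>
              rw [Fin.cons_succ, hw]
              simp only [Fin.val_succ]
              rw [show l + ((a'' : ℕ) + 1) = l + 1 + (a'' : ℕ) by omega]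
    rw [htau' l (n + 1), ← toda_strick μ μ' s hμ' k l (n + 1), hm]
  -- T2 : τ' k (l+1) (n+1)
  have T2 : τ' k (l + 1) (n + 1) = (-1) ^ n * Matrix.det (Matrix.of fun a b =>
      (Fin.cons pp (Fin.cons cl w) : Fin (n + 2) → Fin (n + 2) → ℂ) a b) := by
    have hm : (Matrix.of fun a b : Fin (n + 2) =>
        (Fin.cons (fun b' : Fin (n + 2) => s ^ (b' : ℕ))
          (fun a' (b' : Fin (n + 2)) => μ (k + b') ((l + 1) + a')) :
            Fin (n + 2) → Fin (n + 2) → ℂ) a b)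
        = Matrix.of fun a b =>
          (Fin.cons pp (Fin.snoc w cl) : Fin (n + 2) → Fin (n + 2) → ℂ) a b := by
      ext a b
      simp only [Matrix.of_apply]
      induction a using Fin.cases with
      | zero => rw [Fin.cons_zero, Fin.cons_zero, hpp]
      | succ a' =>
          rw [Fin.cons_succ, Fin.cons_succ]
          induction a' using Fin.lastCases with
          | last =>
              rw [Fin.snoc_last, hcl]
              simp only [Fin.val_last]
              rw [show l + 1 + (n : ℕ) = l + ((n : ℕ) + 1) by omega]
          | cast a'' =>
              rw [Fin.snoc_castSucc, hw]
              simp only [Fin.coe_castSucc]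
    rw [htau' (l + 1) (n + 1), ← toda_strick μ μ' s hμ' k (l + 1) (n + 1), hm,
      toda_det_cons_snoc]
  -- T6 : τ' k (l+1) n
  have T6 : τ' k (l + 1) n = (-1) ^ n * Matrix.det (Matrix.of fun a b =>
      (Fin.cons pp (Fin.cons ee w) : Fin (n + 2) → Fin (n + 2) → ℂ) a b) := by
    have hlast : ∀ b, (Matrix.of fun a b =>
        (Fin.cons pp (Fin.snoc w ee) : Fin (n + 2) → Fin (n + 2) → ℂ) a b) (Fin.last (n + 1)) b
        = if b = Fin.last (n + 1) then 1 else 0 := by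
      intro b
      simp only [Matrix.of_apply]
      rw [← Fin.succ_last, Fin.cons_succ, Fin.snoc_last, hee, Fin.succ_last]
    have hsub : (Matrix.of fun a b =>
        (Fin.cons pp (Fin.snoc w ee) : Fin (n + 2) → Fin (n + 2) → ℂ) a b).submatrix
          Fin.castSucc Fin.castSucc
        = Matrix.of fun a b : Fin (n + 1) =>
          (Fin.cons (fun b' : Fin (n + 1) => s ^ (b' : ℕ))
            (fun a' (b' : Fin (n + 1)) => μ (k + b') ((l + 1) + a')) :
              Fin (n + 1) → Fin (n + 1) → ℂ) a b := by
      ext a b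
      simp only [Matrix.submatrix_apply, Matrix.of_apply]
      induction a using Fin.cases with
      | zero =>
          rw [Fin.castSucc_zero, Fin.cons_zero, Fin.cons_zero, hpp]
          simp
      | succ a' =>
          rw [← Fin.succ_castSucc, Fin.cons_succ, Fin.cons_succ, Fin.snoc_castSucc, hw]
          simp only [Fin.coe_castSucc]
    rw [htau' (l + 1) n, ← toda_strick μ μ' s hμ' k (l + 1) n, ← hsub,
      ← toda_det_last_row _ hlast, toda_det_cons_snoc]
  -- swap
  have hsw : Matrix.det (Matrix.of fun a b =>
      (Fin.cons pp (Fin.cons c0 w) : Fin (n + 2) → Fin (n + 2) → ℂ) a b)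
      = - Matrix.det (Matrix.of fun a b =>
      (Fin.cons c0 (Fin.cons pp w) : Fin (n + 2) → Fin (n + 2) → ℂ) a b) :=
    toda_det_swap c0 pp w
  have key := toda_plucker w c0 pp ee cl
  have final : ∀ (A B C D F G Q : ℂ), A * B = C * D + F * G → Q * Q = 1 →
      (Q * A) * (Q * B) = -C * -D + (Q * F) * (Q * G) := by
    intro A B C D F G Q hk hq
    linear_combination hk + (A * B - F * G) * hq
  rw [T1, T2, T3, T4, T5, T6, hsw]
  exact final _ _ _ _ _ _ _ key (toda_neg_pow_sq n)
end

section
/- Let M ≥ 1 and let B be a bilinear form on ℂ[z] satisfying B[z^{i+M}, z^j] = B[z^i, z^{j+1}] for all i, j ≥ 0. Define the linear functional L : ℂ[z] → ℂ by L[p] := B[p, 1]. If ({φ_n}, {ψ_n}) is a pair of monic biorthogonal polynomial sequences with respect to B with biorthogonality constants h_n, then the (M,1)-biorthogonal relation L[φ_m(z) · ψ_n(z^M)] = h_n δ_{m,n} holds for all m, n ≥ 0. -/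
open Polynomial

/-- The (M,1)-reduction: if `B[z^{i+M}, z^j] = B[z^i, z^{j+1}]` and `L[p] := B[p, 1]`,
then the pair of monic biorthogonal polynomial sequences for `B` satisfies the
(M,1)-biorthogonal relation `L[φ_m(z) ψ_n(z^M)] = h_n δ_{m,n}`. -/
theorem stmt_11
    (M : ℕ) (hM : 1 ≤ M)
    (B : Polynomial ℂ →ₗ[ℂ] Polynomial ℂ →ₗ[ℂ] ℂ)
    (hred : ∀ i j : ℕ, B (X ^ (i + M)) (X ^ j) = B (X ^ i) (X ^ (j + 1)))
    (L : Polynomial ℂ →ₗ[ℂ] ℂ) (hL : ∀ p : Polynomial ℂ, L p = B p 1)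
    (φ ψ : ℕ → Polynomial ℂ) (h : ℕ → ℂ)
    (hφm : ∀ n, (φ n).Monic) (hφd : ∀ n : ℕ, (φ n).degree = n)
    (hψm : ∀ n, (ψ n).Monic) (hψd : ∀ n : ℕ, (ψ n).degree = n)
    (hne : ∀ n, h n ≠ 0)
    (hbi : ∀ m n : ℕ, B (φ m) (ψ n) = if m = n then h n else 0) :
    ∀ m n : ℕ, L (φ m * (ψ n).comp (X ^ M)) = if m = n then h n else 0 := by
  have key : ∀ p q : Polynomial ℂ, B (p * X ^ M) q = B p (X * q) := by
    intro p q
    induction p using Polynomial.induction_on' with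
    | add p r hp hr => simp [add_mul, hp, hr]
    | monomial i a =>
      induction q using Polynomial.induction_on' with
      | add q r hq hr => simp only [mul_add, map_add, hq, hr]
      | monomial j b =>
        simp only [← C_mul_X_pow_eq_monomial, ← smul_eq_C_mul, smul_mul_assoc,
          mul_smul_comm, map_smul, LinearMap.smul_apply, smul_eq_mul, ← pow_add]
        rw [hred i j, pow_succ']
  have keyk : ∀ (k : ℕ) (p q : Polynomial ℂ), B (p * X ^ (k * M)) q = B p (X ^ k * q) := by
    intro k
    induction k with
    | zero => simp
    | succ k ih =>
      intro p q
      have : p * X ^ ((k + 1) * M) = (p * X ^ (k * M)) * X ^ M := by ring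
      rw [this, key, ih]
      congr 1
      ring
  intro m n
  rw [hL, ← hbi m n]
  generalize ψ n = q
  induction q using Polynomial.induction_on' with
  | add q r hq hr => simp [add_comp, mul_add, hq, hr]
  | monomial k a =>
    rw [monomial_comp, ← pow_mul, mul_comm M k]
    simp only [← smul_eq_C_mul, mul_smul_comm, map_smul, LinearMap.smul_apply, smul_eq_mul]
    rw [keyk, mul_one]
    rw [← C_mul_X_pow_eq_monomial, ← smul_eq_C_mul, map_smul, smul_eq_mul]
end

section
/- Let M ≥ 1, N ≥ 1, let L : ℂ[z] → ℂ be a linear functional, and let ψ be a monic polynomial of degree N whose zeros z_0, z_1, …, z_{N−1} are pairwise distinct and nonzero (equivalently, the polynomial z ↦ ψ(z^M) of degree MN has MN simple zeros). Suppose L[z^m · ψ(z^M)] = 0 for every integer m ≥ 0. Then, for any fixed choice of an M-th root ζ_r of z_r for each r, there exist complex numbers w_{r,ν} (0 ≤ r ≤ N−1, 0 ≤ ν ≤ M−1) such that for every polynomial π ∈ ℂ[z]: L[π] = Σ_{r=0}^{N−1} Σ_{ν=0}^{M−1} w_{r,ν} · π(ζ_r · e^{−2πiν/M}). -/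
open Polynomial

/-- Analogue of Gauss quadrature for (M,1)-biorthogonal polynomials: if `L` annihilates
`z^m ψ(z^M)` for all `m ≥ 0`, where `ψ` is monic of degree `N` with pairwise distinct
nonzero zeros `z_r`, then `L` is a finite sum of evaluations at the `M`-th roots
`ζ_r e^{-2πiν/M}` of the `z_r`. -/
theorem stmt_12
    (M N : ℕ) (hM : 1 ≤ M) (hN : 1 ≤ N)
    (L : Polynomial ℂ →ₗ[ℂ] ℂ)
    (z : Fin N → ℂ) (hzinj : Function.Injective z) (hz0 : ∀ r, z r ≠ 0)
    (ψ : Polynomial ℂ) (hψ : ψ = ∏ r : Fin N, (X - C (z r)))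
    (horth : ∀ m : ℕ, L (X ^ m * ψ.comp (X ^ M)) = 0)
    (ζ : Fin N → ℂ) (hζ : ∀ r, ζ r ^ M = z r) :
    ∃ w : Fin N → Fin M → ℂ, ∀ p : Polynomial ℂ,
      L p = ∑ r : Fin N, ∑ ν : Fin M,
        w r ν * p.eval (ζ r * Complex.exp (-(2 * (Real.pi : ℂ) * Complex.I * ((ν : ℕ) : ℂ)) / (M : ℂ))) := by
  classical
  have hM0 : (M : ℂ) ≠ 0 := Nat.cast_ne_zero.mpr (by omega)
  set Ψ : Polynomial ℂ := ψ.comp (X ^ M) with hΨ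
  -- the nodes
  set x : Fin N × Fin M → ℂ := fun j =>
    ζ j.1 * Complex.exp (-(2 * (Real.pi : ℂ) * Complex.I * ((j.2 : ℕ) : ℂ)) / (M : ℂ)) with hx
  have hxpow : ∀ j, (x j) ^ M = z j.1 := by
    intro j
    have h1 : Complex.exp (-(2 * (Real.pi : ℂ) * Complex.I * ((j.2 : ℕ) : ℂ)) / (M : ℂ)) ^ M
        = Complex.exp ((M : ℂ) * (-(2 * (Real.pi : ℂ) * Complex.I * ((j.2 : ℕ) : ℂ)) / (M : ℂ))) := by
      rw [← Complex.exp_nat_mul]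
    have h2 : (M : ℂ) * (-(2 * (Real.pi : ℂ) * Complex.I * ((j.2 : ℕ) : ℂ)) / (M : ℂ))
        = ((-(j.2 : ℕ) : ℤ) : ℂ) * (2 * (Real.pi : ℂ) * Complex.I) := by
      field_simp; push_cast; ring
    have h3 : Complex.exp (((-(j.2 : ℕ) : ℤ) : ℂ) * (2 * (Real.pi : ℂ) * Complex.I)) = 1 :=
      Complex.exp_int_mul_two_pi_mul_I _
    simp only [hx, mul_pow, h1, h2, h3, mul_one, hζ]
  have hζ0 : ∀ r, ζ r ≠ 0 := by
    intro r h
    exact hz0 r (by rw [← hζ r, h, zero_pow (by omega)])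
  -- injectivity of nodes
  have hxinj : Function.Injective x := by
    intro j j' h
    have hz : z j.1 = z j'.1 := by rw [← hxpow j, ← hxpow j', h]
    have h1 : j.1 = j'.1 := hzinj hz
    have h2 : Complex.exp (-(2 * (Real.pi : ℂ) * Complex.I * ((j.2 : ℕ) : ℂ)) / (M : ℂ))
        = Complex.exp (-(2 * (Real.pi : ℂ) * Complex.I * ((j'.2 : ℕ) : ℂ)) / (M : ℂ)) := by
      have := h
      simp only [hx, h1] at this
      exact mul_left_cancel₀ (hζ0 j'.1) this
    obtain ⟨n, hn⟩ := Complex.exp_eq_exp_iff_exists_int.mp h2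
    have hcast : ((j'.2 : ℕ) : ℂ) - ((j.2 : ℕ) : ℂ) = (n : ℂ) * (M : ℂ) := by
      have h2pi : (2 * (Real.pi : ℂ) * Complex.I * (M : ℂ)) ≠ 0 :=
        mul_ne_zero Complex.two_pi_I_ne_zero hM0
      field_simp at hn
      have key : (2 * (Real.pi : ℂ) * Complex.I * (M : ℂ)) *
          (((j'.2 : ℕ) : ℂ) - ((j.2 : ℕ) : ℂ) - (n : ℂ) * (M : ℂ)) = 0 := by
        linear_combination (2 * (Real.pi : ℂ) * Complex.I * (M : ℂ)) * hn
      have h0 := (mul_eq_zero.mp key).resolve_left h2pi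
      linear_combination h0
    have hint : ((j'.2 : ℕ) : ℤ) - ((j.2 : ℕ) : ℤ) = n * M := by exact_mod_cast hcast
    have hb : (j.2 : ℕ) < M := j.2.isLt
    have hb' : (j'.2 : ℕ) < M := j'.2.isLt
    have hn0 : n = 0 := by
      rcases lt_trichotomy n 0 with hlt | he | hgt
      · nlinarith [hint]
      · exact he
      · nlinarith [hint]
    have h22 : (j.2 : ℕ) = (j'.2 : ℕ) := by
      rw [hn0, zero_mul] at hint; omega
    exact Prod.ext_iff.mpr ⟨h1, Fin.ext h22⟩
  -- ψ facts
  have hψmonic : ψ.Monic := by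
    rw [hψ]; exact monic_prod_of_monic _ _ fun r _ => monic_X_sub_C (z r)
  have hψdeg : ψ.natDegree = N := by
    rw [hψ, natDegree_prod _ _ fun r _ => X_sub_C_ne_zero (z r)]
    simp [natDegree_X_sub_C]
  have hΨmonic : Ψ.Monic :=
    hψmonic.comp (monic_X_pow M) (by rw [natDegree_X_pow]; omega)
  have hΨdeg : Ψ.natDegree = N * M := by
    rw [hΨ, natDegree_comp, natDegree_X_pow, hψdeg]
  -- nodes are roots of Ψ
  have hΨroot : ∀ j, Ψ.eval (x j) = 0 := by
    intro j
    rw [hΨ, eval_comp, eval_pow, eval_X, hxpow j, hψ, eval_prod]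
    exact Finset.prod_eq_zero (Finset.mem_univ j.1) (by simp)
  -- L kills multiples of Ψ
  have hkill : ∀ q : Polynomial ℂ, L (Ψ * q) = 0 := by
    intro q
    induction q using Polynomial.induction_on' with
    | add p q hp hq => rw [mul_add, map_add, hp, hq, add_zero]
    | monomial n a =>
        have : Ψ * (monomial n a) = a • (X ^ n * Ψ) := by
          rw [← C_mul_X_pow_eq_monomial, smul_eq_C_mul]; ring
        rw [this, map_smul, horth n, smul_zero]
  refine ⟨fun r ν => L (Lagrange.basis Finset.univ x (r, ν)), fun p => ?_⟩
  -- division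
  have hdvd := modByMonic_add_div p Ψ
  have hLp : L p = L (p %ₘ Ψ) := by
    conv_lhs => rw [← hdvd]
    rw [map_add, hkill, add_zero]
  have hcard : (Finset.univ : Finset (Fin N × Fin M)).card = N * M := by
    simp [Finset.card_univ]
  have hdeglt : (p %ₘ Ψ).degree < ((Finset.univ : Finset (Fin N × Fin M)).card : ℕ) := by
    rw [hcard]
    calc (p %ₘ Ψ).degree < Ψ.degree := degree_modByMonic_lt p hΨmonic
    _ = (N * M : ℕ) := by rw [degree_eq_natDegree hΨmonic.ne_zero, hΨdeg]
  have hinterp := Lagrange.eq_interpolate (f := p %ₘ Ψ)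
    (hxinj.injOn) hdeglt
  have heval : ∀ j, (p %ₘ Ψ).eval (x j) = p.eval (x j) := by
    intro j
    conv_rhs => rw [← hdvd]
    rw [eval_add, eval_mul, hΨroot j, zero_mul, add_zero]
  rw [hLp, hinterp, Lagrange.interpolate_apply, map_sum, Fintype.sum_prod_type]
  refine Finset.sum_congr rfl fun r _ => Finset.sum_congr rfl fun ν _ => ?_
  rw [← smul_eq_C_mul, map_smul, smul_eq_mul, heval (r, ν), mul_comm]
end

section
/- Let M ≥ 1, N ≥ 1, let ζ_0, …, ζ_{N−1} be complex numbers, let s^{(0)}, s^{(1)}, s^{(2)}, … be complex numbers, and let w_r^{(m)} (0 ≤ r ≤ N−1, m ∈ ℤ) be complex numbers satisfying w_r^{(m+M)} = w_r^{(m)} for all m. For t ≥ 0 define μ^{(t)}_m := Σ_{r=0}^{N−1} w_r^{(m)} · ζ_r^m · Π_{τ=0}^{t−1}(ζ_r^M − s^{(τ)}) for m ≥ 0, and for k ≥ 0, 0 ≤ n ≤ N define τ^{(k,t)}_0 := 1, τ^{(k,t)}_n := det(μ^{(t)}_{k+i+Mj})_{i,j=0}^{n-1}. Then τ^{(k,t)}_n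 = Σ_{0 ≤ r_0 < r_1 < … < r_{n−1} ≤ N−1} V^{(k)}_{r_0,…,r_{n−1}} · Π_{j=0}^{n−1} ( ζ_{r_j}^k · Π_{τ=0}^{t−1}(ζ_{r_j}^M − s^{(τ)}) ) · Π_{0 ≤ i < j ≤ n−1} (ζ_{r_j}^M − ζ_{r_i}^M), where V^{(k)}_{r_0,…,r_{n−1}} := det( w_{r_l}^{(k+i)} · ζ_{r_l}^i )_{i,l=0}^{n-1}. -/
open scoped Classical

/-- The image cardinality of an injective map `Fin n → Fin N`. -/
theorem card_image_inj {n N : ℕ} (p : Fin n → Fin N) (hp : Function.Injective p) :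
    (Finset.univ.image p).card = n := by
  rw [Finset.card_image_of_injective _ hp, Finset.card_univ, Fintype.card_fin]

/-- The increasing parametrization of the image of an injective map. -/
noncomputable def monoOf {n N : ℕ} (p : Fin n → Fin N) (hp : Function.Injective p) :
    Fin n → Fin N :=
  fun l => (Finset.univ.image p).orderEmbOfFin (card_image_inj p hp) l

theorem monoOf_strictMono {n N : ℕ} (p : Fin n → Fin N) (hp : Function.Injective p) :
    StrictMono (monoOf p hp) :=
  ((Finset.univ.image p).orderEmbOfFin (card_image_inj p hp)).strictMono

/-- The permutation sorting an injective map. -/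
noncomputable def permOf {n N : ℕ} (p : Fin n → Fin N) (hp : Function.Injective p) :
    Equiv.Perm (Fin n) := by
  refine Equiv.ofBijective
    (fun i => ((Finset.univ.image p).orderIsoOfFin (card_image_inj p hp)).symm
      ⟨p i, by simp⟩) ?_
  refine Finite.injective_iff_bijective.1 fun a b hab => ?_
  apply hp
  have := congrArg (fun x => (((Finset.univ.image p).orderIsoOfFin (card_image_inj p hp)) x : Fin N)) hab
  simpa using this

theorem monoOf_permOf {n N : ℕ} (p : Fin n → Fin N) (hp : Function.Injective p) (i : Fin n) :
    monoOf p hp (permOf p hp i) = p i := by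
  simp only [monoOf, permOf, Equiv.ofBijective_apply]
  rw [← Finset.coe_orderIsoOfFin_apply]
  simp

theorem monoOf_comp {n N : ℕ} (r : Fin n → Fin N) (hr : StrictMono r) (σ : Equiv.Perm (Fin n))
    (h : Function.Injective (r ∘ σ)) : monoOf (r ∘ σ) h = r := by
  have himg : Finset.univ.image (r ∘ σ) = Finset.univ.image r := by
    rw [← Finset.image_image]
    congr 1
    exact Finset.image_univ_equiv σ
  have := Finset.orderEmbOfFin_unique
    (s := Finset.univ.image (r ∘ σ)) (card_image_inj _ h) (f := r)
    (fun x => by rw [himg]; exact Finset.mem_image_of_mem r (Finset.mem_univ x)) hr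
  funext l
  rw [monoOf, ← this]

theorem permOf_comp {n N : ℕ} (r : Fin n → Fin N) (hr : StrictMono r) (σ : Equiv.Perm (Fin n))
    (h : Function.Injective (r ∘ σ)) : permOf (r ∘ σ) h = σ := by
  refine Equiv.ext fun i => hr.injective ?_
  have h1 := monoOf_permOf (r ∘ σ) h i
  rw [monoOf_comp r hr σ h] at h1
  exact h1

theorem my_cauchy_binet {n N : ℕ} (A : Fin n → Fin N → ℂ) (B : Fin N → Fin n → ℂ) :
    (Matrix.of fun i j : Fin n => ∑ r : Fin N, A i r * B r j).det
      = ∑ r ∈ Finset.univ.filter (fun r : Fin n → Fin N => StrictMono r),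
          (Matrix.of fun i l : Fin n => A i (r l)).det *
            (Matrix.of fun l j : Fin n => B (r l) j).det := by
  -- Step 1: expand by multilinearity in rows
  have h1 : (Matrix.of fun i j : Fin n => ∑ r : Fin N, A i r * B r j).det
      = ∑ p : Fin n → Fin N, (∏ i, A i (p i)) *
          (Matrix.of fun i j : Fin n => B (p i) j).det := by
    have hrows : (Matrix.of fun i j : Fin n => ∑ r : Fin N, A i r * B r j)
        = fun i => ∑ r : Fin N, A i r • B r := by
      ext i j; simp [Matrix.of_apply, Finset.sum_apply]
    have hdet : ∀ Mt : Matrix (Fin n) (Fin n) ℂ,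
        Mt.det = (Matrix.detRowAlternating (R := ℂ) (n := Fin n)).toMultilinearMap Mt := fun _ => rfl
    rw [hdet, hrows,
      (Matrix.detRowAlternating (R := ℂ) (n := Fin n)).toMultilinearMap.map_sum
        (g := fun i r => A i r • B r)]
    refine Finset.sum_congr rfl fun p _ => ?_
    rw [MultilinearMap.map_smul_univ, smul_eq_mul]
    rfl
  rw [h1]
  -- Step 2: kill non-injective terms
  rw [← Finset.sum_filter_add_sum_filter_not Finset.univ (fun p => Function.Injective p)]
  have h2 : ∑ p ∈ Finset.univ.filter (fun p : Fin n → Fin N => ¬ Function.Injective p),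
      (∏ i, A i (p i)) * (Matrix.of fun i j : Fin n => B (p i) j).det = 0 := by
    refine Finset.sum_eq_zero fun p hp => ?_
    simp only [Finset.mem_filter, Function.Injective, not_forall] at hp
    obtain ⟨-, i, j, hij, hne⟩ := hp
    rw [Matrix.det_zero_of_row_eq hne (by ext c; simp [hij])]
    ring
  rw [h2, add_zero]
  -- Step 3: reindex injective maps as (strict mono) ∘ (perm)
  have h3 : ∑ p ∈ Finset.univ.filter (fun p : Fin n → Fin N => Function.Injective p),
      (∏ i, A i (p i)) * (Matrix.of fun i j : Fin n => B (p i) j).det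
    = ∑ q ∈ (Finset.univ.filter (fun r : Fin n → Fin N => StrictMono r)) ×ˢ
        (Finset.univ : Finset (Equiv.Perm (Fin n))),
      (∏ i, A i (q.1 (q.2 i))) * (Matrix.of fun i j : Fin n => B (q.1 (q.2 i)) j).det := by
    refine Finset.sum_bij'
      (i := fun p hp => (monoOf p (by simpa using Finset.mem_filter.1 hp |>.2),
        permOf p (by simpa using Finset.mem_filter.1 hp |>.2)))
      (j := fun q hq => q.1 ∘ q.2) ?_ ?_ ?_ ?_ ?_
    · intro p hp
      simp only [Finset.mem_product, Finset.mem_filter, Finset.mem_univ, true_and]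
      exact ⟨monoOf_strictMono _ _, trivial⟩
    · intro q hq
      simp only [Finset.mem_product, Finset.mem_filter, Finset.mem_univ, true_and] at hq ⊢
      exact hq.1.injective.comp q.2.injective
    · intro p hp
      funext i
      exact monoOf_permOf p (by simpa using (Finset.mem_filter.1 hp).2) i
    · intro q hq
      simp only [Finset.mem_product, Finset.mem_filter, Finset.mem_univ, true_and] at hq
      have h := hq.1.injective.comp q.2.injective
      exact Prod.ext (monoOf_comp q.1 hq.1 q.2 h) (permOf_comp q.1 hq.1 q.2 h)
    · intro p hp
      beta_reduce
      simp only [monoOf_permOf]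
  rw [h3, Finset.sum_product]
  -- Step 4: sum over permutations for fixed strictly monotone r
  refine Finset.sum_congr rfl fun r hr => ?_
  have hperm : ∀ σ : Equiv.Perm (Fin n),
      (Matrix.of fun i j : Fin n => B (r (σ i)) j).det
        = (Equiv.Perm.sign σ : ℂ) * (Matrix.of fun l j : Fin n => B (r l) j).det := by
    intro σ
    have := Matrix.det_permute σ (Matrix.of fun l j : Fin n => B (r l) j)
    simpa [Matrix.submatrix] using this
  calc ∑ σ : Equiv.Perm (Fin n), (∏ i, A i (r (σ i))) *
        (Matrix.of fun i j : Fin n => B (r (σ i)) j).det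
      = (∑ σ : Equiv.Perm (Fin n), (Equiv.Perm.sign σ : ℂ) * ∏ i, A i (r (σ i))) *
        (Matrix.of fun l j : Fin n => B (r l) j).det := by
        rw [Finset.sum_mul]
        exact Finset.sum_congr rfl fun σ _ => by rw [hperm σ]; ring
    _ = (Matrix.of fun i l : Fin n => A i (r l)).det *
        (Matrix.of fun l j : Fin n => B (r l) j).det := by
        congr 1
        rw [← Matrix.det_transpose, Matrix.det_apply']
        refine Finset.sum_congr rfl fun σ _ => ?_
        simp [Matrix.transpose_apply]

/-- Binet–Cauchy/Vandermonde expansion of the tau functions of the nonautonomous discrete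
hungry Toda lattice (equation (tau-expanded-v) of the paper). -/
theorem stmt_13
    (M N : ℕ) (hM : 1 ≤ M) (hN : 1 ≤ N)
    (ζ : Fin N → ℂ) (s : ℕ → ℂ)
    (w : Fin N → ℤ → ℂ) (hwper : ∀ (r : Fin N) (m : ℤ), w r (m + M) = w r m)
    (μ : ℕ → ℕ → ℂ)
    (hμ : ∀ t m : ℕ, μ t m = ∑ r : Fin N, w r (m : ℤ) * ζ r ^ m *
      ∏ τ' ∈ Finset.range t, (ζ r ^ M - s τ'))
    (τ : ℕ → ℕ → ℕ → ℂ)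
    (hτ : ∀ k t n : ℕ,
      τ k t n = Matrix.det (Matrix.of fun i j : Fin n => μ t (k + i + M * j))) :
    ∀ k t n : ℕ, n ≤ N →
      τ k t n = ∑ r ∈ Finset.univ.filter (fun r : Fin n → Fin N => StrictMono r),
        Matrix.det (Matrix.of fun i l : Fin n =>
            w (r l) ((k : ℤ) + (i : ℕ)) * ζ (r l) ^ (i : ℕ)) *
          (∏ j : Fin n, (ζ (r j) ^ k * ∏ τ' ∈ Finset.range t, (ζ (r j) ^ M - s τ'))) *
          ∏ j : Fin n, ∏ i ∈ Finset.univ.filter (fun i : Fin n => i < j),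
            (ζ (r j) ^ M - ζ (r i) ^ M) := by
  intro k t n hn
  -- periodicity with multiples of M
  have hper : ∀ (r : Fin N) (m : ℤ) (j : ℕ), w r (m + M * j) = w r m := by
    intro r m j
    induction j with
    | zero => simp
    | succ j ih =>
      have : m + (M : ℤ) * ((j + 1 : ℕ) : ℤ) = (m + M * j) + M := by push_cast; ring
      rw [this, hwper, ih]
  set P : Fin N → ℂ := fun r => ∏ τ' ∈ Finset.range t, (ζ r ^ M - s τ') with hP
  set A : Fin n → Fin N → ℂ := fun i r => w r ((k : ℤ) + (i : ℕ)) * ζ r ^ (i : ℕ) with hA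
  set B : Fin N → Fin n → ℂ := fun r j => ζ r ^ k * P r * (ζ r ^ M) ^ (j : ℕ) with hB
  have hentry : (Matrix.of fun i j : Fin n => μ t (k + i + M * j))
      = Matrix.of fun i j : Fin n => ∑ r : Fin N, A i r * B r j := by
    ext i j
    rw [Matrix.of_apply, Matrix.of_apply, hμ]
    refine Finset.sum_congr rfl fun r _ => ?_
    have hwr : w r ((k + i + M * j : ℕ) : ℤ) = w r ((k : ℤ) + (i : ℕ)) := by
      have : ((k + i + M * j : ℕ) : ℤ) = ((k : ℤ) + (i : ℕ)) + (M : ℤ) * (j : ℕ) := by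
        push_cast; ring
      rw [this, hper]
    rw [hwr]
    simp only [hA, hB]
    rw [pow_add, pow_add, ← pow_mul]
    ring
  rw [hτ, hentry, my_cauchy_binet A B]
  refine Finset.sum_congr rfl fun r hr => ?_
  simp only [Finset.mem_filter, Finset.mem_univ, true_and] at hr
  have hBdet : (Matrix.of fun l j : Fin n => B (r l) j).det
      = (∏ j : Fin n, (ζ (r j) ^ k * P (r j))) *
        ∏ j : Fin n, ∏ i ∈ Finset.univ.filter (fun i : Fin n => i < j),
          (ζ (r j) ^ M - ζ (r i) ^ M) := by
    have h1 : (Matrix.of fun l j : Fin n => B (r l) j)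
        = Matrix.of fun l j : Fin n =>
            (fun l => ζ (r l) ^ k * P (r l)) l * (Matrix.vandermonde fun l => ζ (r l) ^ M) l j := by
      ext l j; simp [hB, Matrix.vandermonde]
    rw [h1, Matrix.det_mul_column, Matrix.det_vandermonde]
    congr 1
    refine Finset.prod_comm' fun i j => ?_
    simp [Finset.mem_Ioi, and_comm]
  rw [hBdet]
  ring
end

section
/- Let M ≥ 1, N ≥ 1, let ζ_0, …, ζ_{N−1} be nonzero real (or complex) numbers, and let w_r^{(m)} (0 ≤ r ≤ N−1, m ∈ ℤ) be given. For strictly increasing tuples (r_0, …, r_{n−1}) of indices define recursively, for n ≥ 2 and all m ∈ ℤ: w^{(m+1)}_{r_0,…,r_{n−3},r_{n−2},r_{n−1}} := ( w^{(m)}_{r_0,…,r_{n−3},r_{n−2}} · w^{(m+1)}_{r_0,…,r_{n−3},r_{n−1}} · ζ_{r_{n−1}} − w^{(m+1)}_{r_0,…,r_{n−3},r_{n−2}} · w^{(m)}_{r_0,…,r_{n−3},r_{n−1}} · ζ_{r_{n−2}} ) / w^{(m)}_{r_0,…,r_{n−3},r_{n−2}}, assuming every denominator appearing is nonzero. Then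 for every k ∈ ℤ and every strictly increasing tuple (r_0, …, r_{n−1}): det( w_{r_l}^{(k+i)} · ζ_{r_l}^i )_{i,l=0}^{n-1} = w_{r_0}^{(k)} · w_{r_0,r_1}^{(k+1)} · w_{r_0,r_1,r_2}^{(k+2)} ⋯ w_{r_0,r_1,…,r_{n−1}}^{(k+n−1)}. -/
open Matrix Equiv

namespace Stmt14aux

def E1 (n : ℕ) : Fin n ⊕ Fin 1 ≃ Fin (n+1) := finSumFinEquiv
def E2 (n : ℕ) : Fin n ⊕ Fin 2 ≃ Fin (n+2) := finSumFinEquiv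
def u1 (n : ℕ) : Fin n ⊕ Fin 1 ≃ Fin (n+1) := (E1 n).trans (Fin.cycleRange (Fin.last n))
def u2 (n : ℕ) : Fin n ⊕ Fin 2 ≃ Fin (n+2) :=
  (E2 n).trans (Fin.cycleRange ((Fin.last n).castSucc))

lemma E1_inl (n : ℕ) (i : Fin n) : E1 n (Sum.inl i) = i.castSucc := by
  apply Fin.ext; simp [E1]

lemma E1_inr (n : ℕ) (i : Fin 1) : E1 n (Sum.inr i) = Fin.last n := by
  apply Fin.ext; simp [E1, Fin.val_eq_zero]

lemma E2_inl (n : ℕ) (i : Fin n) : E2 n (Sum.inl i) = i.castSucc.castSucc := by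
  apply Fin.ext; simp [E2]

lemma E2_inr0 (n : ℕ) : E2 n (Sum.inr 0) = (Fin.last n).castSucc := by
  apply Fin.ext; simp [E2]

lemma E2_inr1 (n : ℕ) : E2 n (Sum.inr 1) = Fin.last (n+1) := by
  apply Fin.ext; simp [E2]

lemma u1_inl (n : ℕ) (i : Fin n) : u1 n (Sum.inl i) = i.succ := by
  apply Fin.ext
  simp only [u1, Equiv.trans_apply, E1_inl]
  rw [Fin.cycleRange_of_lt (Fin.castSucc_lt_last i)]
  rw [Fin.val_add_one_of_lt (Fin.castSucc_lt_last i)]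
  simp

lemma u1_inr (n : ℕ) (i : Fin 1) : u1 n (Sum.inr i) = 0 := by
  simp only [u1, Equiv.trans_apply, E1_inr, Fin.cycleRange_self]

lemma u2_inl (n : ℕ) (i : Fin n) : u2 n (Sum.inl i) = i.succ.castSucc := by
  apply Fin.ext
  simp only [u2, Equiv.trans_apply, E2_inl]
  rw [Fin.cycleRange_of_lt (by simp [Fin.lt_def])]
  rw [Fin.val_add_one_of_lt (by simp [Fin.lt_def])]
  simp

lemma u2_inr0 (n : ℕ) : u2 n (Sum.inr 0) = 0 := by
  simp only [u2, Equiv.trans_apply, E2_inr0, Fin.cycleRange_self]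

lemma u2_inr1 (n : ℕ) : u2 n (Sum.inr 1) = Fin.last (n+1) := by
  simp only [u2, Equiv.trans_apply, E2_inr1]
  rw [Fin.cycleRange_of_gt (by simp [Fin.lt_def])]

lemma conj1 (n : ℕ) : (E1 n).symm.trans (u1 n) = Fin.cycleRange (Fin.last n) := by
  ext x; simp [u1]

lemma conj2 (n : ℕ) :
    (E2 n).symm.trans (u2 n) = Fin.cycleRange ((Fin.last n).castSucc) := by
  ext x; simp [u2]

lemma sign1 (n : ℕ) :
    (((Equiv.Perm.sign ((E1 n).symm.trans (u1 n)) : ℤˣ) : ℤ) : ℂ) = (-1 : ℂ)^n := by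
  rw [conj1, Fin.sign_cycleRange]
  push_cast
  simp

lemma sign2 (n : ℕ) :
    (((Equiv.Perm.sign ((E2 n).symm.trans (u2 n)) : ℤˣ) : ℤ) : ℂ) = (-1 : ℂ)^n := by
  rw [conj2, Fin.sign_cycleRange]
  push_cast
  simp

lemma dj_core {n : ℕ} (B : Matrix (Fin n) (Fin n) ℂ) (C : Matrix (Fin n) (Fin 2) ℂ)
    (D : Matrix (Fin 2) (Fin n) ℂ) (E : Matrix (Fin 2) (Fin 2) ℂ) (hB : B.det ≠ 0) :
    (fromBlocks B C D E).det * B.det =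
      (fromBlocks B (fun i (_ : Fin 1) => C i 0) (fun (_ : Fin 1) j => D 0 j)
        (fun _ _ => E 0 0)).det *
      (fromBlocks B (fun i (_ : Fin 1) => C i 1) (fun (_ : Fin 1) j => D 1 j)
        (fun _ _ => E 1 1)).det -
      (fromBlocks B (fun i (_ : Fin 1) => C i 1) (fun (_ : Fin 1) j => D 0 j)
        (fun _ _ => E 0 1)).det *
      (fromBlocks B (fun i (_ : Fin 1) => C i 0) (fun (_ : Fin 1) j => D 1 j)
        (fun _ _ => E 1 0)).det := by
  have : Invertible B := B.invertibleOfIsUnitDet (isUnit_iff_ne_zero.mpr hB)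
  have h1 : ∀ a b : Fin 2,
      (fromBlocks B (fun i (_ : Fin 1) => C i b) (fun (_ : Fin 1) j => D a j)
          (fun _ _ => E a b)).det
        = B.det * (E a b - (D * ⅟B * C) a b) := by
    intro a b
    erw [det_fromBlocks₁₁, det_fin_one]
    congr 1
  rw [det_fromBlocks₁₁, det_fin_two, h1, h1, h1, h1]
  simp only [Matrix.sub_apply, Matrix.mul_apply]
  ring

lemma det_submatrix_equiv {I : Type*} [Fintype I] [DecidableEq I] {p : ℕ}
    (X : Matrix (Fin p) (Fin p) ℂ) (u v : I ≃ Fin p) :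
    (X.submatrix u v).det = ((Equiv.Perm.sign (v.symm.trans u) : ℤ) : ℂ) * X.det := by
  have h : (X.submatrix ⇑u ⇑v) = ((X.submatrix ⇑v ⇑v).submatrix ⇑(u.trans v.symm) id) := by
    ext i j; simp
  rw [h, det_permute, det_submatrix_equiv_self]
  have hperm : Equiv.permCongr v (u.trans v.symm) = v.symm.trans u := by
    ext x; simp
  rw [← hperm, Equiv.Perm.sign_permCongr]

variable {N : ℕ}

def Dm (ζ : Fin N → ℂ) (w : Fin N → ℤ → ℂ) (p : ℕ) (k : ℤ) (t : Fin p → Fin N) :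
    Matrix (Fin p) (Fin p) ℂ :=
  Matrix.of fun i l => w (t l) (k + (i : ℕ)) * ζ (t l) ^ (i : ℕ)

lemma key (ζ : Fin N → ℂ) (hζ : ∀ x, ζ x ≠ 0) (w : Fin N → ℤ → ℂ)
    (n : ℕ) (k : ℤ) (r : Fin (n+2) → Fin N)
    (hb : (Dm ζ w n (k+1) (fun i => r i.castSucc.castSucc)).det ≠ 0) :
    (Dm ζ w (n+2) k r).det * (Dm ζ w n (k+1) (fun i => r i.castSucc.castSucc)).det =
      (Dm ζ w (n+1) k (fun i => r i.castSucc)).det *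
        (Dm ζ w (n+1) (k+1)
          (fun i => if i = Fin.last n then r (Fin.last (n+1)) else r i.castSucc)).det *
        ζ (r (Fin.last (n+1))) -
      (Dm ζ w (n+1) (k+1) (fun i => r i.castSucc)).det *
        (Dm ζ w (n+1) k
          (fun i => if i = Fin.last n then r (Fin.last (n+1)) else r i.castSucc)).det *
        ζ (r ((Fin.last n).castSucc)) := by
  set s : Fin (n+1) → Fin N :=
    fun i => if i = Fin.last n then r (Fin.last (n+1)) else r i.castSucc with hs
  have hsc : ∀ j : Fin n, s j.castSucc = r j.castSucc.castSucc := by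
    intro j
    simp only [hs]
    rw [if_neg (Fin.ext_iff.not.mpr (by simp; omega))]
  have hslast : s (Fin.last n) = r (Fin.last (n+1)) := by simp [hs]
  set A' := (Dm ζ w (n+2) k r).submatrix ⇑(u2 n) ⇑(E2 n) with hA'
  -- block identifications
  have hB11 : A'.toBlocks₁₁ =
      Matrix.of (fun i j : Fin n =>
        ζ (r j.castSucc.castSucc) *
          Dm ζ w n (k+1) (fun i => r i.castSucc.castSucc) i j) := by
    ext i j
    simp only [toBlocks₁₁, of_apply, hA', submatrix_apply, u2_inl, E2_inl, Dm,
      Fin.coe_castSucc, Fin.val_succ]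
    push_cast
    rw [pow_succ]
    ring_nf
  have hM00 : (fromBlocks A'.toBlocks₁₁ (fun i (_ : Fin 1) => A'.toBlocks₁₂ i 0)
        (fun (_ : Fin 1) j => A'.toBlocks₂₁ 0 j) (fun _ _ => A'.toBlocks₂₂ 0 0)) =
      (Dm ζ w (n+1) k (fun i => r i.castSucc)).submatrix ⇑(u1 n) ⇑(E1 n) := by
    ext i j
    rcases i with i | i <;> rcases j with j | j <;>
      simp [fromBlocks, toBlocks₁₁, toBlocks₁₂, toBlocks₂₁, toBlocks₂₂, hA', Dm,
        u2_inl, u2_inr0, u2_inr1, E2_inl, E2_inr0, E2_inr1,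
        u1_inl, u1_inr, E1_inl, E1_inr, Fin.val_succ, Fin.coe_castSucc, Fin.val_last]
  have hM01 : (fromBlocks A'.toBlocks₁₁ (fun i (_ : Fin 1) => A'.toBlocks₁₂ i 1)
        (fun (_ : Fin 1) j => A'.toBlocks₂₁ 0 j) (fun _ _ => A'.toBlocks₂₂ 0 1)) =
      (Dm ζ w (n+1) k s).submatrix ⇑(u1 n) ⇑(E1 n) := by
    ext i j
    rcases i with i | i <;> rcases j with j | j <;>
      simp [fromBlocks, toBlocks₁₁, toBlocks₁₂, toBlocks₂₁, toBlocks₂₂, hA', Dm,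
        u2_inl, u2_inr0, u2_inr1, E2_inl, E2_inr0, E2_inr1,
        u1_inl, u1_inr, E1_inl, E1_inr, hsc, hslast,
        Fin.val_succ, Fin.coe_castSucc, Fin.val_last]
  have hM11 : (fromBlocks A'.toBlocks₁₁ (fun i (_ : Fin 1) => A'.toBlocks₁₂ i 1)
        (fun (_ : Fin 1) j => A'.toBlocks₂₁ 1 j) (fun _ _ => A'.toBlocks₂₂ 1 1)) =
      (Matrix.of (fun i l : Fin (n+1) =>
        ζ (s l) * Dm ζ w (n+1) (k+1) s i l)).submatrix ⇑(E1 n) ⇑(E1 n) := by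
    ext i j
    rcases i with i | i <;> rcases j with j | j <;>
      (simp [fromBlocks, toBlocks₁₁, toBlocks₁₂, toBlocks₂₁, toBlocks₂₂, hA', Dm,
        u2_inl, u2_inr0, u2_inr1, E2_inl, E2_inr0, E2_inr1,
        u1_inl, u1_inr, E1_inl, E1_inr, hsc, hslast,
        Fin.val_succ, Fin.coe_castSucc, Fin.val_last]
       <;> (push_cast; rw [pow_succ]; ring_nf))
  have hM10 : (fromBlocks A'.toBlocks₁₁ (fun i (_ : Fin 1) => A'.toBlocks₁₂ i 0)
        (fun (_ : Fin 1) j => A'.toBlocks₂₁ 1 j) (fun _ _ => A'.toBlocks₂₂ 1 0)) =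
      (Matrix.of (fun i l : Fin (n+1) =>
        ζ (r l.castSucc) * Dm ζ w (n+1) (k+1) (fun i => r i.castSucc) i l)).submatrix
        ⇑(E1 n) ⇑(E1 n) := by
    ext i j
    rcases i with i | i <;> rcases j with j | j <;>
      (simp [fromBlocks, toBlocks₁₁, toBlocks₁₂, toBlocks₂₁, toBlocks₂₂, hA', Dm,
        u2_inl, u2_inr0, u2_inr1, E2_inl, E2_inr0, E2_inr1,
        u1_inl, u1_inr, E1_inl, E1_inr,
        Fin.val_succ, Fin.coe_castSucc, Fin.val_last]
       <;> (push_cast; rw [pow_succ]; ring_nf))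
  have hdB : A'.toBlocks₁₁.det =
      (∏ j : Fin n, ζ (r j.castSucc.castSucc)) *
        (Dm ζ w n (k+1) (fun i => r i.castSucc.castSucc)).det := by
    rw [hB11, det_mul_row]
  have hPne : (∏ j : Fin n, ζ (r j.castSucc.castSucc)) ≠ 0 :=
    Finset.prod_ne_zero_iff.mpr fun j _ => hζ _
  have hBne : A'.toBlocks₁₁.det ≠ 0 := by
    rw [hdB]; exact mul_ne_zero hPne hb
  have hdj := dj_core A'.toBlocks₁₁ A'.toBlocks₁₂ A'.toBlocks₂₁ A'.toBlocks₂₂ hBne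
  rw [fromBlocks_toBlocks, hM00, hM01, hM11, hM10] at hdj
  simp only [det_submatrix_equiv] at hdj
  rw [hA', det_submatrix_equiv] at hdj
  have hsE : (((Equiv.Perm.sign ((E1 n).symm.trans (E1 n)) : ℤ) : ℂ)) = 1 := by simp
  rw [sign1, sign2, hsE, hdB] at hdj
  rw [det_mul_row, det_mul_row] at hdj
  have hPs : (∏ l : Fin (n+1), ζ (s l)) =
      (∏ j : Fin n, ζ (r j.castSucc.castSucc)) * ζ (r (Fin.last (n+1))) := by
    rw [Fin.prod_univ_castSucc]; simp [hsc, hslast]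
  have hPr : (∏ l : Fin (n+1), ζ (r l.castSucc)) =
      (∏ j : Fin n, ζ (r j.castSucc.castSucc)) * ζ (r ((Fin.last n).castSucc)) := by
    rw [Fin.prod_univ_castSucc]
  rw [hPs, hPr] at hdj
  have hsne : ((-1 : ℂ)^n) ≠ 0 := by
    simp
  refine mul_left_cancel₀ (mul_ne_zero hsne hPne) ?_
  linear_combination hdj

end Stmt14aux

open Stmt14aux in
/-- Gauss-elimination factorization of the generalized Vandermonde-type determinants
(equations (vtow) and (w-def) of the paper): for strictly increasing tuples,
`det( w_{r_l}^{(k+i)} ζ_{r_l}^i ) = w_{r_0}^{(k)} w_{r_0,r_1}^{(k+1)} ⋯ w_{r_0,…,r_{n-1}}^{(k+n-1)}`,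
where the multi-index quantities `W` are defined by the stated recursion. -/
theorem stmt_14
    (N : ℕ) (ζ : Fin N → ℂ) (hζ : ∀ r, ζ r ≠ 0)
    (w : Fin N → ℤ → ℂ)
    (W : (n : ℕ) → (Fin n → Fin N) → ℤ → ℂ)
    (hW1 : ∀ (r : Fin 1 → Fin N) (m : ℤ), W 1 r m = w (r 0) m)
    (hWden : ∀ (n : ℕ) (r : Fin (n + 2) → Fin N), StrictMono r → ∀ m : ℤ,
      W (n + 1) (fun i => r i.castSucc) m ≠ 0)
    (hWrec : ∀ (n : ℕ) (r : Fin (n + 2) → Fin N), StrictMono r → ∀ m : ℤ,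
      W (n + 2) r (m + 1) =
        (W (n + 1) (fun i => r i.castSucc) m *
            W (n + 1) (fun i => if i = Fin.last n then r (Fin.last (n + 1)) else r i.castSucc)
              (m + 1) *
            ζ (r (Fin.last (n + 1))) -
          W (n + 1) (fun i => r i.castSucc) (m + 1) *
            W (n + 1) (fun i => if i = Fin.last n then r (Fin.last (n + 1)) else r i.castSucc)
              m *
            ζ (r ((Fin.last n).castSucc))) /
          W (n + 1) (fun i => r i.castSucc) m) :
    ∀ (k : ℤ) (n : ℕ) (r : Fin n → Fin N), StrictMono r →
      Matrix.det (Matrix.of fun i l : Fin n => w (r l) (k + (i : ℕ)) * ζ (r l) ^ (i : ℕ))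
        = ∏ j : Fin n,
            W ((j : ℕ) + 1) (fun i : Fin ((j : ℕ) + 1) => r (Fin.castLE (by omega) i))
              (k + (j : ℕ)) := by
  intro k n
  induction n using Nat.strong_induction_on generalizing k with
  | _ n IH =>
  rcases n with _ | _ | n
  · intro r hr
    simp [Matrix.det_fin_zero]
  · intro r hr
    simp [Matrix.det_fin_one, Fin.prod_univ_one, hW1]
  · intro r hr
    -- strict monotonicity of derived tuples
    have hr' : StrictMono (fun i : Fin (n+1) => r i.castSucc) :=
      fun a b h => hr (Fin.castSucc_lt_castSucc_iff.mpr h)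
    have hr'' : StrictMono (fun i : Fin n => r i.castSucc.castSucc) :=
      fun a b h =>
        hr (Fin.castSucc_lt_castSucc_iff.mpr (Fin.castSucc_lt_castSucc_iff.mpr h))
    have hsm : StrictMono
        (fun i : Fin (n+1) =>
          if i = Fin.last n then r (Fin.last (n+1)) else r i.castSucc) := by
      intro a b h
      dsimp only
      by_cases hbl : b = Fin.last n
      · subst hbl
        rw [if_pos rfl, if_neg h.ne]
        exact hr (Fin.castSucc_lt_last a)
      · have hal : a ≠ Fin.last n := by
          intro hcon
          exact hbl (le_antisymm (Fin.le_last b) (hcon ▸ h.le))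
        rw [if_neg hal, if_neg hbl]
        exact hr (Fin.castSucc_lt_castSucc_iff.mpr h)
    -- restated induction hypothesis
    have IHD : ∀ (p : ℕ), p < n+2 → ∀ (k' : ℤ) (t : Fin p → Fin N), StrictMono t →
        (Dm ζ w p k' t).det = ∏ j : Fin p,
          W ((j : ℕ) + 1) (fun i : Fin ((j : ℕ) + 1) => t (Fin.castLE (by omega) i))
            (k' + (j : ℕ)) :=
      fun p hp k' t ht => IH p hp k' t ht
    -- prefixes of r give nonzero W values
    have hfac : ∀ (j : Fin (n+1)) (m : ℤ),
        W ((j : ℕ) + 1)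
          (fun i : Fin ((j : ℕ) + 1) => r (Fin.castLE (by omega) i)) m ≠ 0 := by
      intro j m
      have hmono : StrictMono
          (fun i : Fin ((j : ℕ)+2) => r (Fin.castLE (by omega) i)) := by
        intro a b h
        exact hr (by simp only [Fin.lt_def, Fin.coe_castLE]; exact h)
      exact hWden (j : ℕ) _ hmono m
    have hD : ∀ k' : ℤ,
        (Dm ζ w n k' (fun i => r i.castSucc.castSucc)).det ≠ 0 := by
      intro k'
      rw [IHD n (by omega) k' _ hr'']
      refine Finset.prod_ne_zero_iff.mpr fun j _ => ?_
      exact hfac j.castSucc (k' + (j : ℕ))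
    -- one-step peeling for the tuple r'
    have hstepr' : ∀ k' : ℤ,
        (Dm ζ w (n+1) k' (fun i => r i.castSucc)).det =
          (Dm ζ w n k' (fun i => r i.castSucc.castSucc)).det *
            W (n+1) (fun i => r i.castSucc) (k' + (n : ℕ)) := by
      intro k'
      rw [IHD (n+1) (by omega) k' (fun i => r i.castSucc) hr',
        Fin.prod_univ_castSucc, IHD n (by omega) k' (fun i => r i.castSucc.castSucc) hr'']
      rfl
    -- one-step peeling for the tuple s
    have hWfun : ∀ (j : Fin n) (m : ℤ),
        W ((j : ℕ) + 1)
          (fun i : Fin ((j : ℕ) + 1) =>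
            (fun i' : Fin (n+1) =>
              if i' = Fin.last n then r (Fin.last (n+1)) else r i'.castSucc)
              (Fin.castLE (by omega) i)) m =
        W ((j : ℕ) + 1)
          (fun i : Fin ((j : ℕ) + 1) => r (Fin.castSucc (Fin.castSucc (Fin.castLE (by omega) i)))) m := by
      intro j m
      have hfg : (fun i : Fin ((j : ℕ) + 1) =>
            (fun i' : Fin (n+1) =>
              if i' = Fin.last n then r (Fin.last (n+1)) else r i'.castSucc)
              (Fin.castLE (by omega) i)) =
          (fun i : Fin ((j : ℕ) + 1) =>
            r (Fin.castSucc (Fin.castSucc (Fin.castLE (by omega) i)))) := by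
        funext i
        dsimp only
        have hne : Fin.castLE (show (j : ℕ) + 1 ≤ n + 1 by omega) i ≠ Fin.last n := by
          refine Fin.ne_of_lt ?_
          have h1 := i.isLt
          have h2 := j.isLt
          simp only [Fin.lt_def, Fin.coe_castLE, Fin.val_last]
          omega
        rw [if_neg hne]
        rfl
      rw [hfg]
    have hsteps : ∀ k' : ℤ,
        (Dm ζ w (n+1) k'
          (fun i => if i = Fin.last n then r (Fin.last (n+1)) else r i.castSucc)).det =
          (Dm ζ w n k' (fun i => r i.castSucc.castSucc)).det *
            W (n+1)
              (fun i => if i = Fin.last n then r (Fin.last (n+1)) else r i.castSucc)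
              (k' + (n : ℕ)) := by
      intro k'
      rw [IHD (n+1) (by omega) k' _ hsm,
        Fin.prod_univ_castSucc, IHD n (by omega) k' (fun i => r i.castSucc.castSucc) hr'']
      congr 1
      apply Finset.prod_congr rfl
      intro j _
      exact hWfun j (k' + (j : ℕ))
    -- the recursion written with determinant data
    have hkey := key ζ hζ w n k r (hD (k+1))
    have hrb : (Dm ζ w (n+1) (k+1) (fun i => r i.castSucc)).det =
        (Dm ζ w n (k+1) (fun i => r i.castSucc.castSucc)).det *
          W (n+1) (fun i => r i.castSucc) (k + (n : ℕ) + 1) := by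
      rw [hstepr' (k+1), show k + 1 + ((n : ℕ) : ℤ) = k + (n : ℕ) + 1 by ring]
    have hsb : (Dm ζ w (n+1) (k+1)
        (fun i => if i = Fin.last n then r (Fin.last (n+1)) else r i.castSucc)).det =
        (Dm ζ w n (k+1) (fun i => r i.castSucc.castSucc)).det *
          W (n+1) (fun i => if i = Fin.last n then r (Fin.last (n+1)) else r i.castSucc)
            (k + (n : ℕ) + 1) := by
      rw [hsteps (k+1), show k + 1 + ((n : ℕ) : ℤ) = k + (n : ℕ) + 1 by ring]
    rw [hstepr' k, hsteps k, hrb, hsb] at hkey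
    have hW1ne := hWden n r hr (k + (n : ℕ))
    have hrec := hWrec n r hr (k + (n : ℕ))
    -- final assembly
    have hA : (Dm ζ w (n+2) k r).det =
        (Dm ζ w n k (fun i => r i.castSucc.castSucc)).det *
          (W (n+1) (fun i => r i.castSucc) (k + (n : ℕ)) *
            W (n+1) (fun i => if i = Fin.last n then r (Fin.last (n+1)) else r i.castSucc)
              (k + (n : ℕ) + 1) * ζ (r (Fin.last (n+1))) -
          W (n+1) (fun i => r i.castSucc) (k + (n : ℕ) + 1) *
            W (n+1) (fun i => if i = Fin.last n then r (Fin.last (n+1)) else r i.castSucc)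
              (k + (n : ℕ)) * ζ (r ((Fin.last n).castSucc))) := by
      apply mul_right_cancel₀ (hD (k+1))
      linear_combination hkey
    have hgoal : (Dm ζ w (n+2) k r).det =
        (Dm ζ w (n+1) k (fun i => r i.castSucc)).det *
          W (n+2) r (k + (n : ℕ) + 1) := by
      rw [hrec, hA, hstepr' k]
      field_simp
    show (Dm ζ w (n+2) k r).det = _
    calc (Dm ζ w (n+2) k r).det
        = (Dm ζ w (n+1) k (fun i => r i.castSucc)).det *
            W (n+2) r (k + (n : ℕ) + 1) := hgoal
      _ = (∏ j : Fin (n+1),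
            W ((j : ℕ) + 1)
              (fun i : Fin ((j : ℕ) + 1) => r (Fin.castLE (by omega) i)) (k + (j : ℕ))) *
            W (n+2) r (k + (n : ℕ) + 1) := by
          rw [IHD (n+1) (by omega) k (fun i => r i.castSucc) hr']
          rfl
      _ = ∏ j : Fin (n+2),
            W ((j : ℕ) + 1)
              (fun i : Fin ((j : ℕ) + 1) => r (Fin.castLE (by omega) i)) (k + (j : ℕ)) := by
          rw [show (k + ((n : ℕ) : ℤ) + 1) = k + (((n+1 : ℕ) : ℕ) : ℤ) by push_cast; ring]
          conv_rhs => rw [Fin.prod_univ_castSucc]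
          rfl
end

section
/- Let M ≥ 1, N ≥ 1, let ζ_0, …, ζ_{N−1} be real numbers with 0 < ζ_0 < ζ_1 < … < ζ_{N−1}, set z_r := ζ_r^M, let s^{(0)}, s^{(1)}, … be real numbers with s^{(τ)} < z_0 for all τ ≥ 0, and let w_r^{(m)} (0 ≤ r ≤ N−1, m ∈ ℤ) be positive reals with w_r^{(m+M)} = w_r^{(m)}. Define the recursive quantities w^{(m)}_{r_0,…,r_{n−1}} by w^{(m+1)}_{r_0,…,r_{n−3},r_{n−2},r_{n−1}} := ( w^{(m)}_{r_0,…,r_{n−3},r_{n−2}} w^{(m+1)}_{r_0,…,r_{n−3},r_{n−1}} ζ_{r_{n−1}} − w^{(m+1)}_{r_0,…,r_{n−3},r_{n−2}} w^{(m)}_{r_0,…,r_{n−3},r_{n−1}} ζ_{r_{n−2}} ) / w^{(m)}_{r_0,…,r_{n−3},r_{n−2}}, and suppose the strict inequality w^{(m)}_{r_0,…,r_{n−3},r_{n−2}} · w^{(m+1)}_{r_0,…,r_{n−3},r_{n−1}} · ζ_{r_{n−1}} > w^{(m+1)}_{r_0,…,r_{n−3},r_{n−2}} · w^{(m)}_{r_0,…,r_{n−3},r_{n−1}}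 · ζ_{r_{n−2}} holds for all m and all strictly increasing tuples of length n, 2 ≤ n ≤ N. Then, defining μ^{(t)}_m := Σ_{r=0}^{N−1} w_r^{(m)} ζ_r^m Π_{τ=0}^{t−1}(z_r − s^{(τ)}) and τ^{(k,t)}_n := det(μ^{(t)}_{k+i+Mj})_{i,j=0}^{n-1}, we have τ^{(k,t)}_n > 0 for all k ≥ 0, all t ≥ 0, and all 1 ≤ n ≤ N. -/
open Matrix Finset in
private lemma det_one_upd_upd {q : ℕ} {R : Type*} [CommRing R]
    (c d : Fin q) (hcd : c ≠ d) (u v : Fin q → R) :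
    (((1 : Matrix (Fin q) (Fin q) R).updateCol c u).updateCol d v).det
      = u c * v d - u d * v c := by
  classical
  set E := (((1 : Matrix (Fin q) (Fin q) R).updateCol c u).updateCol d v) with hE
  have hEapp : ∀ k l, E k l
      = if l = d then v k else if l = c then u k else if k = l then 1 else 0 := by
    intro k l
    simp only [hE, Matrix.updateCol_apply, Matrix.one_apply]
  have hswapne : Equiv.swap c d ≠ Equiv.refl (Fin q) := by
    intro h
    have := congrFun (congrArg (fun (e : Equiv.Perm (Fin q)) => (e : Fin q → Fin q)) h) c
    simp [Equiv.swap_apply_left] at this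
    exact hcd this.symm
  have hvanish : ∀ σ : Equiv.Perm (Fin q), σ ∈ (univ : Finset (Equiv.Perm (Fin q))) →
      σ ∉ ({Equiv.refl (Fin q), Equiv.swap c d} : Finset (Equiv.Perm (Fin q))) →
      Equiv.Perm.sign σ • ∏ i, E (σ i) i = (0 : R) := by
    intro σ _ hσ
    simp only [Finset.mem_insert, Finset.mem_singleton] at hσ
    push_neg at hσ
    obtain ⟨h1, h2⟩ := hσ
    by_cases hfix : ∀ l, l ≠ c → l ≠ d → σ l = l
    · -- then σ c, σ d ∈ {c, d}
      have hσc : σ c = c ∨ σ c = d := by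
        by_contra hx
        push_neg at hx
        have := hfix (σ c) hx.1 hx.2
        exact hx.1 (σ.injective this)
      have hσd : σ d = c ∨ σ d = d := by
        by_contra hx
        push_neg at hx
        have := hfix (σ d) hx.1 hx.2
        exact hx.2 (σ.injective this)
      rcases hσc with h | h
      · have hdd : σ d = d := by
          rcases hσd with h' | h'
          · exact absurd (σ.injective (h.trans h'.symm)) hcd
          · exact h'
        exact absurd (Equiv.ext fun l => by
          by_cases hl1 : l = c
          · rw [hl1]; exact h
          · by_cases hl2 : l = d
            · rw [hl2]; exact hdd
            · exact hfix l hl1 hl2) h1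
      · have hdc : σ d = c := by
          rcases hσd with h' | h'
          · exact h'
          · exact absurd (σ.injective (h.trans h'.symm)).symm (fun hh => hcd hh.symm)
        exact absurd (Equiv.ext fun l => by
          by_cases hl1 : l = c
          · rw [hl1, Equiv.swap_apply_left, h]
          · by_cases hl2 : l = d
            · rw [hl2, Equiv.swap_apply_right, hdc]
            · rw [Equiv.swap_apply_of_ne_of_ne hl1 hl2]
              exact hfix l hl1 hl2) h2
    · push_neg at hfix
      obtain ⟨l, hl1, hl2, hl3⟩ := hfix
      have hz : E (σ l) l = 0 := by
        rw [hEapp, if_neg hl2, if_neg hl1, if_neg hl3]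
      have : (∏ i, E (σ i) i) = 0 := Finset.prod_eq_zero (Finset.mem_univ l) hz
      rw [this, smul_zero]
  rw [Matrix.det_apply]
  rw [← Finset.sum_subset (Finset.subset_univ _) hvanish]
  have hne : Equiv.refl (Fin q) ≠ Equiv.swap c d := fun h => hswapne h.symm
  rw [Finset.sum_pair hne]
  have hid : (∏ i, E ((Equiv.refl (Fin q)) i) i) = u c * v d := by
    rw [← Finset.mul_prod_erase univ _ (Finset.mem_univ c),
      ← Finset.mul_prod_erase _ _
        (Finset.mem_erase.2 ⟨fun h : d = c => hcd h.symm, Finset.mem_univ d⟩)]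
    have e1 : E ((Equiv.refl (Fin q)) c) c = u c := by
      rw [hEapp]; simp [if_neg hcd, hcd]
    have e2 : E ((Equiv.refl (Fin q)) d) d = v d := by rw [hEapp]; simp
    rw [e1, e2]
    rw [Finset.prod_eq_one, mul_one]
    intro l hl
    simp only [Finset.mem_erase] at hl
    rw [hEapp]
    simp [hl.1, hl.2.1]
  have hsw : (∏ i, E ((Equiv.swap c d) i) i) = u d * v c := by
    rw [← Finset.mul_prod_erase univ _ (Finset.mem_univ c),
      ← Finset.mul_prod_erase _ _
        (Finset.mem_erase.2 ⟨fun h : d = c => hcd h.symm, Finset.mem_univ d⟩)]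
    have e1 : E ((Equiv.swap c d) c) c = u d := by
      rw [Equiv.swap_apply_left, hEapp]; simp [if_neg hcd, hcd]
    have e2 : E ((Equiv.swap c d) d) d = v c := by
      rw [Equiv.swap_apply_right, hEapp]; simp
    rw [e1, e2]
    rw [Finset.prod_eq_one, mul_one]
    intro l hl
    simp only [Finset.mem_erase] at hl
    rw [Equiv.swap_apply_of_ne_of_ne hl.2.1 hl.1, hEapp]
    simp [hl.1, hl.2.1]
  rw [hid, hsw]
  simp [Equiv.Perm.sign_swap hcd]
  ring

open Matrix in
private lemma updateColumn_comm' {q : ℕ} {R : Type*} [CommRing R] {c d : Fin q} (hcd : c ≠ d)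
    (Mx : Matrix (Fin q) (Fin q) R) (u v : Fin q → R) :
    (Mx.updateCol c u).updateCol d v = (Mx.updateCol d v).updateCol c u := by
  ext i l
  simp only [Matrix.updateCol_apply]
  by_cases h1 : l = d <;> by_cases h2 : l = c <;> simp_all

open Matrix in
private lemma det_updateColumn_single' {q : ℕ} {R : Type*} [CommRing R]
    (A : Matrix (Fin q) (Fin q) R) (a c : Fin q) :
    (A.updateCol c (Pi.single a 1)).det = adjugate A c a := by
  rw [← Matrix.det_transpose, ← Matrix.updateRow_transpose, ← Matrix.adjugate_apply,
    ← Matrix.adjugate_transpose, Matrix.transpose_apply]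

open Matrix in
private lemma jacobi_domain {q : ℕ} {R : Type*} [CommRing R] [IsDomain R]
    (A : Matrix (Fin q) (Fin q) R) (hA : A.det ≠ 0) (a b c d : Fin q) (hcd : c ≠ d) :
    A.det * (((A.updateCol c (Pi.single a 1)).updateCol d (Pi.single b 1)).det)
      = (A.updateCol c (Pi.single a 1)).det * (A.updateCol d (Pi.single b 1)).det
        - (A.updateCol c (Pi.single b 1)).det * (A.updateCol d (Pi.single a 1)).det := by
  classical
  set B := adjugate A with hB
  have hmulupd : ∀ (Mx : Matrix (Fin q) (Fin q) R) (j : Fin q) (u : Fin q → R),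
      A * (Mx.updateCol j u) = (A * Mx).updateCol j (A.mulVec u) := by
    intro Mx j u
    ext i l
    by_cases hl : l = j
    · subst hl
      simp [Matrix.mul_apply, Matrix.mulVec, dotProduct]
    · simp [Matrix.mul_apply, Matrix.updateCol_ne hl]
  have hcol : ∀ e : Fin q, A.mulVec (fun i => B i e) = (A.det • (Pi.single e 1 : Fin q → R)) := by
    intro e
    funext i
    have : (A * B) i e = (A.det • (1 : Matrix (Fin q) (Fin q) R)) i e := by
      rw [Matrix.mul_adjugate]
    simpa [Matrix.mul_apply, Matrix.mulVec, dotProduct, Matrix.one_apply, Pi.single_apply,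
      Matrix.smul_apply] using this
  have hprod : A * (((1 : Matrix (Fin q) (Fin q) R).updateCol c (fun i => B i a)).updateCol d
      (fun i => B i b))
      = ((A.updateCol c ((A.det • (Pi.single a 1 : Fin q → R)))).updateCol d ((A.det • (Pi.single b 1 : Fin q → R)))) := by
    rw [hmulupd, hmulupd, Matrix.mul_one, hcol, hcol]
  have hdF : (((1 : Matrix (Fin q) (Fin q) R).updateCol c (fun i => B i a)).updateCol d
      (fun i => B i b)).det = B c a * B d b - B d a * B c b :=
    det_one_upd_upd c d hcd _ _
  have hrhsdet : ((A.updateCol c ((A.det • (Pi.single a 1 : Fin q → R)))).updateCol d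
        ((A.det • (Pi.single b 1 : Fin q → R)))).det
      = A.det * A.det * ((A.updateCol c (Pi.single a 1)).updateCol d (Pi.single b 1)).det := by
    rw [Matrix.det_updateCol_smul]
    rw [updateColumn_comm' hcd, Matrix.det_updateCol_smul, updateColumn_comm' hcd.symm]
    ring
  have key : A.det * (B c a * B d b - B d a * B c b)
      = A.det * (A.det * ((A.updateCol c (Pi.single a 1)).updateCol d
          (Pi.single b 1)).det) := by
    rw [← hdF, ← Matrix.det_mul, hprod, hrhsdet]; ring
  have := mul_left_cancel₀ hA key
  rw [← this, det_updateColumn_single', det_updateColumn_single', det_updateColumn_single',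
    det_updateColumn_single', ← hB]
  ring

open Matrix in
private lemma jacobi {q : ℕ} {R : Type*} [CommRing R]
    (A : Matrix (Fin q) (Fin q) R) (a b c d : Fin q) (hcd : c ≠ d) :
    A.det * (((A.updateCol c (Pi.single a 1)).updateCol d (Pi.single b 1)).det)
      = (A.updateCol c (Pi.single a 1)).det * (A.updateCol d (Pi.single b 1)).det
        - (A.updateCol c (Pi.single b 1)).det * (A.updateCol d (Pi.single a 1)).det := by
  classical
  let X := Matrix.mvPolynomialX (Fin q) (Fin q) ℤ
  have hX : X.det ≠ 0 := Matrix.det_mvPolynomialX_ne_zero (Fin q) ℤ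
  have hgen := jacobi_domain X hX a b c d hcd
  let f : MvPolynomial (Fin q × Fin q) ℤ →+* R :=
    (MvPolynomial.eval₂Hom (Int.castRingHom R) (fun p : Fin q × Fin q => A p.1 p.2))
  have hmapX : X.map f = A := by
    ext i j
    simp [X, f, Matrix.mvPolynomialX]
  have hsingle : ∀ e : Fin q, (f ∘ Pi.single e (1 : MvPolynomial (Fin q × Fin q) ℤ))
      = Pi.single e (1 : R) := by
    intro e
    funext i
    simp only [Function.comp_apply, Pi.single_apply]
    split <;> simp
  have happ := congrArg f hgen
  simp only [_root_.map_mul, _root_.map_sub] at happ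
  rw [RingHom.map_det, RingHom.map_det, RingHom.map_det, RingHom.map_det, RingHom.map_det,
    RingHom.map_det] at happ
  simp only [RingHom.mapMatrix_apply] at happ
  simp only [Matrix.map_updateCol, hsingle, hmapX] at happ
  exact happ

open Matrix in
private lemma submatrix_updateColumn_of {R : Type*} {m n m' n' : Type*} [DecidableEq n]
    [DecidableEq n'] (A : Matrix m n R) (f : m' → m) (g : n' → n) (hg : Function.Injective g)
    (c' : n') (v : m → R) :
    (A.updateCol (g c') v).submatrix f g = (A.submatrix f g).updateCol c' (v ∘ f) := by
  ext i j
  simp only [Matrix.submatrix_apply, Matrix.updateCol_apply]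
  by_cases h : j = c'
  · simp [h]
  · simp [h, hg.ne h]

open Matrix in
private lemma det_updateColumn_single_submatrix {q : ℕ} {R : Type*} [CommRing R]
    (A : Matrix (Fin (q+1)) (Fin (q+1)) R) (a c : Fin (q+1)) :
    (A.updateCol c (Pi.single a 1)).det
      = (-1) ^ ((a : ℕ) + (c : ℕ)) * (A.submatrix a.succAbove c.succAbove).det := by
  rw [det_updateColumn_single', Matrix.adjugate_fin_succ_eq_det_submatrix]

open Matrix in
private lemma det_jacobi_rec {p : ℕ} {R : Type*} [CommRing R]
    (A : Matrix (Fin (p+2)) (Fin (p+2)) R) :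
    A.det * (A.submatrix (Fin.castSucc ∘ Fin.succ) (Fin.castSucc ∘ Fin.castSucc)).det
      = (A.submatrix Fin.succ ((Fin.last p).castSucc.succAbove)).det
          * (A.submatrix Fin.castSucc Fin.castSucc).det
        - (A.submatrix Fin.castSucc ((Fin.last p).castSucc.succAbove)).det
          * (A.submatrix Fin.succ Fin.castSucc).det := by
  classical
  set c : Fin (p+2) := (Fin.last p).castSucc with hc
  set d : Fin (p+2) := Fin.last (p+1) with hd
  have hcd : c ≠ d := (Fin.castSucc_lt_last (Fin.last p)).ne
  have hcval : (c : ℕ) = p := by simp [hc]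
  have hdval : (d : ℕ) = p + 1 := by simp [hd]
  have J := jacobi A (0 : Fin (p+2)) d c d hcd
  -- the four single minors
  have h1 : (A.updateCol c (Pi.single (0 : Fin (p+2)) 1)).det
      = (-1 : R) ^ p * (A.submatrix Fin.succ (c.succAbove)).det := by
    rw [det_updateColumn_single_submatrix, Fin.succAbove_zero]
    norm_num [hcval]
  have h2 : (A.updateCol d (Pi.single d 1)).det
      = (A.submatrix Fin.castSucc Fin.castSucc).det := by
    rw [det_updateColumn_single_submatrix, hd, Fin.succAbove_last]
    rw [hdval]
    have : (-1 : R) ^ ((p+1) + (p+1)) = 1 := Even.neg_one_pow ⟨p+1, rfl⟩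
    rw [this, one_mul]
  have h3 : (A.updateCol c (Pi.single d 1)).det
      = -((A.submatrix Fin.castSucc (c.succAbove)).det) := by
    rw [det_updateColumn_single_submatrix, hd, Fin.succAbove_last]
    rw [hdval, hcval]
    have : (-1 : R) ^ ((p+1) + p) = -1 := Odd.neg_one_pow ⟨p, by ring⟩
    rw [this]; ring
  have h4 : (A.updateCol d (Pi.single (0 : Fin (p+2)) 1)).det
      = -((-1 : R) ^ p * (A.submatrix Fin.succ Fin.castSucc).det) := by
    rw [det_updateColumn_single_submatrix, Fin.succAbove_zero, hd, Fin.succAbove_last]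
    rw [hdval]
    simp only [Fin.val_zero, Nat.zero_add, pow_succ]
    ring
  -- the double minor
  have hK : ((A.updateCol c (Pi.single (0 : Fin (p+2)) 1)).updateCol d
        (Pi.single d 1)).det
      = (-1 : R) ^ p
          * (A.submatrix (Fin.castSucc ∘ Fin.succ) (Fin.castSucc ∘ Fin.castSucc)).det := by
    rw [det_updateColumn_single_submatrix _ d d, hd, Fin.succAbove_last, hdval]
    have he : (-1 : R) ^ ((p+1) + (p+1)) = 1 := Even.neg_one_pow ⟨p+1, rfl⟩
    rw [he, one_mul]
    have hsub : (A.updateCol c (Pi.single (0 : Fin (p+2)) 1)).submatrix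
          (Fin.castSucc : Fin (p+1) → Fin (p+2)) Fin.castSucc
        = (A.submatrix Fin.castSucc Fin.castSucc).updateCol (Fin.last p)
            ((Pi.single (0 : Fin (p+2)) (1:R)) ∘ Fin.castSucc) := by
      rw [hc, ← submatrix_updateColumn_of A Fin.castSucc Fin.castSucc
        (Fin.castSucc_injective (p+1)) (Fin.last p)]
    rw [hsub]
    have hsingle : ((Pi.single (0 : Fin (p+2)) (1:R)) ∘ Fin.castSucc)
        = Pi.single (0 : Fin (p+1)) 1 := by
      funext i
      simp only [Function.comp_apply, Pi.single_apply]
      by_cases h : i = 0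
      · subst h; simp
      · rw [if_neg h, if_neg]
        simpa using h
    rw [hsingle, det_updateColumn_single_submatrix]
    simp only [Fin.val_zero, Fin.val_last, Nat.zero_add, Fin.succAbove_zero, Fin.succAbove_last]
    rw [Matrix.submatrix_submatrix]
  rw [h1, h2, h3, h4, hK] at J
  set e : R := (-1 : R) ^ p with hee
  have he : e * e = 1 := by
    rw [hee, ← pow_add]
    exact Even.neg_one_pow ⟨p, rfl⟩
  set X := A.det
  set K := (A.submatrix (Fin.castSucc ∘ Fin.succ) (Fin.castSucc ∘ Fin.castSucc)).det
  set M1 := (A.submatrix Fin.succ (c.succAbove)).det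
  set M2 := (A.submatrix Fin.castSucc Fin.castSucc).det
  set M3 := (A.submatrix Fin.castSucc (c.succAbove)).det
  set M4 := (A.submatrix Fin.succ Fin.castSucc).det
  linear_combination e * J - (X * K - M1 * M2 + M3 * M4) * he

open Matrix Finset in
private lemma det_rows_sum_pos {n N : ℕ} (hn : 1 ≤ n) (hnN : n ≤ N)
    (C : Fin n → Fin N → ℝ) (z : Fin N → ℝ) (hz : StrictMono z)
    (hC : ∀ ψ : Fin n → Fin N, StrictMono ψ →
      0 < (Matrix.of fun i l : Fin n => C i (ψ l)).det) :
    0 < (Matrix.of fun i j : Fin n => ∑ r : Fin N, C i r * z r ^ (j : ℕ)).det := by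
  classical
  set F : (Fin n → Fin N) → ℝ :=
    fun φ => (∏ i, C i (φ i)) * (Matrix.vandermonde (z ∘ φ)).det with hF
  have hexp : (Matrix.of fun i j : Fin n => ∑ r : Fin N, C i r * z r ^ (j : ℕ)).det
      = ∑ φ : Fin n → Fin N, F φ := by
    have h0 : (Matrix.of fun i j : Fin n => ∑ r : Fin N, C i r * z r ^ (j : ℕ)).det
        = Matrix.detRowAlternating
            (fun i : Fin n => ∑ r : Fin N, (fun j : Fin n => C i r * z r ^ (j : ℕ))) := by
      congr 1
      ext i j
      simp only [Matrix.of_apply, Finset.sum_apply]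
    rw [h0]
    rw [show (Matrix.detRowAlternating
            (fun i : Fin n => ∑ r : Fin N, (fun j : Fin n => C i r * z r ^ (j : ℕ))) : ℝ)
        = Matrix.detRowAlternating.toMultilinearMap
            (fun i : Fin n => ∑ r : Fin N, (fun j : Fin n => C i r * z r ^ (j : ℕ))) from rfl]
    rw [MultilinearMap.map_sum]
    refine Finset.sum_congr rfl fun φ _ => ?_
    have h1 : (Matrix.detRowAlternating.toMultilinearMap
          (fun i : Fin n => (fun j : Fin n => C i (φ i) * z (φ i) ^ (j : ℕ))) : ℝ)
        = (Matrix.of fun i j : Fin n => C i (φ i) * z (φ i) ^ (j : ℕ)).det := rfl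
    rw [h1, hF]
    have h2 : (Matrix.of fun i j : Fin n => C i (φ i) * z (φ i) ^ (j : ℕ))
        = Matrix.of (fun i j : Fin n => (fun k => C k (φ k)) i
            * (Matrix.vandermonde (z ∘ φ)) i j) := rfl
    rw [h2, Matrix.det_mul_column]
  rw [hexp]
  have hvanish : ∀ φ : Fin n → Fin N, ¬ Function.Injective φ → F φ = 0 := by
    intro φ hφ
    simp only [Function.Injective, not_forall] at hφ
    obtain ⟨i, j, hij, hne⟩ := hφ
    rcases lt_or_gt_of_ne hne with hlt | hlt
    · have : (Matrix.vandermonde (z ∘ φ)).det = 0 := by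
        rw [Matrix.det_vandermonde]
        refine Finset.prod_eq_zero (Finset.mem_univ i) ?_
        refine Finset.prod_eq_zero (Finset.mem_Ioi.2 hlt) ?_
        simp [hij]
      rw [hF]; simp [this]
    · have : (Matrix.vandermonde (z ∘ φ)).det = 0 := by
        rw [Matrix.det_vandermonde]
        refine Finset.prod_eq_zero (Finset.mem_univ j) ?_
        refine Finset.prod_eq_zero (Finset.mem_Ioi.2 hlt) ?_
        simp [hij]
      rw [hF]; simp [this]
  rw [← Finset.sum_filter_of_ne (p := fun φ : Fin n → Fin N => Function.Injective φ)
    (fun φ _ h => by by_contra hinj; exact h (hvanish φ hinj))]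
  rw [← Finset.sum_fiberwise_of_maps_to (g := fun φ : Fin n → Fin N => Finset.univ.image φ)
    (t := Finset.powersetCard n (Finset.univ : Finset (Fin N)))
    (fun φ hφ => by
      simp only [Finset.mem_filter] at hφ
      rw [Finset.mem_powersetCard]
      exact ⟨Finset.subset_univ _, by
        rw [Finset.card_image_of_injective _ hφ.2, Finset.card_univ, Fintype.card_fin]⟩)]
  apply Finset.sum_pos
  · intro s hs
    have hcard : s.card = n := (Finset.mem_powersetCard.mp hs).2
    set emb := s.orderEmbOfFin hcard with hemb
    have hembinj : Function.Injective (⇑emb) := emb.injective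
    have hembmono : StrictMono (⇑emb) := emb.strictMono
    have himgemb : Finset.univ.image (⇑emb) = s := by
      ext x
      simp only [Finset.mem_image]
      constructor
      · rintro ⟨i, -, rfl⟩
        exact Finset.orderEmbOfFin_mem s hcard i
      · intro hx
        exact ⟨(s.orderIsoOfFin hcard).symm ⟨x, hx⟩, Finset.mem_univ _,
          by rw [← Finset.coe_orderIsoOfFin_apply, OrderIso.apply_symm_apply]⟩
    have hfib : ∑ φ ∈ (Finset.univ.filter
          (fun φ : Fin n → Fin N => Function.Injective φ)).filter
          (fun φ => Finset.univ.image φ = s), F φ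
        = ∑ σ : Equiv.Perm (Fin n), F (⇑emb ∘ ⇑σ) := by
      have toS : ∀ (φ : Fin n → Fin N), Finset.univ.image φ = s → ∀ i, φ i ∈ s := by
        intro φ himg i
        rw [← himg]
        exact Finset.mem_image_of_mem φ (Finset.mem_univ i)
      refine Finset.sum_bij' (i := fun φ hφ => ?_) (j := fun σ _ => ⇑emb ∘ ⇑σ) ?_ ?_ ?_ ?_ ?_
      · -- construct the permutation from φ
        have hφ' := Finset.mem_filter.mp hφ
        have hinj : Function.Injective φ := (Finset.mem_filter.mp hφ'.1).2
        have himg : Finset.univ.image φ = s := hφ'.2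
        exact Equiv.ofBijective (fun i => (s.orderIsoOfFin hcard).symm ⟨φ i, toS φ himg i⟩)
          (Finite.injective_iff_bijective.mp (fun a b hab => by
            have := congrArg (fun y => ((s.orderIsoOfFin hcard) y : Fin N)) hab
            simp only [OrderIso.apply_symm_apply] at this
            exact hinj this))
      · intro φ hφ
        exact Finset.mem_univ _
      · -- emb ∘ σ lands in the fiber
        intro σ _
        simp only [Finset.mem_filter]
        refine ⟨⟨Finset.mem_univ _, hembinj.comp σ.injective⟩, ?_⟩
        rw [← Finset.image_image, Finset.image_univ_equiv, himgemb]
      · -- left inverse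
        intro φ hφ
        funext i
        simp only [Function.comp_apply, Equiv.ofBijective_apply]
        rw [← Finset.coe_orderIsoOfFin_apply, OrderIso.apply_symm_apply]
      · -- right inverse
        intro σ _
        apply Equiv.ext
        intro i
        simp only [Equiv.ofBijective_apply, Function.comp_apply]
        rw [OrderIso.symm_apply_eq]
        apply Subtype.ext
        simp only [Finset.coe_orderIsoOfFin_apply]
        rw [hemb]
      · -- values agree
        intro φ hφ
        congr 1
        funext i2
        simp only [Function.comp_apply, Equiv.ofBijective_apply]
        rw [← Finset.coe_orderIsoOfFin_apply, OrderIso.apply_symm_apply]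
    rw [hfib]
    -- evaluate the sum over permutations
    have hFσ : ∀ σ : Equiv.Perm (Fin n), F (⇑emb ∘ ⇑σ)
        = (((Equiv.Perm.sign σ : ℤ) : ℝ) * ∏ i, C i (emb (σ i)))
            * (Matrix.vandermonde (z ∘ ⇑emb)).det := by
      intro σ
      simp only [hF]
      have hperm : Matrix.vandermonde (z ∘ (⇑emb ∘ ⇑σ))
          = (Matrix.vandermonde (z ∘ ⇑emb)).submatrix ⇑σ id := by
        ext i j
        simp [Matrix.vandermonde]
      rw [hperm, Matrix.det_permute]
      simp only [Function.comp_apply]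
      push_cast
      ring
    rw [Finset.sum_congr rfl (fun σ _ => hFσ σ), ← Finset.sum_mul]
    have hsum : ∑ σ : Equiv.Perm (Fin n),
          (((Equiv.Perm.sign σ : ℤ) : ℝ) * ∏ i, C i (emb (σ i)))
        = (Matrix.of fun i l : Fin n => C i (emb l)).det := by
      have : (Matrix.of fun l i : Fin n => C i (emb l))
          = (Matrix.of fun i l : Fin n => C i (emb l))ᵀ := rfl
      rw [← Matrix.det_transpose, ← this, Matrix.det_apply']
      refine Finset.sum_congr rfl fun σ _ => ?_
      simp only [Matrix.of_apply]
    rw [hsum]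
    apply mul_pos (hC (⇑emb) hembmono)
    rw [Matrix.det_vandermonde]
    apply Finset.prod_pos
    intro i _
    apply Finset.prod_pos
    intro j hj
    have hij : i < j := Finset.mem_Ioi.mp hj
    have : z (emb i) < z (emb j) := hz (hembmono hij)
    simp only [Function.comp_apply]
    linarith
  · exact Finset.powersetCard_nonempty.2 (by simpa using hnN)

private def Dmat (N : ℕ) (ζ : Fin N → ℝ) (w : Fin N → ℤ → ℝ) (n : ℕ)
    (r : Fin n → Fin N) (m : ℤ) : ℝ :=
  (Matrix.of fun i l : Fin n => w (r l) (m + (i : ℕ)) * ζ (r l) ^ (i : ℕ)).det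

private lemma last_succAbove_pt {n : ℕ} (i : Fin (n+1)) :
    ((Fin.last n).castSucc).succAbove i
      = if i = Fin.last n then Fin.last (n+1) else i.castSucc := by
  by_cases h : i = Fin.last n
  · subst h
    rw [if_pos rfl, Fin.succAbove_of_le_castSucc _ _ le_rfl, Fin.succ_last]
  · rw [if_neg h]
    have : i < Fin.last n := lt_of_le_of_ne (Fin.le_last i) h
    exact Fin.succAbove_of_castSucc_lt _ _ (by simpa using this)

private lemma strictMono_cs {N n : ℕ} {r : Fin (n+1) → Fin N} (hr : StrictMono r) :
    StrictMono (fun i : Fin n => r i.castSucc) :=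
  fun _ _ hab => hr (by simpa using hab)

private lemma strictMono_rg {N n : ℕ} {r : Fin (n+2) → Fin N} (hr : StrictMono r) :
    StrictMono (fun i : Fin (n+1) =>
      if i = Fin.last n then r (Fin.last (n+1)) else r i.castSucc) := by
  intro a b hab
  by_cases hb : b = Fin.last n
  · subst hb
    simp only [if_neg hab.ne, if_pos rfl]
    exact hr (Fin.castSucc_lt_last a)
  · have ha : a ≠ Fin.last n := by
      intro h; subst h
      exact absurd hab (Fin.le_last b).not_gt
    simp only [if_neg ha, if_neg hb]
    exact hr (by simpa using hab)

private lemma Dmat_pos {N : ℕ} (ζ : Fin N → ℝ) (hζpos : ∀ r, 0 < ζ r)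
    (w : Fin N → ℤ → ℝ) (hwpos : ∀ r m, 0 < w r m)
    (W : (n : ℕ) → (Fin n → Fin N) → ℤ → ℝ)
    (hW1 : ∀ (r : Fin 1 → Fin N) (m : ℤ), W 1 r m = w (r 0) m)
    (hWrec : ∀ (n : ℕ) (r : Fin (n + 2) → Fin N), StrictMono r → ∀ m : ℤ,
      W (n + 2) r (m + 1) =
        (W (n + 1) (fun i => r i.castSucc) m *
            W (n + 1) (fun i => if i = Fin.last n then r (Fin.last (n + 1)) else r i.castSucc)
              (m + 1) *
            ζ (r (Fin.last (n + 1))) -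
          W (n + 1) (fun i => r i.castSucc) (m + 1) *
            W (n + 1) (fun i => if i = Fin.last n then r (Fin.last (n + 1)) else r i.castSucc)
              m *
            ζ (r ((Fin.last n).castSucc))) /
          W (n + 1) (fun i => r i.castSucc) m)
    (hWineq : ∀ (n : ℕ) (r : Fin (n + 2) → Fin N), StrictMono r → ∀ m : ℤ,
      W (n + 1) (fun i => r i.castSucc) (m + 1) *
          W (n + 1) (fun i => if i = Fin.last n then r (Fin.last (n + 1)) else r i.castSucc) m *
          ζ (r ((Fin.last n).castSucc)) <
        W (n + 1) (fun i => r i.castSucc) m *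
          W (n + 1) (fun i => if i = Fin.last n then r (Fin.last (n + 1)) else r i.castSucc)
            (m + 1) *
          ζ (r (Fin.last (n + 1)))) :
    ∀ n : ℕ, ∀ r : Fin (n+1) → Fin N, StrictMono r → ∀ m : ℤ,
      0 < Dmat N ζ w (n+1) r m := by
  -- positivity of the W quantities
  have hWpos : ∀ n : ℕ, ∀ r : Fin (n+1) → Fin N, StrictMono r → ∀ m : ℤ,
      0 < W (n+1) r m := by
    intro n
    induction n with
    | zero =>
      intro r _ m
      rw [hW1]
      exact hwpos _ _
    | succ n ih =>
      intro r hr m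
      have hm : m - 1 + 1 = m := by ring
      have hrec := hWrec n r hr (m - 1)
      have hineq := hWineq n r hr (m - 1)
      rw [hm] at hrec
      rw [hrec]
      apply div_pos
      · rw [hm] at hineq
        linarith
      · exact ih _ (strictMono_cs hr) (m - 1)
  -- main induction: the LU-factorisation identity and positivity of the Dmat's
  have main : ∀ n : ℕ,
      (∀ r : Fin (n+1) → Fin N, StrictMono r → ∀ m : ℤ,
        Dmat N ζ w (n+1) r m
          = Dmat N ζ w n (fun i => r i.castSucc) m * W (n+1) r (m + (n : ℕ))) ∧
      (∀ r : Fin n → Fin N, StrictMono r → ∀ m : ℤ, 0 < Dmat N ζ w n r m) ∧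
      (∀ r : Fin (n+1) → Fin N, StrictMono r → ∀ m : ℤ, 0 < Dmat N ζ w (n+1) r m) := by
    intro n
    induction n with
    | zero =>
      refine ⟨?_, ?_, ?_⟩
      · intro r _ m
        have h1 : Dmat N ζ w 1 r m = w (r 0) m := by
          rw [Dmat, Matrix.det_fin_one]
          simp
        have h0 : Dmat N ζ w 0 (fun i => r i.castSucc) m = 1 := by
          rw [Dmat, Matrix.det_fin_zero]
        rw [h1, h0, hW1]
        simp
      · intro r _ m
        rw [Dmat, Matrix.det_fin_zero]
        norm_num
      · intro r _ m
        have h1 : Dmat N ζ w 1 r m = w (r 0) m := by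
          rw [Dmat, Matrix.det_fin_one]
          simp
        rw [h1]
        exact hwpos _ _
    | succ n ih =>
      obtain ⟨KLn, hpos_n, hpos_n1⟩ := ih
      have KL : ∀ r : Fin (n+2) → Fin N, StrictMono r → ∀ m : ℤ,
          Dmat N ζ w (n+2) r m
            = Dmat N ζ w (n+1) (fun i => r i.castSucc) m * W (n+2) r (m + ((n+1 : ℕ) : ℤ)) := by
        intro r hr m
        set cs : Fin (n+1) → Fin N := fun i => r i.castSucc with hcs_def
        set rg : Fin (n+1) → Fin N :=
          fun i => if i = Fin.last n then r (Fin.last (n+1)) else r i.castSucc with hrg_def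
        set cc : Fin n → Fin N := fun i => r i.castSucc.castSucc with hcc_def
        have hcs : StrictMono cs := strictMono_cs hr
        have hrg : StrictMono rg := strictMono_rg hr
        have hcc : StrictMono cc := strictMono_cs hcs
        set A : Matrix (Fin (n+2)) (Fin (n+2)) ℝ :=
          Matrix.of (fun i l : Fin (n+2) => w (r l) (m + (i : ℕ)) * ζ (r l) ^ (i : ℕ)) with hA
        have J := det_jacobi_rec A
        -- identify the six determinants
        have hAdet : A.det = Dmat N ζ w (n+2) r m := rfl
        have hsub_cs_cs : (A.submatrix Fin.castSucc Fin.castSucc).det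
            = Dmat N ζ w (n+1) cs m := by
          congr 1
        have hsub_succ_cs : (A.submatrix Fin.succ Fin.castSucc).det
            = (∏ l : Fin (n+1), ζ (cs l)) * Dmat N ζ w (n+1) cs (m+1) := by
          rw [show A.submatrix Fin.succ Fin.castSucc
              = Matrix.of (fun i l : Fin (n+1) => ζ (cs l) *
                  (Matrix.of fun i l : Fin (n+1) =>
                    w (cs l) ((m+1) + (i : ℕ)) * ζ (cs l) ^ (i : ℕ)) i l) from ?_]
          · exact Matrix.det_mul_row _ _
          · ext i l
            simp only [Matrix.submatrix_apply, Matrix.of_apply, hA, hcs_def, Fin.val_succ]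
            rw [pow_succ]
            push_cast
            ring_nf
        have hsub_cs_g : (A.submatrix Fin.castSucc ((Fin.last n).castSucc.succAbove)).det
            = Dmat N ζ w (n+1) rg m := by
          congr 1
          ext i l
          rw [Matrix.submatrix_apply, last_succAbove_pt]
          by_cases h : l = Fin.last n
          · subst h; simp [hA, hrg_def]
          · simp [hA, hrg_def, h]
        have hsub_succ_g : (A.submatrix Fin.succ ((Fin.last n).castSucc.succAbove)).det
            = (∏ l : Fin (n+1), ζ (rg l)) * Dmat N ζ w (n+1) rg (m+1) := by
          rw [show A.submatrix Fin.succ ((Fin.last n).castSucc.succAbove)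
              = Matrix.of (fun i l : Fin (n+1) => ζ (rg l) *
                  (Matrix.of fun i l : Fin (n+1) =>
                    w (rg l) ((m+1) + (i : ℕ)) * ζ (rg l) ^ (i : ℕ)) i l) from ?_]
          · exact Matrix.det_mul_row _ _
          · ext i l
            rw [Matrix.submatrix_apply, last_succAbove_pt]
            by_cases h : l = Fin.last n
            · simp only [hA, hrg_def, Matrix.of_apply, h, if_true, eq_self_iff_true,
                Fin.val_succ, pow_succ]
              push_cast
              ring
            · simp only [hA, hrg_def, Matrix.of_apply, if_neg h, Fin.val_succ,
                Fin.coe_castSucc, pow_succ]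
              push_cast
              ring
        have hsub_cc : (A.submatrix (Fin.castSucc ∘ Fin.succ)
              (Fin.castSucc ∘ Fin.castSucc)).det
            = (∏ l : Fin n, ζ (cc l)) * Dmat N ζ w n cc (m+1) := by
          rw [show A.submatrix (Fin.castSucc ∘ Fin.succ) (Fin.castSucc ∘ Fin.castSucc)
              = Matrix.of (fun i l : Fin n => ζ (cc l) *
                  (Matrix.of fun i l : Fin n =>
                    w (cc l) ((m+1) + (i : ℕ)) * ζ (cc l) ^ (i : ℕ)) i l) from ?_]
          · exact Matrix.det_mul_row _ _
          · ext i l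
            simp only [Matrix.submatrix_apply, Matrix.of_apply, hA, hcc_def,
              Function.comp_apply, Fin.val_succ, Fin.coe_castSucc]
            rw [pow_succ]
            push_cast
            ring_nf
        rw [hAdet, hsub_cs_cs, hsub_succ_cs, hsub_cs_g, hsub_succ_g, hsub_cc] at J
        -- split the products of ζ's
        have hprod_g : (∏ l : Fin (n+1), ζ (rg l))
            = (∏ l : Fin n, ζ (cc l)) * ζ (r (Fin.last (n+1))) := by
          rw [Fin.prod_univ_castSucc]
          congr 1
          · apply Finset.prod_congr rfl
            intro l _
            simp only [hrg_def, hcc_def, if_neg (Fin.castSucc_lt_last l).ne]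
          · simp [hrg_def]
        have hprod_cs : (∏ l : Fin (n+1), ζ (cs l))
            = (∏ l : Fin n, ζ (cc l)) * ζ (r ((Fin.last n).castSucc)) := by
          rw [Fin.prod_univ_castSucc]
        rw [hprod_g, hprod_cs] at J
        -- apply the induction hypothesis (KL at level n) to the three (n+1)-minors
        have hfix_rg : (fun i : Fin n => rg i.castSucc) = cc := by
          funext i
          simp only [hrg_def, hcc_def, if_neg (Fin.castSucc_lt_last i).ne]
        have hfix_cs : (fun i : Fin n => cs i.castSucc) = cc := rfl
        have e_rg  := KLn rg hrg
        have e_cs  := KLn cs hcs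
        rw [hfix_rg] at e_rg
        rw [hfix_cs] at e_cs
        rw [e_rg m, e_rg (m+1), e_cs m, e_cs (m+1)] at J
        -- the W recursion at m + n
        have hden : W (n+1) cs (m + (n : ℕ)) ≠ 0 := (hWpos n cs hcs _).ne'
        have hrec := hWrec n r hr (m + (n : ℕ))
        rw [← hcs_def, ← hrg_def] at hrec
        rw [eq_div_iff hden] at hrec
        -- positivity of the factors to cancel
        have hPcc : 0 < ∏ l : Fin n, ζ (cc l) := Finset.prod_pos fun l _ => hζpos _
        have hDcc : 0 < Dmat N ζ w n cc (m+1) := hpos_n cc hcc (m+1)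
        have hfac : (∏ l : Fin n, ζ (cc l)) * Dmat N ζ w n cc (m+1) ≠ 0 :=
          (mul_pos hPcc hDcc).ne'
        have hcast : ((n+1 : ℕ) : ℤ) = (n : ℕ) + 1 := by push_cast; ring
        rw [hcast]
        have hadd2 : m + ((n:ℤ) + 1) = m + (n:ℤ) + 1 := by ring
        rw [hadd2]
        have hadd : m + 1 + (n : ℤ) = m + (n : ℤ) + 1 := by ring
        rw [hadd] at J
        apply mul_left_cancel₀ hfac
        rw [e_cs m]
        linear_combination J - (∏ l : Fin n, ζ (cc l)) * Dmat N ζ w n cc (m+1)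
            * Dmat N ζ w n cc m * hrec
      refine ⟨KL, hpos_n1, ?_⟩
      intro r hr m
      rw [KL r hr m]
      exact mul_pos (hpos_n1 _ (strictMono_cs hr) m) (hWpos (n+1) r hr _)
  intro n
  exact (main n).2.2

/-- Positivity of the tau functions of the nonautonomous discrete hungry Toda lattice with
finite lattice boundary condition: under the positivity condition on the Gauss-elimination
quantities `W`, all determinants `τ^{(k,t)}_n`, `1 ≤ n ≤ N`, are positive. -/
theorem stmt_15
    (M N : ℕ) (hM : 1 ≤ M) (hN : 1 ≤ N)
    (ζ : Fin N → ℝ) (hζpos : ∀ r, 0 < ζ r) (hζmono : StrictMono ζ)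
    (s : ℕ → ℝ) (hs : ∀ t : ℕ, s t < ζ ⟨0, hN⟩ ^ M)
    (w : Fin N → ℤ → ℝ) (hwpos : ∀ r m, 0 < w r m)
    (hwper : ∀ (r : Fin N) (m : ℤ), w r (m + M) = w r m)
    (W : (n : ℕ) → (Fin n → Fin N) → ℤ → ℝ)
    (hW1 : ∀ (r : Fin 1 → Fin N) (m : ℤ), W 1 r m = w (r 0) m)
    (hWrec : ∀ (n : ℕ) (r : Fin (n + 2) → Fin N), StrictMono r → ∀ m : ℤ,
      W (n + 2) r (m + 1) =
        (W (n + 1) (fun i => r i.castSucc) m *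
            W (n + 1) (fun i => if i = Fin.last n then r (Fin.last (n + 1)) else r i.castSucc)
              (m + 1) *
            ζ (r (Fin.last (n + 1))) -
          W (n + 1) (fun i => r i.castSucc) (m + 1) *
            W (n + 1) (fun i => if i = Fin.last n then r (Fin.last (n + 1)) else r i.castSucc)
              m *
            ζ (r ((Fin.last n).castSucc))) /
          W (n + 1) (fun i => r i.castSucc) m)
    (hWineq : ∀ (n : ℕ) (r : Fin (n + 2) → Fin N), StrictMono r → ∀ m : ℤ,
      W (n + 1) (fun i => r i.castSucc) (m + 1) *
          W (n + 1) (fun i => if i = Fin.last n then r (Fin.last (n + 1)) else r i.castSucc) m *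
          ζ (r ((Fin.last n).castSucc)) <
        W (n + 1) (fun i => r i.castSucc) m *
          W (n + 1) (fun i => if i = Fin.last n then r (Fin.last (n + 1)) else r i.castSucc)
            (m + 1) *
          ζ (r (Fin.last (n + 1))))
    (μ : ℕ → ℕ → ℝ)
    (hμ : ∀ t m : ℕ, μ t m = ∑ r : Fin N, w r (m : ℤ) * ζ r ^ m *
      ∏ τ' ∈ Finset.range t, (ζ r ^ M - s τ'))
    (τ : ℕ → ℕ → ℕ → ℝ)
    (hτ : ∀ k t n : ℕ,
      τ k t n = Matrix.det (Matrix.of fun i j : Fin n => μ t (k + i + M * j))) :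
    ∀ k t n : ℕ, 1 ≤ n → n ≤ N → 0 < τ k t n := by
  intro k t n hn hnN
  rw [hτ]
  set P : Fin N → ℝ := fun r => ∏ τ' ∈ Finset.range t, (ζ r ^ M - s τ') with hP
  have hPpos : ∀ r, 0 < P r := by
    intro r
    apply Finset.prod_pos
    intro τ' _
    have h1 : ζ ⟨0, hN⟩ ≤ ζ r := hζmono.monotone (by exact Fin.mk_le_of_le_val (Nat.zero_le _))
    have h2 : ζ ⟨0, hN⟩ ^ M ≤ ζ r ^ M := pow_le_pow_left₀ (hζpos _).le h1 M
    have := hs τ'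
    linarith
  set z : Fin N → ℝ := fun r => ζ r ^ M with hz_def
  have hz : StrictMono z := by
    intro a b hab
    exact pow_lt_pow_left₀ (hζmono hab) (hζpos a).le (by omega)
  have hperiod : ∀ (r : Fin N) (m : ℤ) (j : ℕ), w r (m + M * j) = w r m := by
    intro r m j
    induction j with
    | zero => simp
    | succ j ih =>
      have h1 : m + (M : ℤ) * ((j : ℕ) + 1 : ℕ) = (m + M * j) + M := by push_cast; ring
      rw [h1, hwper, ih]
  set C : Fin n → Fin N → ℝ :=
    fun i r => w r ((k : ℤ) + (i : ℕ)) * ζ r ^ (k + (i : ℕ)) * P r with hC_def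
  have hentry : (Matrix.of fun i j : Fin n => μ t (k + i + M * j))
      = Matrix.of (fun i j : Fin n => ∑ r : Fin N, C i r * z r ^ (j : ℕ)) := by
    ext i j
    rw [Matrix.of_apply, Matrix.of_apply, hμ]
    apply Finset.sum_congr rfl
    intro r _
    have h1 : ((k + (i : ℕ) + M * (j : ℕ) : ℕ) : ℤ) = ((k : ℤ) + (i : ℕ)) + (M : ℤ) * (j : ℕ) := by
      push_cast; ring
    rw [h1, hperiod]
    have h2 : ζ r ^ (k + (i : ℕ) + M * (j : ℕ)) = ζ r ^ (k + (i : ℕ)) * (ζ r ^ M) ^ (j : ℕ) := by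
      rw [pow_add, pow_mul]
    rw [h2, hC_def, hz_def]
    ring
  rw [hentry]
  apply det_rows_sum_pos hn hnN C z hz
  intro ψ hψ
  have hmat : (Matrix.of fun i l : Fin n => C i (ψ l))
      = Matrix.of (fun i l : Fin n => (fun l' : Fin n => ζ (ψ l') ^ k * P (ψ l')) l *
          (Matrix.of fun i' l' : Fin n =>
            w (ψ l') ((k : ℤ) + (i' : ℕ)) * ζ (ψ l') ^ (i' : ℕ)) i l) := by
    ext i l
    simp only [Matrix.of_apply, hC_def]
    rw [pow_add]
    ring
  rw [hmat, Matrix.det_mul_row]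
  apply mul_pos
  · exact Finset.prod_pos fun l _ => mul_pos (pow_pos (hζpos _) k) (hPpos _)
  · obtain ⟨n0, rfl⟩ : ∃ n0, n = n0 + 1 := ⟨n - 1, (Nat.succ_pred_eq_of_pos hn).symm⟩
    exact Dmat_pos ζ hζpos w hwpos W hW1 hWrec hWineq n0 ψ hψ (k : ℤ)
end
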